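/- arXiv:1703.02512 — 5 statements merged into one kernel-verified Lean document; each statement's English description precedes it below -/
import Mathlib

section
/- There exists a positive constant C, depending only on h, such that for all functions φ, ϕ, ψ on Ω = M×(-h,h) for which the right-hand side is finite (with φ ∈ L²(Ω) and ϕ, ψ ∈ L²(Ω) possessing weak horizontal gradients ∇_Hϕ, ∇_Hψ ∈ L²(Ω)), one has ∫_M (∫_{-h}^h |φ| dz)(∫_{-h}^h |ϕ ψ| dz) dxdy ≤ C ‖φ‖₂ ‖ϕ‖₂^{1/2}(‖ϕ‖₂^{1/2} + ‖∇_Hϕ‖₂^{1/2}) ‖ψ‖₂^{1/2}(‖ψ‖₂^{1/2} + ‖∇_Hψ‖₂^{1/2}). -/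
open MeasureTheory Set

noncomputable section

/-- The horizontal domain `M = (0,1) × (0,1)`. -/
def Msq : Set (ℝ × ℝ) := Set.Ioo (0:ℝ) 1 ×ˢ Set.Ioo (0:ℝ) 1

/-- The domain `Ω = M × (-h, h)`. -/
def Omg (h : ℝ) : Set ((ℝ × ℝ) × ℝ) := Msq ×ˢ Set.Ioo (-h) h

/-- The `L²(Ω)` norm of `f`, written as an iterated integral. -/
def normL2 (h : ℝ) (f : (ℝ × ℝ) → ℝ → ℝ) : ℝ :=
  Real.sqrt (∫ xy in Msq, ∫ z in Set.Ioo (-h) h, (f xy z) ^ 2)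

/-- The `L²(Ω)` norm of the horizontal gradient `∇_H f`. -/
def normGradHL2 (h : ℝ) (f : (ℝ × ℝ) → ℝ → ℝ) : ℝ :=
  Real.sqrt (∫ xy in Msq, ∫ z in Set.Ioo (-h) h, ‖fderiv ℝ (fun p => f p z) xy‖ ^ 2)

lemma cs_abs {α : Type*} [MeasurableSpace α] (μ : Measure α) {f g : α → ℝ}
    (hf : AEStronglyMeasurable f μ) (hg : AEStronglyMeasurable g μ)
    (hf2 : Integrable (fun x => f x ^ 2) μ) (hg2 : Integrable (fun x => g x ^ 2) μ) :
    Integrable (fun x => f x * g x) μ ∧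
      ∫ x, |f x * g x| ∂μ ≤ Real.sqrt (∫ x, f x ^ 2 ∂μ) * Real.sqrt (∫ x, g x ^ 2 ∂μ) := by
  constructor
  · refine Integrable.mono' ((hf2.add hg2).div_const 2) (hf.mul hg) ?_
    filter_upwards with x
    rw [Real.norm_eq_abs, abs_mul]
    have : |f x| * |g x| ≤ (f x ^ 2 + g x ^ 2) / 2 := by
      nlinarith [sq_nonneg (|f x| - |g x|), sq_abs (f x), sq_abs (g x)]
    simpa using this
  · have h22 : Real.HolderConjugate 2 2 := Real.HolderConjugate.two_two
    have hmf : MemLp f 2 μ := (memLp_two_iff_integrable_sq hf).2 hf2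
    have hmg : MemLp g 2 μ := (memLp_two_iff_integrable_sq hg).2 hg2
    have h2 : (ENNReal.ofReal (2:ℝ)) = 2 := by norm_num
    have := MeasureTheory.integral_mul_norm_le_Lp_mul_Lq (μ := μ) h22 (h2 ▸ hmf) (h2 ▸ hmg)
    calc ∫ x, |f x * g x| ∂μ = ∫ x, ‖f x‖ * ‖g x‖ ∂μ := by
          simp [abs_mul, Real.norm_eq_abs]
      _ ≤ (∫ x, ‖f x‖ ^ (2:ℝ) ∂μ) ^ (1/(2:ℝ)) * (∫ x, ‖g x‖ ^ (2:ℝ) ∂μ) ^ (1/(2:ℝ)) := this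
      _ = Real.sqrt (∫ x, f x ^ 2 ∂μ) * Real.sqrt (∫ x, g x ^ 2 ∂μ) := by
          rw [Real.sqrt_eq_rpow, Real.sqrt_eq_rpow]
          congr 2 <;>
          · apply integral_congr_ae; filter_upwards with x
            rw [show (2:ℝ) = ((2:ℕ):ℝ) by norm_num, Real.rpow_natCast, Real.norm_eq_abs, sq_abs]


lemma core1 {k : ℝ → ℝ} (hk : Differentiable ℝ k)
    (hki : IntegrableOn (fun t => k t ^ 2 + 2 * |k t| * |deriv k t|) (Set.Ioo 0 1)) :
    ∀ x ∈ Set.Ioo (0:ℝ) 1,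
      k x ^ 2 ≤ ∫ t in Set.Ioo (0:ℝ) 1, (k t ^ 2 + 2 * |k t| * |deriv k t|) := by
  intro x hx
  have hkc : Continuous k := hk.continuous
  have hmd : Measurable (deriv k) := measurable_deriv k
  have hnn : ∀ t, 0 ≤ k t ^ 2 + 2 * |k t| * |deriv k t| := fun t => by positivity
  -- integrability of pieces
  have hik2 : IntegrableOn (fun t => k t ^ 2) (Set.Ioo 0 1) := by
    refine hki.mono' ((hkc.pow 2).aestronglyMeasurable) ?_
    filter_upwards with t
    rw [Real.norm_eq_abs, abs_of_nonneg (sq_nonneg _)]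
    nlinarith [abs_nonneg (k t), abs_nonneg (deriv k t)]
  have hid : IntegrableOn (fun t => 2 * k t * deriv k t) (Set.Ioo 0 1) := by
    refine hki.mono' ?_ ?_
    · exact ((hkc.measurable.const_mul 2).mul hmd).aestronglyMeasurable
    · filter_upwards with t
      rw [Real.norm_eq_abs, abs_mul, abs_mul, abs_two]
      nlinarith [sq_nonneg (k t), abs_nonneg (k t), abs_nonneg (deriv k t),
        mul_nonneg (abs_nonneg (k t)) (abs_nonneg (deriv k t))]
  -- FTC bound for each basepoint
  have key : ∀ x₀ ∈ Set.Ioo (0:ℝ) 1,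
      k x ^ 2 ≤ k x₀ ^ 2 + ∫ t in Set.Ioo (0:ℝ) 1, |2 * k t * deriv k t| := by
    intro x₀ hx₀
    have hsub : Set.uIcc x₀ x ⊆ Set.Ioo (0:ℝ) 1 :=
      (Set.ordConnected_Ioo).uIcc_subset hx₀ hx
    have hsub' : Set.uIoc x₀ x ⊆ Set.Ioo (0:ℝ) 1 := Set.uIoc_subset_uIcc.trans hsub
    have hii : IntervalIntegrable (fun t => 2 * k t * deriv k t) volume x₀ x := by
      rw [intervalIntegrable_iff]
      exact hid.mono_set hsub'
    have hd2 : ∀ t : ℝ, HasDerivAt (fun y => k y ^ 2) (2 * k t * deriv k t) t := by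
      intro t
      have := ((hk t).hasDerivAt).fun_pow 2
      simpa [mul_comm, mul_assoc, mul_left_comm] using this
    have hftc : ∫ t in x₀..x, 2 * k t * deriv k t = k x ^ 2 - k x₀ ^ 2 :=
      intervalIntegral.integral_eq_sub_of_hasDerivAt (fun t _ => hd2 t) hii
    have habs : |∫ t in x₀..x, 2 * k t * deriv k t|
        ≤ ∫ t in Set.Ioo (0:ℝ) 1, |2 * k t * deriv k t| := by
      refine (intervalIntegral.norm_integral_le_integral_norm_uIoc (f := fun t => 2 * k t * deriv k t) (μ := volume) (a := x₀) (b := x)).trans ?_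
      refine setIntegral_mono_set hid.abs ?_ (HasSubset.Subset.eventuallyLE hsub')
      filter_upwards with t using abs_nonneg _
    have := abs_le.1 habs
    linarith [hftc ▸ this.2, hftc ▸ (neg_le.1 this.1)]
  set B := ∫ t in Set.Ioo (0:ℝ) 1, |2 * k t * deriv k t| with hB
  have hvol : (volume (Set.Ioo (0:ℝ) 1)).toReal = 1 := by
    simp [Real.volume_Ioo]
  have hconst : ∫ (_ : ℝ) in Set.Ioo (0:ℝ) 1, k x ^ 2 = k x ^ 2 := by
    rw [setIntegral_const, measureReal_def, hvol, one_smul]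
  have hmono : ∫ (_ : ℝ) in Set.Ioo (0:ℝ) 1, k x ^ 2
      ≤ ∫ x₀ in Set.Ioo (0:ℝ) 1, (k x₀ ^ 2 + B) := by
    refine setIntegral_mono_on (integrableOn_const ?_) (hik2.add (integrableOn_const ?_)) measurableSet_Ioo (fun x₀ hx₀ => key x₀ hx₀)
    · rw [Real.volume_Ioo]; exact ENNReal.ofReal_lt_top.ne
    · rw [Real.volume_Ioo]; exact ENNReal.ofReal_lt_top.ne
  have hsplit : ∫ x₀ in Set.Ioo (0:ℝ) 1, (k x₀ ^ 2 + B)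
      = (∫ x₀ in Set.Ioo (0:ℝ) 1, k x₀ ^ 2) + B := by
    rw [integral_add hik2 (integrableOn_const (by rw [Real.volume_Ioo]; exact ENNReal.ofReal_lt_top.ne))]
    rw [setIntegral_const, measureReal_def, hvol, one_smul]
  have habs2 : ∀ t : ℝ, |2 * k t * deriv k t| = 2 * |k t| * |deriv k t| := by
    intro t; rw [abs_mul, abs_mul, abs_two]
  have : (∫ x₀ in Set.Ioo (0:ℝ) 1, k x₀ ^ 2) + B
      = ∫ t in Set.Ioo (0:ℝ) 1, (k t ^ 2 + 2 * |k t| * |deriv k t|) := by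
    rw [hB]
    rw [← integral_add hik2 hid.abs]
    apply setIntegral_congr_fun measurableSet_Ioo
    intro t _
    simp [habs2 t]
  calc k x ^ 2 = ∫ (_ : ℝ) in Set.Ioo (0:ℝ) 1, k x ^ 2 := hconst.symm
    _ ≤ ∫ x₀ in Set.Ioo (0:ℝ) 1, (k x₀ ^ 2 + B) := hmono
    _ = (∫ x₀ in Set.Ioo (0:ℝ) 1, k x₀ ^ 2) + B := hsplit
    _ = _ := this

lemma core2 (h : ℝ) (v D : ℝ → ℝ → ℝ → ℝ)
    (hdiff : ∀ y z, Differentiable ℝ (fun t => v y t z))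
    (hbound : ∀ y x z, |deriv (fun t => v y t z) x| ≤ D y x z)
    (hW : Integrable
      (fun q : ℝ × ℝ × ℝ => v q.1 q.2.1 q.2.2 ^ 2 + 2 * |v q.1 q.2.1 q.2.2| * D q.1 q.2.1 q.2.2)
      ((volume.restrict (Set.Ioo (0:ℝ) 1)).prod
        ((volume.restrict (Set.Ioo (0:ℝ) 1)).prod (volume.restrict (Set.Ioo (-h) h))))) :
    ∀ᵐ y ∂(volume.restrict (Set.Ioo (0:ℝ) 1)), ∀ x ∈ Set.Ioo (0:ℝ) 1,
      (∫ z in Set.Ioo (-h) h, v y x z ^ 2)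
        ≤ ∫ p, (v y p.1 p.2 ^ 2 + 2 * |v y p.1 p.2| * D y p.1 p.2)
            ∂((volume.restrict (Set.Ioo (0:ℝ) 1)).prod (volume.restrict (Set.Ioo (-h) h))) := by
  have h1 := hW.prod_right_ae
  filter_upwards [h1] with y hy
  -- hy : Integrable (fun p : ℝ × ℝ => v y p.1 p.2 ^ 2 + 2 * |v y p.1 p.2| * D y p.1 p.2) (μI.prod μJ)
  have h2 := hy.prod_left_ae
  have hSint : Integrable
      (fun z => ∫ x in Set.Ioo (0:ℝ) 1, (v y x z ^ 2 + 2 * |v y x z| * D y x z))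
      (volume.restrict (Set.Ioo (-h) h)) := hy.integral_prod_right
  have h3 : ∀ᵐ z ∂(volume.restrict (Set.Ioo (-h) h)), ∀ x ∈ Set.Ioo (0:ℝ) 1,
      v y x z ^ 2 ≤ ∫ x' in Set.Ioo (0:ℝ) 1, (v y x' z ^ 2 + 2 * |v y x' z| * D y x' z) := by
    filter_upwards [h2] with z hz
    intro x hx
    have hkm : Continuous (fun t => v y t z) := (hdiff y z).continuous
    have hki : IntegrableOn
        (fun t => v y t z ^ 2 + 2 * |v y t z| * |deriv (fun t => v y t z) t|)
        (Set.Ioo 0 1) := by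
      refine hz.mono' ?_ ?_
      · refine (((hkm.pow 2).aestronglyMeasurable)).add ?_
        exact ((hkm.abs.measurable.const_mul 2).mul
          (measurable_deriv _).abs).aestronglyMeasurable
      · filter_upwards with t
        have h1' := hbound y t z
        have h2' := abs_nonneg (deriv (fun t => v y t z) t)
        have h3' := abs_nonneg (v y t z)
        rw [Real.norm_eq_abs, abs_of_nonneg (by positivity)]
        nlinarith
    have := core1 (hdiff y z) hki x hx
    refine this.trans (setIntegral_mono_on hki hz measurableSet_Ioo ?_)
    intro t _
    have := hbound y t z
    have := abs_nonneg (v y t z)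
    nlinarith
  intro x hx
  have step1 : (∫ z in Set.Ioo (-h) h, v y x z ^ 2)
      ≤ ∫ z in Set.Ioo (-h) h,
          (∫ x' in Set.Ioo (0:ℝ) 1, (v y x' z ^ 2 + 2 * |v y x' z| * D y x' z)) := by
    refine integral_mono_of_nonneg ?_ hSint ?_
    · filter_upwards with z using sq_nonneg _
    · filter_upwards [h3] with z hz using hz x hx
  refine step1.trans (le_of_eq ?_)
  rw [← MeasureTheory.integral_integral_swap (f := fun x' z => v y x' z ^ 2 + 2 * |v y x' z| * D y x' z) hy]
  exact MeasureTheory.integral_integral (f := fun x' z => v y x' z ^ 2 + 2 * |v y x' z| * D y x' z) hy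

lemma restrict_Msq : (volume : Measure (ℝ × ℝ)).restrict Msq
    = (volume.restrict (Set.Ioo (0:ℝ) 1)).prod (volume.restrict (Set.Ioo (0:ℝ) 1)) := by
  rw [Msq, Measure.volume_eq_prod, ← Measure.prod_restrict]

lemma restrict_Omg (h : ℝ) : (volume : Measure ((ℝ × ℝ) × ℝ)).restrict (Omg h)
    = ((volume.restrict (Set.Ioo (0:ℝ) 1)).prod (volume.restrict (Set.Ioo (0:ℝ) 1))).prod
        (volume.restrict (Set.Ioo (-h) h)) := by
  rw [Omg, Measure.volume_eq_prod (ℝ × ℝ) ℝ, ← Measure.prod_restrict, restrict_Msq]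

/-- The coordinate permutation `(y,(x,z)) ↦ ((x,y),z)` as a measurable equiv. -/
def permYXZ : (ℝ × (ℝ × ℝ)) ≃ᵐ ((ℝ × ℝ) × ℝ) :=
  (MeasurableEquiv.prodComm.trans
    (MeasurableEquiv.prodAssoc.trans
      ((MeasurableEquiv.refl ℝ).prodCongr MeasurableEquiv.prodComm))).trans
    MeasurableEquiv.prodAssoc.symm

example (y x z : ℝ) : permYXZ (y, (x, z)) = ((x, y), z) := rfl

lemma permYXZ_mp (μ1 μ2 μ3 : Measure ℝ) [SigmaFinite μ1] [SigmaFinite μ2] [SigmaFinite μ3] :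
    MeasurePreserving (⇑permYXZ) (μ1.prod (μ2.prod μ3)) ((μ2.prod μ1).prod μ3) := by
  have m1 : MeasurePreserving (Prod.swap : ℝ × (ℝ × ℝ) → (ℝ × ℝ) × ℝ)
      (μ1.prod (μ2.prod μ3)) ((μ2.prod μ3).prod μ1) := Measure.measurePreserving_swap
  have m2 : MeasurePreserving (⇑(MeasurableEquiv.prodAssoc : ((ℝ × ℝ) × ℝ) ≃ᵐ ℝ × ℝ × ℝ))
      ((μ2.prod μ3).prod μ1) (μ2.prod (μ3.prod μ1)) := measurePreserving_prodAssoc μ2 μ3 μ1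
  have m3 : MeasurePreserving (Prod.map (id : ℝ → ℝ) (Prod.swap : ℝ × ℝ → ℝ × ℝ))
      (μ2.prod (μ3.prod μ1)) (μ2.prod (μ1.prod μ3)) :=
    (MeasurePreserving.id μ2).prod Measure.measurePreserving_swap
  have m4 : MeasurePreserving (⇑(MeasurableEquiv.prodAssoc.symm : (ℝ × ℝ × ℝ) ≃ᵐ (ℝ × ℝ) × ℝ))
      (μ2.prod (μ1.prod μ3)) ((μ2.prod μ1).prod μ3) :=
    (measurePreserving_prodAssoc μ2 μ1 μ3).symm _
  exact ((m4.comp m3).comp m2).comp m1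

/-- The coordinate permutation `(x,(y,z)) ↦ ((x,y),z)`. -/
lemma permXYZ_mp (μ1 μ2 μ3 : Measure ℝ) [SigmaFinite μ2] [SigmaFinite μ3] :
    MeasurePreserving (⇑(MeasurableEquiv.prodAssoc.symm : (ℝ × ℝ × ℝ) ≃ᵐ (ℝ × ℝ) × ℝ))
      (μ1.prod (μ2.prod μ3)) ((μ1.prod μ2).prod μ3) :=
  (measurePreserving_prodAssoc μ1 μ2 μ3).symm _

lemma L4 (h : ℝ) (g : (ℝ × ℝ) → ℝ → ℝ)
    (hm : Measurable fun q : (ℝ × ℝ) × ℝ => g q.1 q.2)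
    (hd : ∀ z, Differentiable ℝ fun p => g p z)
    (hi2 : IntegrableOn (fun q : (ℝ × ℝ) × ℝ => g q.1 q.2 ^ 2) (Omg h))
    (hig : IntegrableOn (fun q : (ℝ × ℝ) × ℝ => ‖fderiv ℝ (fun p => g p q.2) q.1‖ ^ 2) (Omg h)) :
    IntegrableOn (fun xy : ℝ × ℝ => (∫ z in Set.Ioo (-h) h, g xy z ^ 2) ^ 2) Msq ∧
      ∫ xy in Msq, (∫ z in Set.Ioo (-h) h, g xy z ^ 2) ^ 2
        ≤ (normL2 h g ^ 2 + 2 * normL2 h g * normGradHL2 h g) ^ 2 := by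
  set μI : Measure ℝ := volume.restrict (Set.Ioo (0:ℝ) 1) with hμIdef
  set μJ : Measure ℝ := volume.restrict (Set.Ioo (-h) h) with hμJdef
  have hi2' : Integrable (fun q : (ℝ × ℝ) × ℝ => g q.1 q.2 ^ 2) ((μI.prod μI).prod μJ) := by
    rw [IntegrableOn, restrict_Omg] at hi2; exact hi2
  have hig' : Integrable (fun q : (ℝ × ℝ) × ℝ => ‖fderiv ℝ (fun p => g p q.2) q.1‖ ^ 2)
      ((μI.prod μI).prod μJ) := by
    rw [IntegrableOn, restrict_Omg] at hig; exact hig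
  have hnorm_aesm : AEStronglyMeasurable (fun q : (ℝ × ℝ) × ℝ => ‖fderiv ℝ (fun p => g p q.2) q.1‖)
      ((μI.prod μI).prod μJ) := by
    have h1 := hig'.1.aemeasurable
    have h2 : AEMeasurable (fun q : (ℝ × ℝ) × ℝ =>
        Real.sqrt (‖fderiv ℝ (fun p => g p q.2) q.1‖ ^ 2)) ((μI.prod μI).prod μJ) :=
      Real.continuous_sqrt.measurable.comp_aemeasurable h1
    simp only [Real.sqrt_sq (norm_nonneg _)] at h2
    exact h2.aestronglyMeasurable
  have hcs := cs_abs ((μI.prod μI).prod μJ)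
    (f := fun q : (ℝ × ℝ) × ℝ => g q.1 q.2)
    (g := fun q : (ℝ × ℝ) × ℝ => ‖fderiv ℝ (fun p => g p q.2) q.1‖)
    hm.aestronglyMeasurable hnorm_aesm hi2' hig'
  -- the master integrand
  set w : (ℝ × ℝ) × ℝ → ℝ := fun q =>
    g q.1 q.2 ^ 2 + 2 * |g q.1 q.2| * ‖fderiv ℝ (fun p => g p q.2) q.1‖ with hwdef
  have hprod2 : Integrable (fun q : (ℝ × ℝ) × ℝ =>
      2 * |g q.1 q.2| * ‖fderiv ℝ (fun p => g p q.2) q.1‖) ((μI.prod μI).prod μJ) := by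
    refine (hcs.1.abs.const_mul 2).congr ?_
    filter_upwards with q
    rw [abs_mul, abs_of_nonneg (norm_nonneg _)]; ring
  have hwint : Integrable w ((μI.prod μI).prod μJ) := hi2'.add hprod2
  set T : ℝ := ∫ q, w q ∂((μI.prod μI).prod μJ) with hTdef
  have hTnn : 0 ≤ T := by
    refine integral_nonneg fun q => ?_
    have := abs_nonneg (g q.1 q.2); have := norm_nonneg (fderiv ℝ (fun p => g p q.2) q.1)
    positivity
  -- identification of the L2 norms
  have hNL : normL2 h g = Real.sqrt (∫ q, g q.1 q.2 ^ 2 ∂((μI.prod μI).prod μJ)) := by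
    rw [normL2, restrict_Msq, ← hμIdef, ← hμJdef,
      MeasureTheory.integral_integral (f := fun xy z => g xy z ^ 2) hi2']
  have hND : normGradHL2 h g
      = Real.sqrt (∫ q, ‖fderiv ℝ (fun p => g p q.2) q.1‖ ^ 2 ∂((μI.prod μI).prod μJ)) := by
    rw [normGradHL2, restrict_Msq, ← hμIdef, ← hμJdef,
      MeasureTheory.integral_integral (f := fun xy z => ‖fderiv ℝ (fun p => g p z) xy‖ ^ 2) hig']
  have hTbound : T ≤ normL2 h g ^ 2 + 2 * normL2 h g * normGradHL2 h g := by
    have hsplit : T = (∫ q, g q.1 q.2 ^ 2 ∂((μI.prod μI).prod μJ))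
        + ∫ q, 2 * |g q.1 q.2| * ‖fderiv ℝ (fun p => g p q.2) q.1‖ ∂((μI.prod μI).prod μJ) :=
      integral_add hi2' hprod2
    have habs : ∫ q, 2 * |g q.1 q.2| * ‖fderiv ℝ (fun p => g p q.2) q.1‖ ∂((μI.prod μI).prod μJ)
        = 2 * ∫ q, |g q.1 q.2 * ‖fderiv ℝ (fun p => g p q.2) q.1‖| ∂((μI.prod μI).prod μJ) := by
      rw [← integral_const_mul]
      congr 1; funext q; rw [abs_mul, abs_of_nonneg (norm_nonneg _)]; ring
    have h1 : (∫ q, g q.1 q.2 ^ 2 ∂((μI.prod μI).prod μJ)) = normL2 h g ^ 2 := by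
      rw [hNL, Real.sq_sqrt (integral_nonneg fun q => sq_nonneg _)]
    rw [hsplit, habs, h1]
    have := hcs.2
    rw [← hNL, ← hND] at this
    linarith
  -- x-direction differentiability and derivative bound
  have hdiffA : ∀ y z : ℝ, Differentiable ℝ (fun t => g (t, y) z) := fun y z =>
    (hd z).comp (differentiable_id.prodMk (differentiable_const y))
  have hboundA : ∀ y x z : ℝ, |deriv (fun t => g (t, y) z) x|
      ≤ ‖fderiv ℝ (fun p => g p z) (x, y)‖ := by
    intro y x z
    have hline : HasDerivAt (fun t => g (t, y) z)
        ((fderiv ℝ (fun p => g p z) (x, y)) (1, 0)) x :=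
      by have h2 := (hasDerivAt_id' x).prodMk (hasDerivAt_const x y)
         exact ((hd z) (x, y)).hasFDerivAt.comp_hasDerivAt x h2
    rw [hline.deriv]
    have hop := (fderiv ℝ (fun p => g p z) (x, y)).le_opNorm ((1:ℝ), (0:ℝ))
    have hn : ‖((1:ℝ), (0:ℝ))‖ = 1 := by
      rw [Prod.norm_def]; simp
    rw [hn, mul_one, Real.norm_eq_abs] at hop
    exact hop
  have hdiffB : ∀ x z : ℝ, Differentiable ℝ (fun t => g (x, t) z) := fun x z =>
    (hd z).comp ((differentiable_const x).prodMk differentiable_id)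
  have hboundB : ∀ x y z : ℝ, |deriv (fun t => g (x, t) z) y|
      ≤ ‖fderiv ℝ (fun p => g p z) (x, y)‖ := by
    intro x y z
    have hline : HasDerivAt (fun t => g (x, t) z)
        ((fderiv ℝ (fun p => g p z) (x, y)) (0, 1)) y :=
      ((hd z) (x, y)).hasFDerivAt.comp_hasDerivAt y
        ((hasDerivAt_const y x).prodMk (hasDerivAt_id y))
    rw [hline.deriv]
    have hop := (fderiv ℝ (fun p => g p z) (x, y)).le_opNorm ((0:ℝ), (1:ℝ))
    have hn : ‖((0:ℝ), (1:ℝ))‖ = 1 := by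
      rw [Prod.norm_def]; simp
    rw [hn, mul_one, Real.norm_eq_abs] at hop
    exact hop
  -- transported integrability through the coordinate permutations
  have hWQ : Integrable (fun q : ℝ × ℝ × ℝ =>
      g (q.2.1, q.1) q.2.2 ^ 2 + 2 * |g (q.2.1, q.1) q.2.2|
        * ‖fderiv ℝ (fun p => g p q.2.2) (q.2.1, q.1)‖) (μI.prod (μI.prod μJ)) :=
    ((permYXZ_mp μI μI μJ).integrable_comp hwint.aestronglyMeasurable).2 hwint
  have hWQ' : Integrable (fun q : ℝ × ℝ × ℝ =>
      g (q.1, q.2.1) q.2.2 ^ 2 + 2 * |g (q.1, q.2.1) q.2.2|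
        * ‖fderiv ℝ (fun p => g p q.2.2) (q.1, q.2.1)‖) (μI.prod (μI.prod μJ)) :=
    ((permXYZ_mp μI μI μJ).integrable_comp hwint.aestronglyMeasurable).2 hwint
  have hA := core2 h (fun y x z => g (x, y) z)
    (fun y x z => ‖fderiv ℝ (fun p => g p z) (x, y)‖)
    (fun y z => hdiffA y z) (fun y x z => hboundA y x z) hWQ
  have hB := core2 h (fun x y z => g (x, y) z)
    (fun x y z => ‖fderiv ℝ (fun p => g p z) (x, y)‖)
    (fun x z => hdiffB x z) (fun x y z => hboundB x y z) hWQ'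
  set F : ℝ → ℝ := fun y => ∫ p, (g (p.1, y) p.2 ^ 2 + 2 * |g (p.1, y) p.2|
    * ‖fderiv ℝ (fun p' => g p' p.2) (p.1, y)‖) ∂(μI.prod μJ) with hFdef
  set G : ℝ → ℝ := fun x => ∫ p, (g (x, p.1) p.2 ^ 2 + 2 * |g (x, p.1) p.2|
    * ‖fderiv ℝ (fun p' => g p' p.2) (x, p.1)‖) ∂(μI.prod μJ) with hGdef
  have hFint : Integrable F μI := hWQ.integral_prod_left
  have hGint : Integrable G μI := hWQ'.integral_prod_left
  have hFeq : ∫ y, F y ∂μI = T := by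
    rw [hFdef, MeasureTheory.integral_integral hWQ]
    exact (permYXZ_mp μI μI μJ).integral_comp permYXZ.measurableEmbedding w
  have hGeq : ∫ x, G x ∂μI = T := by
    rw [hGdef, MeasureTheory.integral_integral hWQ']
    exact (permXYZ_mp μI μI μJ).integral_comp
      MeasurableEquiv.prodAssoc.symm.measurableEmbedding w
  set u : ℝ × ℝ → ℝ := fun xy => ∫ z, g xy z ^ 2 ∂μJ with hudef
  have hu_nn : ∀ xy, 0 ≤ u xy := fun xy => integral_nonneg fun z => sq_nonneg _
  have hu_sm : AEStronglyMeasurable u (μI.prod μI) :=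
    ((hm.pow_const 2).stronglyMeasurable.integral_prod_right').aestronglyMeasurable
  have hmemA : ∀ᵐ q ∂(μI.prod μI), ∀ x ∈ Set.Ioo (0:ℝ) 1,
      (∫ z, g (x, q.2) z ^ 2 ∂μJ) ≤ F q.2 :=
    Measure.quasiMeasurePreserving_snd.ae hA
  have hmemB : ∀ᵐ q ∂(μI.prod μI), ∀ y ∈ Set.Ioo (0:ℝ) 1,
      (∫ z, g (q.1, y) z ^ 2 ∂μJ) ≤ G q.1 :=
    Measure.quasiMeasurePreserving_fst.ae hB
  have hmem : ∀ᵐ q ∂(μI.prod μI), q ∈ Msq := by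
    have h0 : ∀ᵐ q ∂((volume : Measure (ℝ × ℝ)).restrict Msq), q ∈ Msq :=
      ae_restrict_mem (measurableSet_Ioo.prod measurableSet_Ioo)
    rw [restrict_Msq, ← hμIdef] at h0
    exact h0
  have hae : ∀ᵐ q ∂(μI.prod μI), u q ^ 2 ≤ G q.1 * F q.2 := by
    filter_upwards [hmemA, hmemB, hmem] with q h1 h2 hq
    have e1 : u q ≤ F q.2 := h1 q.1 hq.1
    have e2 : u q ≤ G q.1 := h2 q.2 hq.2
    nlinarith [hu_nn q]
  have hGF : Integrable (fun q : ℝ × ℝ => G q.1 * F q.2) (μI.prod μI) := hGint.mul_prod hFint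
  have hu2int : Integrable (fun q => u q ^ 2) (μI.prod μI) := by
    refine hGF.mono' (hu_sm.aemeasurable.pow_const 2).aestronglyMeasurable ?_
    filter_upwards [hae] with q hq
    rw [Real.norm_eq_abs, abs_of_nonneg (sq_nonneg _)]
    exact hq
  have hle : ∫ q, u q ^ 2 ∂(μI.prod μI) ≤ T * T := by
    calc ∫ q, u q ^ 2 ∂(μI.prod μI)
        ≤ ∫ q : ℝ × ℝ, G q.1 * F q.2 ∂(μI.prod μI) := integral_mono_ae hu2int hGF hae
      _ = (∫ x, G x ∂μI) * (∫ y, F y ∂μI) := integral_prod_mul G F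
      _ = T * T := by rw [hFeq, hGeq]
  constructor
  · rw [IntegrableOn, restrict_Msq, ← hμIdef]
    exact hu2int
  · have hgoal : ∫ xy in Msq, u xy ^ 2 ≤ T * T := by
      rw [show (volume : Measure (ℝ × ℝ)).restrict Msq = μI.prod μI by
        rw [restrict_Msq, ← hμIdef]]
      exact hle
    refine hgoal.trans ?_
    nlinarith [hTnn, hTbound]

lemma sqrt_add_le' {a b : ℝ} (ha : 0 ≤ a) (hb : 0 ≤ b) :
    Real.sqrt (a + b) ≤ Real.sqrt a + Real.sqrt b := by
  have h1 : a + b ≤ (Real.sqrt a + Real.sqrt b) ^ 2 := by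
    nlinarith [Real.sq_sqrt ha, Real.sq_sqrt hb,
      mul_nonneg (Real.sqrt_nonneg a) (Real.sqrt_nonneg b)]
  calc Real.sqrt (a + b) ≤ Real.sqrt ((Real.sqrt a + Real.sqrt b) ^ 2) := Real.sqrt_le_sqrt h1
    _ = Real.sqrt a + Real.sqrt b := Real.sqrt_sq (by positivity)

lemma sqrt_ladder {N D : ℝ} (hN : 0 ≤ N) (hD : 0 ≤ D) :
    Real.sqrt (N ^ 2 + 2 * N * D)
      ≤ Real.sqrt 2 * (Real.sqrt N * (Real.sqrt N + Real.sqrt D)) := by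
  have h1 : N ^ 2 + 2 * N * D ≤ 2 * (N * (N + D)) := by nlinarith
  calc Real.sqrt (N ^ 2 + 2 * N * D) ≤ Real.sqrt (2 * (N * (N + D))) := Real.sqrt_le_sqrt h1
    _ = Real.sqrt 2 * (Real.sqrt N * Real.sqrt (N + D)) := by
        rw [Real.sqrt_mul (by norm_num), Real.sqrt_mul hN]
    _ ≤ Real.sqrt 2 * (Real.sqrt N * (Real.sqrt N + Real.sqrt D)) := by
        gcongr
        exact sqrt_add_le' hN hD

/-- There exists a positive constant `C`, depending only on `h`, such that for all
functions `φ, ϕ, ψ` on `Ω = M × (-h,h)` for which the right-hand side is finite (with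
`φ ∈ L²(Ω)` and `ϕ, ψ ∈ L²(Ω)` possessing horizontal gradients `∇_H ϕ, ∇_H ψ ∈ L²(Ω)`),
one has
`∫_M (∫_{-h}^h |φ| dz)(∫_{-h}^h |ϕ ψ| dz) dxdy
  ≤ C ‖φ‖₂ ‖ϕ‖₂^{1/2}(‖ϕ‖₂^{1/2} + ‖∇_H ϕ‖₂^{1/2}) ‖ψ‖₂^{1/2}(‖ψ‖₂^{1/2} + ‖∇_H ψ‖₂^{1/2})`. -/
theorem statement0 (h : ℝ) (hh : 0 < h) :
    ∃ C : ℝ, 0 < C ∧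
      ∀ φ ϕ ψ : (ℝ × ℝ) → ℝ → ℝ,
        Measurable (fun q : (ℝ × ℝ) × ℝ => φ q.1 q.2) →
        Measurable (fun q : (ℝ × ℝ) × ℝ => ϕ q.1 q.2) →
        Measurable (fun q : (ℝ × ℝ) × ℝ => ψ q.1 q.2) →
        (∀ z : ℝ, Differentiable ℝ (fun p => ϕ p z)) →
        (∀ z : ℝ, Differentiable ℝ (fun p => ψ p z)) →
        IntegrableOn (fun q : (ℝ × ℝ) × ℝ => (φ q.1 q.2) ^ 2) (Omg h) →
        IntegrableOn (fun q : (ℝ × ℝ) × ℝ => (ϕ q.1 q.2) ^ 2) (Omg h) →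
        IntegrableOn (fun q : (ℝ × ℝ) × ℝ => (ψ q.1 q.2) ^ 2) (Omg h) →
        IntegrableOn (fun q : (ℝ × ℝ) × ℝ => ‖fderiv ℝ (fun p => ϕ p q.2) q.1‖ ^ 2) (Omg h) →
        IntegrableOn (fun q : (ℝ × ℝ) × ℝ => ‖fderiv ℝ (fun p => ψ p q.2) q.1‖ ^ 2) (Omg h) →
        (∫ xy in Msq,
            (∫ z in Set.Ioo (-h) h, |φ xy z|) * (∫ z in Set.Ioo (-h) h, |ϕ xy z * ψ xy z|))
          ≤ C * normL2 h φ *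
              (normL2 h ϕ) ^ ((1:ℝ)/2) *
              ((normL2 h ϕ) ^ ((1:ℝ)/2) + (normGradHL2 h ϕ) ^ ((1:ℝ)/2)) *
              (normL2 h ψ) ^ ((1:ℝ)/2) *
              ((normL2 h ψ) ^ ((1:ℝ)/2) + (normGradHL2 h ψ) ^ ((1:ℝ)/2)) := by
  refine ⟨2 * Real.sqrt (2 * h), by positivity, ?_⟩
  intro φ ϕ ψ hmφ hmϕ hmψ hdϕ hdψ hiφ hiϕ hiψ higϕ higψ
  have L4ϕ := L4 h ϕ hmϕ hdϕ hiϕ higϕ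
  have L4ψ := L4 h ψ hmψ hdψ hiψ higψ
  set μI : Measure ℝ := volume.restrict (Set.Ioo (0:ℝ) 1) with hμIdef
  set μJ : Measure ℝ := volume.restrict (Set.Ioo (-h) h) with hμJdef
  haveI : IsFiniteMeasure μJ := by
    constructor
    rw [hμJdef, Measure.restrict_apply_univ]
    exact measure_Ioo_lt_top
  have hresM : (volume : Measure (ℝ × ℝ)).restrict Msq = μI.prod μI := by
    rw [restrict_Msq]
  have hiφ' : Integrable (fun q : (ℝ × ℝ) × ℝ => φ q.1 q.2 ^ 2) ((μI.prod μI).prod μJ) := by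
    rw [IntegrableOn, restrict_Omg] at hiφ; exact hiφ
  have hiϕ' : Integrable (fun q : (ℝ × ℝ) × ℝ => ϕ q.1 q.2 ^ 2) ((μI.prod μI).prod μJ) := by
    rw [IntegrableOn, restrict_Omg] at hiϕ; exact hiϕ
  have hiψ' : Integrable (fun q : (ℝ × ℝ) × ℝ => ψ q.1 q.2 ^ 2) ((μI.prod μI).prod μJ) := by
    rw [IntegrableOn, restrict_Omg] at hiψ; exact hiψ
  have hϕ2int : Integrable (fun xy : ℝ × ℝ => (∫ z, ϕ xy z ^ 2 ∂μJ) ^ 2) (μI.prod μI) := by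
    have := L4ϕ.1; rwa [IntegrableOn, hresM] at this
  have hψ2int : Integrable (fun xy : ℝ × ℝ => (∫ z, ψ xy z ^ 2 ∂μJ) ^ 2) (μI.prod μI) := by
    have := L4ψ.1; rwa [IntegrableOn, hresM] at this
  have hϕ2bnd : ∫ xy, (∫ z, ϕ xy z ^ 2 ∂μJ) ^ 2 ∂(μI.prod μI)
      ≤ (normL2 h ϕ ^ 2 + 2 * normL2 h ϕ * normGradHL2 h ϕ) ^ 2 := by
    have := L4ϕ.2; rwa [hresM] at this
  have hψ2bnd : ∫ xy, (∫ z, ψ xy z ^ 2 ∂μJ) ^ 2 ∂(μI.prod μI)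
      ≤ (normL2 h ψ ^ 2 + 2 * normL2 h ψ * normGradHL2 h ψ) ^ 2 := by
    have := L4ψ.2; rwa [hresM] at this
  have huφint : Integrable (fun xy : ℝ × ℝ => ∫ z, φ xy z ^ 2 ∂μJ) (μI.prod μI) :=
    hiφ'.integral_prod_left
  have hsmφ : StronglyMeasurable (fun xy : ℝ × ℝ => ∫ z, φ xy z ^ 2 ∂μJ) :=
    (hmφ.pow_const 2).stronglyMeasurable.integral_prod_right'
  have hsmϕ : StronglyMeasurable (fun xy : ℝ × ℝ => ∫ z, ϕ xy z ^ 2 ∂μJ) :=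
    (hmϕ.pow_const 2).stronglyMeasurable.integral_prod_right'
  have hsmψ : StronglyMeasurable (fun xy : ℝ × ℝ => ∫ z, ψ xy z ^ 2 ∂μJ) :=
    (hmψ.pow_const 2).stronglyMeasurable.integral_prod_right'
  have hAφm : AEStronglyMeasurable (fun xy : ℝ × ℝ => Real.sqrt (∫ z, φ xy z ^ 2 ∂μJ))
      (μI.prod μI) := (Real.continuous_sqrt.comp_stronglyMeasurable hsmφ).aestronglyMeasurable
  have hAϕm : AEStronglyMeasurable (fun xy : ℝ × ℝ => Real.sqrt (∫ z, ϕ xy z ^ 2 ∂μJ))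
      (μI.prod μI) := (Real.continuous_sqrt.comp_stronglyMeasurable hsmϕ).aestronglyMeasurable
  have hAψm : AEStronglyMeasurable (fun xy : ℝ × ℝ => Real.sqrt (∫ z, ψ xy z ^ 2 ∂μJ))
      (μI.prod μI) := (Real.continuous_sqrt.comp_stronglyMeasurable hsmψ).aestronglyMeasurable
  have hAφ2 : Integrable (fun xy : ℝ × ℝ => Real.sqrt (∫ z, φ xy z ^ 2 ∂μJ) ^ 2)
      (μI.prod μI) := by
    refine huφint.congr ?_
    filter_upwards with xy
    rw [Real.sq_sqrt (integral_nonneg fun z => sq_nonneg _)]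
  have hBC2 : Integrable (fun xy : ℝ × ℝ =>
      (Real.sqrt (∫ z, ϕ xy z ^ 2 ∂μJ) * Real.sqrt (∫ z, ψ xy z ^ 2 ∂μJ)) ^ 2)
      (μI.prod μI) := by
    have hmul := (cs_abs (μI.prod μI) hsmϕ.aestronglyMeasurable hsmψ.aestronglyMeasurable
      hϕ2int hψ2int).1
    refine hmul.congr ?_
    filter_upwards with xy
    rw [mul_pow, Real.sq_sqrt (integral_nonneg fun z => sq_nonneg _),
      Real.sq_sqrt (integral_nonneg fun z => sq_nonneg _)]
  have hcsM := cs_abs (μI.prod μI)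
    (f := fun xy : ℝ × ℝ => Real.sqrt (∫ z, φ xy z ^ 2 ∂μJ))
    (g := fun xy : ℝ × ℝ => Real.sqrt (∫ z, ϕ xy z ^ 2 ∂μJ) * Real.sqrt (∫ z, ψ xy z ^ 2 ∂μJ))
    hAφm (hAϕm.mul hAψm) hAφ2 hBC2
  have hcsU := cs_abs (μI.prod μI)
    (f := fun xy : ℝ × ℝ => ∫ z, ϕ xy z ^ 2 ∂μJ)
    (g := fun xy : ℝ × ℝ => ∫ z, ψ xy z ^ 2 ∂μJ)
    hsmϕ.aestronglyMeasurable hsmψ.aestronglyMeasurable hϕ2int hψ2int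
  -- pointwise a.e. Cauchy-Schwarz in z
  have hvolJ : ∫ z, (1:ℝ) ^ 2 ∂μJ = 2 * h := by
    simp only [one_pow, integral_const, smul_eq_mul, mul_one]
    rw [hμJdef, measureReal_def, Measure.restrict_apply_univ, Real.volume_Ioo,
      ENNReal.toReal_ofReal (by linarith)]
    ring
  have hpoint : ∀ᵐ xy ∂(μI.prod μI),
      (∫ z, |φ xy z| ∂μJ) * (∫ z, |ϕ xy z * ψ xy z| ∂μJ)
        ≤ Real.sqrt (2 * h) * (Real.sqrt (∫ z, φ xy z ^ 2 ∂μJ)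
            * (Real.sqrt (∫ z, ϕ xy z ^ 2 ∂μJ) * Real.sqrt (∫ z, ψ xy z ^ 2 ∂μJ))) := by
    filter_upwards [hiφ'.prod_right_ae, hiϕ'.prod_right_ae, hiψ'.prod_right_ae]
      with xy h1 h2 h3
    have msφ : AEStronglyMeasurable (fun z => φ xy z) μJ :=
      (hmφ.comp (measurable_prodMk_left : Measurable fun z : ℝ => (xy, z))).aestronglyMeasurable
    have msϕ : AEStronglyMeasurable (fun z => ϕ xy z) μJ :=
      (hmϕ.comp (measurable_prodMk_left : Measurable fun z : ℝ => (xy, z))).aestronglyMeasurable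
    have msψ : AEStronglyMeasurable (fun z => ψ xy z) μJ :=
      (hmψ.comp (measurable_prodMk_left : Measurable fun z : ℝ => (xy, z))).aestronglyMeasurable
    have c1 := cs_abs μJ msφ (aestronglyMeasurable_const (b := (1:ℝ))) h1
      (by simpa using (integrable_const (1:ℝ)))
    have e1 : (∫ z, |φ xy z| ∂μJ)
        ≤ Real.sqrt (∫ z, φ xy z ^ 2 ∂μJ) * Real.sqrt (2 * h) := by
      have := c1.2
      simp only [mul_one] at this
      rwa [hvolJ] at this
    have c2 := cs_abs μJ msϕ msψ h2 h3
    have e2 : (∫ z, |ϕ xy z * ψ xy z| ∂μJ)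
        ≤ Real.sqrt (∫ z, ϕ xy z ^ 2 ∂μJ) * Real.sqrt (∫ z, ψ xy z ^ 2 ∂μJ) := c2.2
    have n1 : 0 ≤ ∫ z, |ϕ xy z * ψ xy z| ∂μJ := integral_nonneg fun z => abs_nonneg _
    have n2 : 0 ≤ Real.sqrt (∫ z, φ xy z ^ 2 ∂μJ) * Real.sqrt (2 * h) := by positivity
    calc (∫ z, |φ xy z| ∂μJ) * (∫ z, |ϕ xy z * ψ xy z| ∂μJ)
        ≤ (Real.sqrt (∫ z, φ xy z ^ 2 ∂μJ) * Real.sqrt (2 * h))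
            * (Real.sqrt (∫ z, ϕ xy z ^ 2 ∂μJ) * Real.sqrt (∫ z, ψ xy z ^ 2 ∂μJ)) :=
          mul_le_mul e1 e2 n1 n2
      _ = _ := by ring
  -- identify normL2 φ
  have hNφ : Real.sqrt (∫ xy, Real.sqrt (∫ z, φ xy z ^ 2 ∂μJ) ^ 2 ∂(μI.prod μI))
      = normL2 h φ := by
    have h1 : ∫ xy, Real.sqrt (∫ z, φ xy z ^ 2 ∂μJ) ^ 2 ∂(μI.prod μI)
        = ∫ xy, (∫ z, φ xy z ^ 2 ∂μJ) ∂(μI.prod μI) := by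
      refine integral_congr_ae ?_
      filter_upwards with xy
      rw [Real.sq_sqrt (integral_nonneg fun z => sq_nonneg _)]
    rw [h1]
    unfold normL2
    rw [hresM]
  -- nonnegativity of the norms
  have hNϕnn : 0 ≤ normL2 h ϕ := Real.sqrt_nonneg _
  have hNψnn : 0 ≤ normL2 h ψ := Real.sqrt_nonneg _
  have hDϕnn : 0 ≤ normGradHL2 h ϕ := Real.sqrt_nonneg _
  have hDψnn : 0 ≤ normGradHL2 h ψ := Real.sqrt_nonneg _
  have hKϕnn : 0 ≤ normL2 h ϕ ^ 2 + 2 * normL2 h ϕ * normGradHL2 h ϕ := by positivity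
  have hKψnn : 0 ≤ normL2 h ψ ^ 2 + 2 * normL2 h ψ * normGradHL2 h ψ := by positivity
  -- bound on ∫ (B*C)^2
  have hBC2val : ∫ xy, (Real.sqrt (∫ z, ϕ xy z ^ 2 ∂μJ) * Real.sqrt (∫ z, ψ xy z ^ 2 ∂μJ)) ^ 2
        ∂(μI.prod μI)
      ≤ (normL2 h ϕ ^ 2 + 2 * normL2 h ϕ * normGradHL2 h ϕ)
        * (normL2 h ψ ^ 2 + 2 * normL2 h ψ * normGradHL2 h ψ) := by
    have h1 : ∫ xy, (Real.sqrt (∫ z, ϕ xy z ^ 2 ∂μJ) * Real.sqrt (∫ z, ψ xy z ^ 2 ∂μJ)) ^ 2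
          ∂(μI.prod μI)
        = ∫ xy, |(∫ z, ϕ xy z ^ 2 ∂μJ) * (∫ z, ψ xy z ^ 2 ∂μJ)| ∂(μI.prod μI) := by
      refine integral_congr_ae ?_
      filter_upwards with xy
      rw [mul_pow, Real.sq_sqrt (integral_nonneg fun z => sq_nonneg _),
        Real.sq_sqrt (integral_nonneg fun z => sq_nonneg _),
        abs_of_nonneg (mul_nonneg (integral_nonneg fun z => sq_nonneg _)
          (integral_nonneg fun z => sq_nonneg _))]
    rw [h1]
    refine hcsU.2.trans ?_
    have b1 : Real.sqrt (∫ xy, (∫ z, ϕ xy z ^ 2 ∂μJ) ^ 2 ∂(μI.prod μI))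
        ≤ normL2 h ϕ ^ 2 + 2 * normL2 h ϕ * normGradHL2 h ϕ := by
      refine (Real.sqrt_le_sqrt hϕ2bnd).trans ?_
      rw [Real.sqrt_sq hKϕnn]
    have b2 : Real.sqrt (∫ xy, (∫ z, ψ xy z ^ 2 ∂μJ) ^ 2 ∂(μI.prod μI))
        ≤ normL2 h ψ ^ 2 + 2 * normL2 h ψ * normGradHL2 h ψ := by
      refine (Real.sqrt_le_sqrt hψ2bnd).trans ?_
      rw [Real.sqrt_sq hKψnn]
    exact mul_le_mul b1 b2 (Real.sqrt_nonneg _) hKϕnn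
  -- main chain
  rw [show (volume : Measure (ℝ × ℝ)).restrict Msq = μI.prod μI from hresM]
  have step1 : ∫ xy, (∫ z, |φ xy z| ∂μJ) * (∫ z, |ϕ xy z * ψ xy z| ∂μJ) ∂(μI.prod μI)
      ≤ Real.sqrt (2 * h) * ∫ xy, Real.sqrt (∫ z, φ xy z ^ 2 ∂μJ)
          * (Real.sqrt (∫ z, ϕ xy z ^ 2 ∂μJ) * Real.sqrt (∫ z, ψ xy z ^ 2 ∂μJ))
          ∂(μI.prod μI) := by
    rw [← integral_const_mul]
    refine integral_mono_of_nonneg ?_ (hcsM.1.const_mul _) hpoint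
    filter_upwards with xy
    exact mul_nonneg (integral_nonneg fun z => abs_nonneg _)
      (integral_nonneg fun z => abs_nonneg _)
  have step2 : ∫ xy, Real.sqrt (∫ z, φ xy z ^ 2 ∂μJ)
        * (Real.sqrt (∫ z, ϕ xy z ^ 2 ∂μJ) * Real.sqrt (∫ z, ψ xy z ^ 2 ∂μJ)) ∂(μI.prod μI)
      ≤ normL2 h φ *
          ((Real.sqrt 2 * (Real.sqrt (normL2 h ϕ)
              * (Real.sqrt (normL2 h ϕ) + Real.sqrt (normGradHL2 h ϕ))))
            * (Real.sqrt 2 * (Real.sqrt (normL2 h ψ)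
              * (Real.sqrt (normL2 h ψ) + Real.sqrt (normGradHL2 h ψ))))) := by
    have h1 : ∫ xy, Real.sqrt (∫ z, φ xy z ^ 2 ∂μJ)
          * (Real.sqrt (∫ z, ϕ xy z ^ 2 ∂μJ) * Real.sqrt (∫ z, ψ xy z ^ 2 ∂μJ)) ∂(μI.prod μI)
        = ∫ xy, |Real.sqrt (∫ z, φ xy z ^ 2 ∂μJ)
          * (Real.sqrt (∫ z, ϕ xy z ^ 2 ∂μJ) * Real.sqrt (∫ z, ψ xy z ^ 2 ∂μJ))| ∂(μI.prod μI) := by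
      refine integral_congr_ae ?_
      filter_upwards with xy
      rw [abs_of_nonneg (by positivity)]
    rw [h1]
    refine hcsM.2.trans ?_
    rw [hNφ]
    have hsq : Real.sqrt (∫ xy,
          (Real.sqrt (∫ z, ϕ xy z ^ 2 ∂μJ) * Real.sqrt (∫ z, ψ xy z ^ 2 ∂μJ)) ^ 2 ∂(μI.prod μI))
        ≤ (Real.sqrt 2 * (Real.sqrt (normL2 h ϕ)
              * (Real.sqrt (normL2 h ϕ) + Real.sqrt (normGradHL2 h ϕ))))
            * (Real.sqrt 2 * (Real.sqrt (normL2 h ψ)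
              * (Real.sqrt (normL2 h ψ) + Real.sqrt (normGradHL2 h ψ)))) := by
      refine (Real.sqrt_le_sqrt hBC2val).trans ?_
      rw [Real.sqrt_mul hKϕnn]
      have l1 := sqrt_ladder hNϕnn hDϕnn
      have l2 := sqrt_ladder hNψnn hDψnn
      exact mul_le_mul l1 l2 (Real.sqrt_nonneg _) (by positivity)
    have hNφnn : 0 ≤ normL2 h φ := Real.sqrt_nonneg _
    exact mul_le_mul_of_nonneg_left hsq hNφnn
  refine step1.trans ?_
  have hfinal := mul_le_mul_of_nonneg_left step2 (Real.sqrt_nonneg (2 * h))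
  refine hfinal.trans (le_of_eq ?_)
  rw [show ((1:ℝ)/2) = 1 / (2:ℝ) by norm_num]
  rw [← Real.sqrt_eq_rpow, ← Real.sqrt_eq_rpow, ← Real.sqrt_eq_rpow, ← Real.sqrt_eq_rpow]
  have h2 : Real.sqrt 2 * Real.sqrt 2 = 2 := Real.mul_self_sqrt (by norm_num)
  rw [show (Real.sqrt 2 * (Real.sqrt (normL2 h ϕ)
        * (Real.sqrt (normL2 h ϕ) + Real.sqrt (normGradHL2 h ϕ))))
      * (Real.sqrt 2 * (Real.sqrt (normL2 h ψ)
        * (Real.sqrt (normL2 h ψ) + Real.sqrt (normGradHL2 h ψ))))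
    = (Real.sqrt 2 * Real.sqrt 2) * ((Real.sqrt (normL2 h ϕ)
        * (Real.sqrt (normL2 h ϕ) + Real.sqrt (normGradHL2 h ϕ)))
      * (Real.sqrt (normL2 h ψ)
        * (Real.sqrt (normL2 h ψ) + Real.sqrt (normGradHL2 h ψ)))) from by ring, h2]
  ring
end
end

section
/- For any measurable functions φ, ϕ, ψ on Ω = M×(-h,h) such that the right-hand side is finite, one has ∫_M (∫_{-h}^h |φ| dz)(∫_{-h}^h |ϕ||ψ| dz) dxdy ≤ (∫_{-h}^h ‖φ(·,z)‖_{L⁴(M)} dz)(∫_{-h}^h ‖ϕ(·,z)‖_{L⁴(M)}² dz)^{1/2} ‖ψ‖_{L²(Ω)}. -/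
open MeasureTheory Set

noncomputable section

/-- The `L⁴(M)` norm of a function on `M`. -/
def normL4M (f : ℝ × ℝ → ℝ) : ℝ := (∫ xy in Msq, |f xy| ^ 4) ^ ((1:ℝ)/4)

open ENNReal

/-- Hölder with exponents 4, 4, 2 for lower integrals. -/
lemma lint_mul3 {α : Type*} [MeasurableSpace α] (μ : Measure α) {f g k : α → ℝ≥0∞}
    (hf : Measurable f) (hg : Measurable g) (hk : Measurable k) :
    ∫⁻ x, f x * (g x * k x) ∂μ ≤
      (∫⁻ x, f x ^ (4:ℝ) ∂μ) ^ ((1:ℝ)/4) *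
        ((∫⁻ x, g x ^ (4:ℝ) ∂μ) ^ ((1:ℝ)/4) * (∫⁻ x, k x ^ (2:ℝ) ∂μ) ^ ((1:ℝ)/2)) := by
  have h22 : Real.HolderConjugate 2 2 := Real.HolderConjugate.two_two
  have sq4 : ∀ y : ℝ≥0∞, (y ^ (2:ℝ)) ^ (2:ℝ) = y ^ (4:ℝ) := by
    intro y; rw [← ENNReal.rpow_mul]; norm_num
  have step2 : ∫⁻ x, (f x * g x) ^ (2:ℝ) ∂μ ≤
      (∫⁻ x, f x ^ (4:ℝ) ∂μ) ^ ((1:ℝ)/2) * (∫⁻ x, g x ^ (4:ℝ) ∂μ) ^ ((1:ℝ)/2) := by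
    have := ENNReal.lintegral_mul_le_Lp_mul_Lq μ h22
      (hf.pow_const (2:ℝ)).aemeasurable (hg.pow_const (2:ℝ)).aemeasurable
    simp only [Pi.mul_apply, sq4] at this
    calc ∫⁻ x, (f x * g x) ^ (2:ℝ) ∂μ
        = ∫⁻ x, f x ^ (2:ℝ) * g x ^ (2:ℝ) ∂μ := by
          congr 1; funext x; rw [ENNReal.mul_rpow_of_nonneg _ _ (by norm_num)]
      _ ≤ (∫⁻ x, f x ^ (4:ℝ) ∂μ) ^ ((1:ℝ)/2) * (∫⁻ x, g x ^ (4:ℝ) ∂μ) ^ ((1:ℝ)/2) := by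
          simpa using this
  calc ∫⁻ x, f x * (g x * k x) ∂μ
      = ∫⁻ x, ((fun x => f x * g x) * k) x ∂μ := by
        simp only [Pi.mul_apply]; congr 1; funext x; ring
    _ ≤ (∫⁻ x, (f x * g x) ^ (2:ℝ) ∂μ) ^ ((1:ℝ)/2) * (∫⁻ x, k x ^ (2:ℝ) ∂μ) ^ ((1:ℝ)/2) :=
        ENNReal.lintegral_mul_le_Lp_mul_Lq μ h22 (hf.mul hg).aemeasurable hk.aemeasurable
    _ ≤ ((∫⁻ x, f x ^ (4:ℝ) ∂μ) ^ ((1:ℝ)/2) * (∫⁻ x, g x ^ (4:ℝ) ∂μ) ^ ((1:ℝ)/2)) ^ ((1:ℝ)/2)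
          * (∫⁻ x, k x ^ (2:ℝ) ∂μ) ^ ((1:ℝ)/2) := by
        gcongr
    _ = (∫⁻ x, f x ^ (4:ℝ) ∂μ) ^ ((1:ℝ)/4) *
          ((∫⁻ x, g x ^ (4:ℝ) ∂μ) ^ ((1:ℝ)/4) * (∫⁻ x, k x ^ (2:ℝ) ∂μ) ^ ((1:ℝ)/2)) := by
        rw [ENNReal.mul_rpow_of_nonneg _ _ (by norm_num : (0:ℝ) ≤ 1/2),
          ← ENNReal.rpow_mul, ← ENNReal.rpow_mul, mul_assoc]
        norm_num

/-- Conversion of the `L⁴(M)` norm into a lower integral. -/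
lemma ofReal_normL4M {f : ℝ × ℝ → ℝ} (hm : Measurable f)
    (hint : IntegrableOn (fun xy => |f xy| ^ 4) Msq) :
    ENNReal.ofReal (normL4M f)
        = (∫⁻ xy in Msq, ENNReal.ofReal |f xy| ^ (4:ℝ)) ^ ((1:ℝ)/4)
      ∧ (∫⁻ xy in Msq, ENNReal.ofReal |f xy| ^ (4:ℝ)) ≠ ∞ := by
  have hm4 : Measurable fun xy => |f xy| ^ 4 := hm.abs.pow_const 4
  have e1 : ∀ xy : ℝ × ℝ, ENNReal.ofReal (|f xy| ^ 4) = ENNReal.ofReal |f xy| ^ (4:ℝ) := by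
    intro xy
    rw [ENNReal.ofReal_pow (abs_nonneg _), ← ENNReal.rpow_natCast]
    norm_num
  have hfin : (∫⁻ xy in Msq, ENNReal.ofReal |f xy| ^ (4:ℝ)) ≠ ∞ := by
    rw [← lintegral_congr e1]
    exact (lintegral_ofReal_ne_top_iff_integrable hm4.aestronglyMeasurable
      (Filter.Eventually.of_forall fun xy => by positivity)).mpr hint
  refine ⟨?_, hfin⟩
  have e2 : (∫ xy in Msq, |f xy| ^ 4)
      = (∫⁻ xy in Msq, ENNReal.ofReal |f xy| ^ (4:ℝ)).toReal := by
    rw [integral_eq_lintegral_of_nonneg_ae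
      (Filter.Eventually.of_forall fun xy => by positivity) hm4.aestronglyMeasurable]
    congr 1
    exact lintegral_congr e1
  rw [normL4M, e2, ENNReal.toReal_rpow, ENNReal.ofReal_toReal]
  exact ENNReal.rpow_ne_top_of_nonneg (by norm_num) hfin

/-- For any measurable functions `φ, ϕ, ψ` on `Ω = M × (-h,h)` such that the
right-hand side is finite, one has
`∫_M (∫_{-h}^h |φ| dz)(∫_{-h}^h |ϕ||ψ| dz) dxdy
  ≤ (∫_{-h}^h ‖φ(·,z)‖_{L⁴(M)} dz)(∫_{-h}^h ‖ϕ(·,z)‖_{L⁴(M)}² dz)^{1/2} ‖ψ‖_{L²(Ω)}`. -/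
theorem statement1 (h : ℝ) (hh : 0 < h) (φ ϕ ψ : (ℝ × ℝ) → ℝ → ℝ)
    (hφm : Measurable (fun q : (ℝ × ℝ) × ℝ => φ q.1 q.2))
    (hϕm : Measurable (fun q : (ℝ × ℝ) × ℝ => ϕ q.1 q.2))
    (hψm : Measurable (fun q : (ℝ × ℝ) × ℝ => ψ q.1 q.2))
    (hφ4 : ∀ᵐ z ∂(volume.restrict (Set.Ioo (-h) h)),
      IntegrableOn (fun xy => |φ xy z| ^ 4) Msq)
    (hϕ4 : ∀ᵐ z ∂(volume.restrict (Set.Ioo (-h) h)),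
      IntegrableOn (fun xy => |ϕ xy z| ^ 4) Msq)
    (hφz : IntegrableOn (fun z => normL4M (fun xy => φ xy z)) (Set.Ioo (-h) h))
    (hϕz : IntegrableOn (fun z => (normL4M (fun xy => ϕ xy z)) ^ 2) (Set.Ioo (-h) h))
    (hψ2 : IntegrableOn (fun q : (ℝ × ℝ) × ℝ => (ψ q.1 q.2) ^ 2) (Omg h)) :
    (∫ xy in Msq,
        (∫ z in Set.Ioo (-h) h, |φ xy z|) * (∫ z in Set.Ioo (-h) h, |ϕ xy z| * |ψ xy z|))
      ≤ (∫ z in Set.Ioo (-h) h, normL4M (fun xy => φ xy z)) *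
          ((∫ z in Set.Ioo (-h) h, (normL4M (fun xy => ϕ xy z)) ^ 2) ^ ((1:ℝ)/2)) *
          normL2 h ψ := by
  have h22 : Real.HolderConjugate 2 2 := Real.HolderConjugate.two_two
  -- measurability of the `ENNReal`-valued versions
  have hΦm : Measurable fun q : (ℝ × ℝ) × ℝ => ENNReal.ofReal |φ q.1 q.2| :=
    ENNReal.measurable_ofReal.comp hφm.abs
  have hΥm : Measurable fun q : (ℝ × ℝ) × ℝ => ENNReal.ofReal |ϕ q.1 q.2| :=
    ENNReal.measurable_ofReal.comp hϕm.abs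
  have hΨm : Measurable fun q : (ℝ × ℝ) × ℝ => ENNReal.ofReal |ψ q.1 q.2| :=
    ENNReal.measurable_ofReal.comp hψm.abs
  -- the basic quantities
  set Aop : (ℝ × ℝ) → ℝ≥0∞ :=
    fun xy => ∫⁻ z in Set.Ioo (-h) h, ENNReal.ofReal |φ xy z| with hAopdef
  set Bop : (ℝ × ℝ) → ℝ≥0∞ :=
    fun xy => ∫⁻ z in Set.Ioo (-h) h, ENNReal.ofReal |ϕ xy z| * ENNReal.ofReal |ψ xy z|
    with hBopdef
  set a : ℝ → ℝ≥0∞ :=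
    fun z => (∫⁻ xy in Msq, ENNReal.ofReal |φ xy z| ^ (4:ℝ)) ^ ((1:ℝ)/4) with hadef
  set b : ℝ → ℝ≥0∞ :=
    fun z => (∫⁻ xy in Msq, ENNReal.ofReal |ϕ xy z| ^ (4:ℝ)) ^ ((1:ℝ)/4) with hbdef
  set c : ℝ → ℝ≥0∞ :=
    fun z => (∫⁻ xy in Msq, ENNReal.ofReal |ψ xy z| ^ (2:ℝ)) ^ ((1:ℝ)/2) with hcdef
  have hAm : Measurable Aop := hΦm.lintegral_prod_right'
  have hBm : Measurable Bop := (hΥm.mul hΨm).lintegral_prod_right'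
  have ham : Measurable a := ((hΦm.pow_const (4:ℝ)).lintegral_prod_left').pow_const _
  have hbm : Measurable b := ((hΥm.pow_const (4:ℝ)).lintegral_prod_left').pow_const _
  have hcm : Measurable c := ((hΨm.pow_const (2:ℝ)).lintegral_prod_left').pow_const _
  -- pointwise identification of the inner integrals
  have hAeq : ∀ xy : ℝ × ℝ, (∫ z in Set.Ioo (-h) h, |φ xy z|) = (Aop xy).toReal := by
    intro xy
    have hsm : AEStronglyMeasurable (fun z => |φ xy z|)
        (volume.restrict (Set.Ioo (-h) h)) :=
      Measurable.aestronglyMeasurable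
        (by exact (hφm.comp measurable_prodMk_left).abs)
    rw [integral_eq_lintegral_of_nonneg_ae
      (Filter.Eventually.of_forall fun z => abs_nonneg _) hsm]
  have hBeq : ∀ xy : ℝ × ℝ,
      (∫ z in Set.Ioo (-h) h, |ϕ xy z| * |ψ xy z|) = (Bop xy).toReal := by
    intro xy
    have hsm : AEStronglyMeasurable (fun z => |ϕ xy z| * |ψ xy z|)
        (volume.restrict (Set.Ioo (-h) h)) :=
      Measurable.aestronglyMeasurable (by
        have h1 : Measurable fun z => |ϕ xy z| := (hϕm.comp measurable_prodMk_left).abs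
        have h2 : Measurable fun z => |ψ xy z| := (hψm.comp measurable_prodMk_left).abs
        exact h1.mul h2)
    rw [integral_eq_lintegral_of_nonneg_ae
      (Filter.Eventually.of_forall fun z => mul_nonneg (abs_nonneg _) (abs_nonneg _)) hsm]
    rw [hBopdef]
    congr 1
    exact lintegral_congr fun z => ENNReal.ofReal_mul (abs_nonneg _)
  -- the core estimate in `ℝ≥0∞`
  have core : (∫⁻ xy in Msq, Aop xy * Bop xy) ≤
      (∫⁻ z in Set.Ioo (-h) h, a z) *
        ((∫⁻ z in Set.Ioo (-h) h, b z ^ (2:ℝ)) ^ ((1:ℝ)/2) *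
          (∫⁻ z in Set.Ioo (-h) h, c z ^ (2:ℝ)) ^ ((1:ℝ)/2)) := by
    have swap1 : (∫⁻ xy in Msq, Aop xy * Bop xy)
        = ∫⁻ z' in Set.Ioo (-h) h, ∫⁻ xy in Msq, ENNReal.ofReal |φ xy z'| * Bop xy := by
      rw [← lintegral_lintegral_swap ((hΦm.mul (hBm.comp measurable_fst)).aemeasurable)]
      refine lintegral_congr fun xy => ?_
      exact (lintegral_mul_const (Bop xy)
        (hΦm.comp (measurable_prodMk_left (x := xy)))).symm
    have inner1 : ∀ z' : ℝ, (∫⁻ xy in Msq, ENNReal.ofReal |φ xy z'| * Bop xy)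
        = ∫⁻ z in Set.Ioo (-h) h, ∫⁻ xy in Msq,
            ENNReal.ofReal |φ xy z'| *
              (ENNReal.ofReal |ϕ xy z| * ENNReal.ofReal |ψ xy z|) := by
      intro z'
      rw [← lintegral_lintegral_swap
        ((((hΦm.comp measurable_prodMk_right).comp measurable_fst).mul
          (hΥm.mul hΨm)).aemeasurable)]
      refine lintegral_congr fun xy => ?_
      rw [hBopdef]
      exact (lintegral_const_mul (ENNReal.ofReal |φ xy z'|)
        (((hϕm.comp measurable_prodMk_left).abs.ennreal_ofReal).mul
          ((hψm.comp measurable_prodMk_left).abs.ennreal_ofReal))).symm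
    have hkey : ∀ z' z : ℝ, (∫⁻ xy in Msq,
          ENNReal.ofReal |φ xy z'| *
            (ENNReal.ofReal |ϕ xy z| * ENNReal.ofReal |ψ xy z|)) ≤ a z' * (b z * c z) :=
      fun z' z => lint_mul3 _ (hΦm.comp measurable_prodMk_right)
        (hΥm.comp measurable_prodMk_right) (hΨm.comp measurable_prodMk_right)
    calc (∫⁻ xy in Msq, Aop xy * Bop xy)
        = ∫⁻ z' in Set.Ioo (-h) h, ∫⁻ z in Set.Ioo (-h) h, ∫⁻ xy in Msq,
            ENNReal.ofReal |φ xy z'| *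
              (ENNReal.ofReal |ϕ xy z| * ENNReal.ofReal |ψ xy z|) := by
          rw [swap1]; exact lintegral_congr fun z' => inner1 z'
      _ ≤ ∫⁻ z' in Set.Ioo (-h) h, ∫⁻ z in Set.Ioo (-h) h, a z' * (b z * c z) :=
          lintegral_mono fun z' => lintegral_mono fun z => hkey z' z
      _ = (∫⁻ z' in Set.Ioo (-h) h, a z') * ∫⁻ z in Set.Ioo (-h) h, b z * c z := by
          rw [← lintegral_mul_const _ ham]
          exact lintegral_congr fun z' => lintegral_const_mul _ (hbm.mul hcm)
      _ ≤ (∫⁻ z in Set.Ioo (-h) h, a z) *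
            ((∫⁻ z in Set.Ioo (-h) h, b z ^ (2:ℝ)) ^ ((1:ℝ)/2) *
              (∫⁻ z in Set.Ioo (-h) h, c z ^ (2:ℝ)) ^ ((1:ℝ)/2)) := by
          gcongr
          simpa using ENNReal.lintegral_mul_le_Lp_mul_Lq
            (volume.restrict (Set.Ioo (-h) h)) h22 hbm.aemeasurable hcm.aemeasurable
  -- identification of the right-hand side factors
  have hnormφ_nonneg : ∀ z : ℝ, 0 ≤ normL4M fun xy => φ xy z := fun z =>
    Real.rpow_nonneg (integral_nonneg fun xy => by positivity) _
  have hnormϕ_nonneg : ∀ z : ℝ, 0 ≤ normL4M fun xy => ϕ xy z := fun z =>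
    Real.rpow_nonneg (integral_nonneg fun xy => by positivity) _
  have haeq : ∀ᵐ z ∂(volume.restrict (Set.Ioo (-h) h)),
      a z = ENNReal.ofReal (normL4M fun xy => φ xy z) := by
    filter_upwards [hφ4] with z hz
    exact ((ofReal_normL4M (hφm.comp measurable_prodMk_right) hz).1).symm
  have hbeq : ∀ᵐ z ∂(volume.restrict (Set.Ioo (-h) h)),
      b z ^ (2:ℝ) = ENNReal.ofReal ((normL4M fun xy => ϕ xy z) ^ 2) := by
    filter_upwards [hϕ4] with z hz
    have hb1 := (ofReal_normL4M (f := fun xy => ϕ xy z)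
      (hϕm.comp measurable_prodMk_right) hz).1
    simp only [hbdef]
    rw [← hb1,
      ENNReal.ofReal_rpow_of_nonneg (hnormϕ_nonneg z) (by norm_num : (0:ℝ) ≤ 2)]
    congr 1
    rw [show (2:ℝ) = ((2:ℕ):ℝ) by norm_num, Real.rpow_natCast]
  have hAfin : (∫⁻ z in Set.Ioo (-h) h, a z) ≠ ∞ := by
    rw [lintegral_congr_ae haeq]
    exact (lintegral_ofReal_ne_top_iff_integrable hφz.aestronglyMeasurable
      (Filter.Eventually.of_forall fun z => hnormφ_nonneg z)).mpr hφz
  have hAreal : (∫ z in Set.Ioo (-h) h, normL4M fun xy => φ xy z)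
      = (∫⁻ z in Set.Ioo (-h) h, a z).toReal := by
    rw [integral_eq_lintegral_of_nonneg_ae
      (Filter.Eventually.of_forall fun z => hnormφ_nonneg z) hφz.aestronglyMeasurable,
      lintegral_congr_ae haeq]
  have hBfin : (∫⁻ z in Set.Ioo (-h) h, b z ^ (2:ℝ)) ≠ ∞ := by
    rw [lintegral_congr_ae hbeq]
    exact (lintegral_ofReal_ne_top_iff_integrable hϕz.aestronglyMeasurable
      (Filter.Eventually.of_forall fun z => sq_nonneg _)).mpr hϕz
  have hBreal : (∫ z in Set.Ioo (-h) h, (normL4M fun xy => ϕ xy z) ^ 2)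
      = (∫⁻ z in Set.Ioo (-h) h, b z ^ (2:ℝ)).toReal := by
    rw [integral_eq_lintegral_of_nonneg_ae
      (Filter.Eventually.of_forall fun z => sq_nonneg _) hϕz.aestronglyMeasurable,
      lintegral_congr_ae hbeq]
  -- the ψ factor
  have hprod : (volume.restrict Msq).prod (volume.restrict (Set.Ioo (-h) h))
      = volume.restrict (Omg h) := by
    rw [Measure.prod_restrict, ← Measure.volume_eq_prod]; rfl
  have hψ2' : Integrable (fun q : (ℝ × ℝ) × ℝ => ψ q.1 q.2 ^ 2)
      ((volume.restrict Msq).prod (volume.restrict (Set.Ioo (-h) h))) := by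
    rw [hprod]; exact hψ2
  have e3 : ∀ q : (ℝ × ℝ) × ℝ,
      ENNReal.ofReal (ψ q.1 q.2 ^ 2) = ENNReal.ofReal |ψ q.1 q.2| ^ (2:ℝ) := by
    intro q
    rw [← sq_abs, ENNReal.ofReal_pow (abs_nonneg _), ← ENNReal.rpow_natCast]
    norm_num
  have hc2 : ∀ z : ℝ, c z ^ (2:ℝ) = ∫⁻ xy in Msq, ENNReal.ofReal |ψ xy z| ^ (2:ℝ) := by
    intro z
    rw [hcdef, ← ENNReal.rpow_mul]
    norm_num
  have hCiter : (∫⁻ z in Set.Ioo (-h) h, c z ^ (2:ℝ))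
      = ∫⁻ q, ENNReal.ofReal |ψ q.1 q.2| ^ (2:ℝ)
          ∂((volume.restrict Msq).prod (volume.restrict (Set.Ioo (-h) h))) := by
    rw [lintegral_congr hc2]
    exact (lintegral_prod_symm _ (hΨm.pow_const (2:ℝ)).aemeasurable).symm
  have hCfin : (∫⁻ z in Set.Ioo (-h) h, c z ^ (2:ℝ)) ≠ ∞ := by
    rw [hCiter, ← lintegral_congr e3]
    exact (lintegral_ofReal_ne_top_iff_integrable hψ2'.aestronglyMeasurable
      (Filter.Eventually.of_forall fun q => sq_nonneg _)).mpr hψ2'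
  have hCreal : normL2 h ψ = ((∫⁻ z in Set.Ioo (-h) h, c z ^ (2:ℝ)) ^ ((1:ℝ)/2)).toReal := by
    rw [normL2,
      show (∫ xy in Msq, ∫ z in Set.Ioo (-h) h, ψ xy z ^ 2)
          = ∫ q, ψ q.1 q.2 ^ 2
              ∂((volume.restrict Msq).prod (volume.restrict (Set.Ioo (-h) h))) from
        (integral_prod _ hψ2').symm,
      integral_eq_lintegral_of_nonneg_ae
        (Filter.Eventually.of_forall fun q => sq_nonneg _) hψ2'.aestronglyMeasurable,
      lintegral_congr e3, ← hCiter, Real.sqrt_eq_rpow, ENNReal.toReal_rpow]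
  -- left-hand side as a lower integral
  have lhs_eq : (∫ xy in Msq,
        (∫ z in Set.Ioo (-h) h, |φ xy z|) * (∫ z in Set.Ioo (-h) h, |ϕ xy z| * |ψ xy z|))
      = (∫⁻ xy in Msq, ENNReal.ofReal ((Aop xy * Bop xy).toReal)).toReal := by
    have hfun : (fun xy => (∫ z in Set.Ioo (-h) h, |φ xy z|) *
          (∫ z in Set.Ioo (-h) h, |ϕ xy z| * |ψ xy z|))
        = fun xy => ((Aop xy) * (Bop xy)).toReal := by
      funext xy
      rw [hAeq xy, hBeq xy, ENNReal.toReal_mul]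
    rw [hfun, integral_eq_lintegral_of_nonneg_ae (f := fun xy => (Aop xy * Bop xy).toReal)
      (Filter.Eventually.of_forall fun xy => ENNReal.toReal_nonneg)
      ((hAm.mul hBm).ennreal_toReal).aestronglyMeasurable]
  -- assembly
  set R : ℝ≥0∞ := (∫⁻ z in Set.Ioo (-h) h, a z) *
      ((∫⁻ z in Set.Ioo (-h) h, b z ^ (2:ℝ)) ^ ((1:ℝ)/2) *
        (∫⁻ z in Set.Ioo (-h) h, c z ^ (2:ℝ)) ^ ((1:ℝ)/2)) with hRdef
  have hRne : R ≠ ∞ :=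
    ENNReal.mul_ne_top hAfin (ENNReal.mul_ne_top
      (ENNReal.rpow_ne_top_of_nonneg (by norm_num) hBfin)
      (ENNReal.rpow_ne_top_of_nonneg (by norm_num) hCfin))
  have hle : (∫⁻ xy in Msq, ENNReal.ofReal ((Aop xy * Bop xy).toReal)) ≤ R :=
    le_trans (lintegral_mono fun xy => ENNReal.ofReal_toReal_le) core
  have final : (∫⁻ xy in Msq, ENNReal.ofReal ((Aop xy * Bop xy).toReal)).toReal
      ≤ R.toReal := ENNReal.toReal_mono hRne hle
  rw [lhs_eq]
  refine le_trans final (le_of_eq ?_)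
  rw [hRdef, ENNReal.toReal_mul, ENNReal.toReal_mul, hAreal, hBreal, hCreal,
    ENNReal.toReal_rpow, mul_assoc]
end
end

section
/- For any measurable functions φ, ϕ, ψ on Ω = M×(-h,h) such that the right-hand side is finite, one has ∫_M (∫_{-h}^h |φ||ϕ| dz)(∫_{-h}^h |ψ| dz) dxdy ≤ (∫_{-h}^h ‖φ(·,z)‖_{L⁴(M)}² dz)^{1/2} (∫_{-h}^h ‖ϕ(·,z)‖_{L⁴(M)}² dz)^{1/2} (∫_{-h}^h ‖ψ(·,z)‖_{L²(M)} dz). -/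
open MeasureTheory Set

noncomputable section

/-- The `L²(M)` norm of a function on `M`. -/
def normL2M (f : ℝ × ℝ → ℝ) : ℝ := Real.sqrt (∫ xy in Msq, (f xy) ^ 2)

namespace Statement2Aux

open scoped ENNReal

lemma ofReal_integral_le {α : Type*} [MeasurableSpace α] {μ : Measure α} {f : α → ℝ}
    (hf : 0 ≤ᵐ[μ] f) :
    ENNReal.ofReal (∫ x, f x ∂μ) ≤ ∫⁻ x, ENNReal.ofReal (f x) ∂μ := by
  by_cases hi : Integrable f μ
  · exact (MeasureTheory.ofReal_integral_eq_lintegral_ofReal hi hf).le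
  · rw [integral_undef hi]; simp

lemma conj22 : Real.HolderConjugate 2 2 := Real.HolderConjugate.two_two

lemma mrpow {α : Type*} [MeasurableSpace α] {f : α → ℝ≥0∞} (hf : Measurable f) (c : ℝ) :
    Measurable fun x => f x ^ c :=
  (ENNReal.continuous_rpow_const.measurable).comp hf

lemma holder3 {α : Type*} [MeasurableSpace α] (μ : Measure α) {f g k : α → ℝ≥0∞}
    (hf : AEMeasurable f μ) (hg : AEMeasurable g μ) (hk : AEMeasurable k μ) :
    ∫⁻ x, f x * g x * k x ∂μ ≤
      (∫⁻ x, f x ^ (4:ℝ) ∂μ) ^ ((1:ℝ)/4) * (∫⁻ x, g x ^ (4:ℝ) ∂μ) ^ ((1:ℝ)/4) *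
        (∫⁻ x, k x ^ (2:ℝ) ∂μ) ^ ((1:ℝ)/2) := by
  have h1 : ∫⁻ x, f x * g x * k x ∂μ ≤
      (∫⁻ x, (f x * g x) ^ (2:ℝ) ∂μ) ^ ((1:ℝ)/2) * (∫⁻ x, k x ^ (2:ℝ) ∂μ) ^ ((1:ℝ)/2) := by
    simpa [Pi.mul_apply] using
      ENNReal.lintegral_mul_le_Lp_mul_Lq μ conj22 (hf.mul hg) hk
  have h2 : ∫⁻ x, (f x * g x) ^ (2:ℝ) ∂μ ≤
      (∫⁻ x, f x ^ (4:ℝ) ∂μ) ^ ((1:ℝ)/2) * (∫⁻ x, g x ^ (4:ℝ) ∂μ) ^ ((1:ℝ)/2) := by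
    have e4 : ∀ a : ℝ≥0∞, (a ^ (2:ℝ)) ^ (2:ℝ) = a ^ (4:ℝ) := fun a => by
      rw [← ENNReal.rpow_mul]; norm_num
    calc ∫⁻ x, (f x * g x) ^ (2:ℝ) ∂μ
        = ∫⁻ x, f x ^ (2:ℝ) * g x ^ (2:ℝ) ∂μ := by
          simp_rw [ENNReal.mul_rpow_of_nonneg _ _ (by norm_num : (0:ℝ) ≤ 2)]
      _ ≤ (∫⁻ x, (f x ^ (2:ℝ)) ^ (2:ℝ) ∂μ) ^ ((1:ℝ)/2) *
            (∫⁻ x, (g x ^ (2:ℝ)) ^ (2:ℝ) ∂μ) ^ ((1:ℝ)/2) := by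
          simpa [Pi.mul_apply] using
            ENNReal.lintegral_mul_le_Lp_mul_Lq μ conj22
              (hf.pow_const (2:ℝ)) (hg.pow_const (2:ℝ))
      _ = (∫⁻ x, f x ^ (4:ℝ) ∂μ) ^ ((1:ℝ)/2) * (∫⁻ x, g x ^ (4:ℝ) ∂μ) ^ ((1:ℝ)/2) := by
          simp_rw [e4]
  calc ∫⁻ x, f x * g x * k x ∂μ
      ≤ (∫⁻ x, (f x * g x) ^ (2:ℝ) ∂μ) ^ ((1:ℝ)/2) * (∫⁻ x, k x ^ (2:ℝ) ∂μ) ^ ((1:ℝ)/2) := h1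
    _ ≤ ((∫⁻ x, f x ^ (4:ℝ) ∂μ) ^ ((1:ℝ)/2) * (∫⁻ x, g x ^ (4:ℝ) ∂μ) ^ ((1:ℝ)/2)) ^ ((1:ℝ)/2) *
          (∫⁻ x, k x ^ (2:ℝ) ∂μ) ^ ((1:ℝ)/2) :=
        mul_le_mul_left (ENNReal.rpow_le_rpow h2 (by norm_num)) _
    _ = (∫⁻ x, f x ^ (4:ℝ) ∂μ) ^ ((1:ℝ)/4) * (∫⁻ x, g x ^ (4:ℝ) ∂μ) ^ ((1:ℝ)/4) *
          (∫⁻ x, k x ^ (2:ℝ) ∂μ) ^ ((1:ℝ)/2) := by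
        rw [ENNReal.mul_rpow_of_nonneg _ _ (by norm_num : (0:ℝ) ≤ 1/2),
          ← ENNReal.rpow_mul, ← ENNReal.rpow_mul]
        norm_num

/-- The key estimate, entirely in `ℝ≥0∞`. -/
lemma key {μ : Measure (ℝ × ℝ)} {ν : Measure ℝ} [SFinite μ] [SFinite ν]
    (f g k : (ℝ × ℝ) → ℝ → ℝ≥0∞)
    (hf : Measurable fun q : (ℝ × ℝ) × ℝ => f q.1 q.2)
    (hg : Measurable fun q : (ℝ × ℝ) × ℝ => g q.1 q.2)
    (hk : Measurable fun q : (ℝ × ℝ) × ℝ => k q.1 q.2) :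
    ∫⁻ xy, (∫⁻ z, f xy z * g xy z ∂ν) * (∫⁻ z, k xy z ∂ν) ∂μ ≤
      (∫⁻ z, (∫⁻ xy, f xy z ^ (4:ℝ) ∂μ) ^ ((1:ℝ)/2) ∂ν) ^ ((1:ℝ)/2) *
        (∫⁻ z, (∫⁻ xy, g xy z ^ (4:ℝ) ∂μ) ^ ((1:ℝ)/2) ∂ν) ^ ((1:ℝ)/2) *
        (∫⁻ z, (∫⁻ xy, k xy z ^ (2:ℝ) ∂μ) ^ ((1:ℝ)/2) ∂ν) := by
  have mf1 : ∀ z, Measurable fun xy => f xy z := fun z =>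
    hf.comp (measurable_id.prodMk measurable_const)
  have mg1 : ∀ z, Measurable fun xy => g xy z := fun z =>
    hg.comp (measurable_id.prodMk measurable_const)
  have mk1 : ∀ z, Measurable fun xy => k xy z := fun z =>
    hk.comp (measurable_id.prodMk measurable_const)
  have mf2 : ∀ xy, Measurable fun z => f xy z := fun xy =>
    hf.comp (measurable_const.prodMk measurable_id)
  have mg2 : ∀ xy, Measurable fun z => g xy z := fun xy =>
    hg.comp (measurable_const.prodMk measurable_id)
  have mk2 : ∀ xy, Measurable fun z => k xy z := fun xy =>
    hk.comp (measurable_const.prodMk measurable_id)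
  set F4 : ℝ → ℝ≥0∞ := fun z => (∫⁻ xy, f xy z ^ (4:ℝ) ∂μ) ^ ((1:ℝ)/4) with hF4
  set G4 : ℝ → ℝ≥0∞ := fun z => (∫⁻ xy, g xy z ^ (4:ℝ) ∂μ) ^ ((1:ℝ)/4) with hG4
  set K2 : ℝ → ℝ≥0∞ := fun z => (∫⁻ xy, k xy z ^ (2:ℝ) ∂μ) ^ ((1:ℝ)/2) with hK2
  have mF4 : Measurable F4 := by
    apply mrpow _ _
    exact Measurable.lintegral_prod_right
      (f := fun z xy => f xy z ^ (4:ℝ)) (mrpow (hf.comp measurable_swap) _)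
  have mG4 : Measurable G4 := by
    apply mrpow _ _
    exact Measurable.lintegral_prod_right
      (f := fun z xy => g xy z ^ (4:ℝ)) (mrpow (hg.comp measurable_swap) _)
  have mK2 : Measurable K2 := by
    apply mrpow _ _
    exact Measurable.lintegral_prod_right
      (f := fun z xy => k xy z ^ (2:ℝ)) (mrpow (hk.comp measurable_swap) _)
  set C : (ℝ × ℝ) → ℝ≥0∞ := fun xy => ∫⁻ z, k xy z ∂ν with hC
  have mC : Measurable C := Measurable.lintegral_prod_right hk
  have step1 : ∫⁻ xy, (∫⁻ z, f xy z * g xy z ∂ν) * (∫⁻ z, k xy z ∂ν) ∂μ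
      = ∫⁻ xy, ∫⁻ z, (f xy z * g xy z) * C xy ∂ν ∂μ :=
    lintegral_congr fun xy =>
      (lintegral_mul_const'' (C xy) ((mf2 xy).mul (mg2 xy)).aemeasurable).symm
  have step2 : ∫⁻ xy, ∫⁻ z, (f xy z * g xy z) * C xy ∂ν ∂μ
      = ∫⁻ z, ∫⁻ xy, (f xy z * g xy z) * C xy ∂μ ∂ν := by
    apply lintegral_lintegral_swap
    exact ((hf.mul hg).mul (mC.comp measurable_fst)).aemeasurable
  have step3 : ∀ z, ∫⁻ xy, (f xy z * g xy z) * C xy ∂μ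
      = ∫⁻ z', ∫⁻ xy, f xy z * g xy z * k xy z' ∂μ ∂ν := by
    intro z
    have e : ∀ xy, (f xy z * g xy z) * C xy = ∫⁻ z', f xy z * g xy z * k xy z' ∂ν := fun xy =>
      (lintegral_const_mul'' (f xy z * g xy z) (mk2 xy).aemeasurable).symm
    rw [lintegral_congr e]
    apply lintegral_lintegral_swap
    exact ((((mf1 z).comp measurable_fst).mul ((mg1 z).comp measurable_fst)).mul hk).aemeasurable
  have step4 : ∀ z z', ∫⁻ xy, f xy z * g xy z * k xy z' ∂μ ≤ F4 z * G4 z * K2 z' := fun z z' =>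
    holder3 μ (mf1 z).aemeasurable (mg1 z).aemeasurable (mk1 z').aemeasurable
  have step5 : ∫⁻ z, ∫⁻ xy, (f xy z * g xy z) * C xy ∂μ ∂ν
      ≤ (∫⁻ z, F4 z * G4 z ∂ν) * ∫⁻ z', K2 z' ∂ν := by
    calc ∫⁻ z, ∫⁻ xy, (f xy z * g xy z) * C xy ∂μ ∂ν
        ≤ ∫⁻ z, ∫⁻ z', F4 z * G4 z * K2 z' ∂ν ∂ν := by
          refine lintegral_mono fun z => ?_
          rw [step3 z]
          exact lintegral_mono fun z' => step4 z z'
      _ = ∫⁻ z, (F4 z * G4 z) * ∫⁻ z', K2 z' ∂ν ∂ν :=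
          lintegral_congr fun z => lintegral_const_mul'' _ mK2.aemeasurable
      _ = (∫⁻ z, F4 z * G4 z ∂ν) * ∫⁻ z', K2 z' ∂ν :=
          lintegral_mul_const'' _ (mF4.mul mG4).aemeasurable
  have step6 : ∫⁻ z, F4 z * G4 z ∂ν
      ≤ (∫⁻ z, F4 z ^ (2:ℝ) ∂ν) ^ ((1:ℝ)/2) * (∫⁻ z, G4 z ^ (2:ℝ) ∂ν) ^ ((1:ℝ)/2) := by
    simpa [Pi.mul_apply] using
      ENNReal.lintegral_mul_le_Lp_mul_Lq ν conj22 mF4.aemeasurable mG4.aemeasurable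
  have e24 : ∀ z, F4 z ^ (2:ℝ) = (∫⁻ xy, f xy z ^ (4:ℝ) ∂μ) ^ ((1:ℝ)/2) := fun z => by
    rw [hF4, ← ENNReal.rpow_mul]; norm_num
  have e24' : ∀ z, G4 z ^ (2:ℝ) = (∫⁻ xy, g xy z ^ (4:ℝ) ∂μ) ^ ((1:ℝ)/2) := fun z => by
    rw [hG4, ← ENNReal.rpow_mul]; norm_num
  calc ∫⁻ xy, (∫⁻ z, f xy z * g xy z ∂ν) * (∫⁻ z, k xy z ∂ν) ∂μ
      = ∫⁻ z, ∫⁻ xy, (f xy z * g xy z) * C xy ∂μ ∂ν := by rw [step1, step2]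
    _ ≤ (∫⁻ z, F4 z * G4 z ∂ν) * ∫⁻ z', K2 z' ∂ν := step5
    _ ≤ ((∫⁻ z, F4 z ^ (2:ℝ) ∂ν) ^ ((1:ℝ)/2) * (∫⁻ z, G4 z ^ (2:ℝ) ∂ν) ^ ((1:ℝ)/2)) *
          ∫⁻ z', K2 z' ∂ν := mul_le_mul_left step6 _
    _ = (∫⁻ z, (∫⁻ xy, f xy z ^ (4:ℝ) ∂μ) ^ ((1:ℝ)/2) ∂ν) ^ ((1:ℝ)/2) *
          (∫⁻ z, (∫⁻ xy, g xy z ^ (4:ℝ) ∂μ) ^ ((1:ℝ)/2) ∂ν) ^ ((1:ℝ)/2) *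
          (∫⁻ z, (∫⁻ xy, k xy z ^ (2:ℝ) ∂μ) ^ ((1:ℝ)/2) ∂ν) := by
        simp_rw [e24, e24']
        rfl

end Statement2Aux

/-- For any measurable functions `φ, ϕ, ψ` on `Ω = M × (-h,h)` such that the
right-hand side is finite, one has
`∫_M (∫_{-h}^h |φ||ϕ| dz)(∫_{-h}^h |ψ| dz) dxdy
  ≤ (∫_{-h}^h ‖φ(·,z)‖_{L⁴(M)}² dz)^{1/2} (∫_{-h}^h ‖ϕ(·,z)‖_{L⁴(M)}² dz)^{1/2}
    (∫_{-h}^h ‖ψ(·,z)‖_{L²(M)} dz)`. -/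
theorem statement2 (h : ℝ) (hh : 0 < h) (φ ϕ ψ : (ℝ × ℝ) → ℝ → ℝ)
    (hφm : Measurable (fun q : (ℝ × ℝ) × ℝ => φ q.1 q.2))
    (hϕm : Measurable (fun q : (ℝ × ℝ) × ℝ => ϕ q.1 q.2))
    (hψm : Measurable (fun q : (ℝ × ℝ) × ℝ => ψ q.1 q.2))
    (hφ4 : ∀ᵐ z ∂(volume.restrict (Set.Ioo (-h) h)),
      IntegrableOn (fun xy => |φ xy z| ^ 4) Msq)
    (hϕ4 : ∀ᵐ z ∂(volume.restrict (Set.Ioo (-h) h)),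
      IntegrableOn (fun xy => |ϕ xy z| ^ 4) Msq)
    (hψ2 : ∀ᵐ z ∂(volume.restrict (Set.Ioo (-h) h)),
      IntegrableOn (fun xy => (ψ xy z) ^ 2) Msq)
    (hφz : IntegrableOn (fun z => (normL4M (fun xy => φ xy z)) ^ 2) (Set.Ioo (-h) h))
    (hϕz : IntegrableOn (fun z => (normL4M (fun xy => ϕ xy z)) ^ 2) (Set.Ioo (-h) h))
    (hψz : IntegrableOn (fun z => normL2M (fun xy => ψ xy z)) (Set.Ioo (-h) h)) :
    (∫ xy in Msq,
        (∫ z in Set.Ioo (-h) h, |φ xy z| * |ϕ xy z|) * (∫ z in Set.Ioo (-h) h, |ψ xy z|))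
      ≤ ((∫ z in Set.Ioo (-h) h, (normL4M (fun xy => φ xy z)) ^ 2) ^ ((1:ℝ)/2)) *
          ((∫ z in Set.Ioo (-h) h, (normL4M (fun xy => ϕ xy z)) ^ 2) ^ ((1:ℝ)/2)) *
          (∫ z in Set.Ioo (-h) h, normL2M (fun xy => ψ xy z)) := by
  have mf : Measurable fun q : (ℝ × ℝ) × ℝ => ENNReal.ofReal |φ q.1 q.2| :=
    hφm.abs.ennreal_ofReal
  have mg : Measurable fun q : (ℝ × ℝ) × ℝ => ENNReal.ofReal |ϕ q.1 q.2| :=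
    hϕm.abs.ennreal_ofReal
  have mk : Measurable fun q : (ℝ × ℝ) × ℝ => ENNReal.ofReal |ψ q.1 q.2| :=
    hψm.abs.ennreal_ofReal
  have key' := Statement2Aux.key (μ := volume.restrict Msq)
    (ν := volume.restrict (Set.Ioo (-h) h))
    (fun xy z => ENNReal.ofReal |φ xy z|) (fun xy z => ENNReal.ofReal |ϕ xy z|)
    (fun xy z => ENNReal.ofReal |ψ xy z|) mf mg mk
  -- lower bound: the real LHS is dominated by the lintegral
  have hL : ENNReal.ofReal (∫ xy in Msq,
        (∫ z in Set.Ioo (-h) h, |φ xy z| * |ϕ xy z|) * (∫ z in Set.Ioo (-h) h, |ψ xy z|))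
      ≤ ∫⁻ xy in Msq,
          (∫⁻ z in Set.Ioo (-h) h, ENNReal.ofReal |φ xy z| * ENNReal.ofReal |ϕ xy z|) *
            (∫⁻ z in Set.Ioo (-h) h, ENNReal.ofReal |ψ xy z|) := by
    refine le_trans (Statement2Aux.ofReal_integral_le (Filter.Eventually.of_forall fun xy =>
      mul_nonneg (integral_nonneg fun z => mul_nonneg (abs_nonneg _) (abs_nonneg _))
        (integral_nonneg fun z => abs_nonneg _))) ?_
    refine lintegral_mono fun xy => ?_
    rw [ENNReal.ofReal_mul (integral_nonneg fun z => mul_nonneg (abs_nonneg _) (abs_nonneg _))]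
    refine mul_le_mul' ?_ ?_
    · refine le_trans (Statement2Aux.ofReal_integral_le (Filter.Eventually.of_forall fun z =>
        mul_nonneg (abs_nonneg _) (abs_nonneg _))) ?_
      refine lintegral_mono fun z => ?_
      rw [ENNReal.ofReal_mul (abs_nonneg _)]
    · exact Statement2Aux.ofReal_integral_le (Filter.Eventually.of_forall fun z => abs_nonneg _)
  -- conversions of the three factors
  have cφ : (∫⁻ z in Set.Ioo (-h) h,
        (∫⁻ xy in Msq, ENNReal.ofReal |φ xy z| ^ (4:ℝ)) ^ ((1:ℝ)/2))
      = ENNReal.ofReal (∫ z in Set.Ioo (-h) h, (normL4M (fun xy => φ xy z)) ^ 2) := by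
    rw [MeasureTheory.ofReal_integral_eq_lintegral_ofReal hφz
      (Filter.Eventually.of_forall fun z => sq_nonneg _)]
    refine lintegral_congr_ae ?_
    filter_upwards [hφ4] with z hz
    have h1 : ∫⁻ xy in Msq, ENNReal.ofReal |φ xy z| ^ (4:ℝ)
        = ENNReal.ofReal (∫ xy in Msq, |φ xy z| ^ 4) := by
      rw [MeasureTheory.ofReal_integral_eq_lintegral_ofReal hz
        (Filter.Eventually.of_forall fun xy => by positivity)]
      refine lintegral_congr fun xy => ?_
      rw [ENNReal.ofReal_rpow_of_nonneg (abs_nonneg _) (by norm_num)]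
      congr 1
      rw [show (4:ℝ) = ((4:ℕ):ℝ) by norm_num, Real.rpow_natCast]
    rw [h1, ENNReal.ofReal_rpow_of_nonneg (integral_nonneg fun xy => by positivity)
      (by norm_num)]
    congr 1
    rw [normL4M, ← Real.rpow_natCast ((∫ xy in Msq, |φ xy z| ^ 4) ^ ((1:ℝ)/4)) 2,
      ← Real.rpow_mul (integral_nonneg fun xy => by positivity)]
    norm_num
  have cϕ : (∫⁻ z in Set.Ioo (-h) h,
        (∫⁻ xy in Msq, ENNReal.ofReal |ϕ xy z| ^ (4:ℝ)) ^ ((1:ℝ)/2))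
      = ENNReal.ofReal (∫ z in Set.Ioo (-h) h, (normL4M (fun xy => ϕ xy z)) ^ 2) := by
    rw [MeasureTheory.ofReal_integral_eq_lintegral_ofReal hϕz
      (Filter.Eventually.of_forall fun z => sq_nonneg _)]
    refine lintegral_congr_ae ?_
    filter_upwards [hϕ4] with z hz
    have h1 : ∫⁻ xy in Msq, ENNReal.ofReal |ϕ xy z| ^ (4:ℝ)
        = ENNReal.ofReal (∫ xy in Msq, |ϕ xy z| ^ 4) := by
      rw [MeasureTheory.ofReal_integral_eq_lintegral_ofReal hz
        (Filter.Eventually.of_forall fun xy => by positivity)]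
      refine lintegral_congr fun xy => ?_
      rw [ENNReal.ofReal_rpow_of_nonneg (abs_nonneg _) (by norm_num)]
      congr 1
      rw [show (4:ℝ) = ((4:ℕ):ℝ) by norm_num, Real.rpow_natCast]
    rw [h1, ENNReal.ofReal_rpow_of_nonneg (integral_nonneg fun xy => by positivity)
      (by norm_num)]
    congr 1
    rw [normL4M, ← Real.rpow_natCast ((∫ xy in Msq, |ϕ xy z| ^ 4) ^ ((1:ℝ)/4)) 2,
      ← Real.rpow_mul (integral_nonneg fun xy => by positivity)]
    norm_num
  have cψ : (∫⁻ z in Set.Ioo (-h) h,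
        (∫⁻ xy in Msq, ENNReal.ofReal |ψ xy z| ^ (2:ℝ)) ^ ((1:ℝ)/2))
      = ENNReal.ofReal (∫ z in Set.Ioo (-h) h, normL2M (fun xy => ψ xy z)) := by
    rw [MeasureTheory.ofReal_integral_eq_lintegral_ofReal hψz
      (Filter.Eventually.of_forall fun z => Real.sqrt_nonneg _)]
    refine lintegral_congr_ae ?_
    filter_upwards [hψ2] with z hz
    have h1 : ∫⁻ xy in Msq, ENNReal.ofReal |ψ xy z| ^ (2:ℝ)
        = ENNReal.ofReal (∫ xy in Msq, (ψ xy z) ^ 2) := by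
      rw [MeasureTheory.ofReal_integral_eq_lintegral_ofReal hz
        (Filter.Eventually.of_forall fun xy => sq_nonneg _)]
      refine lintegral_congr fun xy => ?_
      rw [ENNReal.ofReal_rpow_of_nonneg (abs_nonneg _) (by norm_num)]
      congr 1
      rw [show (2:ℝ) = ((2:ℕ):ℝ) by norm_num, Real.rpow_natCast, sq_abs]
    rw [h1, ENNReal.ofReal_rpow_of_nonneg (integral_nonneg fun xy => sq_nonneg _)
      (by norm_num)]
    congr 1
    rw [normL2M, Real.sqrt_eq_rpow]
  have hRφ0 : 0 ≤ ∫ z in Set.Ioo (-h) h, (normL4M (fun xy => φ xy z)) ^ 2 :=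
    integral_nonneg fun z => sq_nonneg _
  have hRϕ0 : 0 ≤ ∫ z in Set.Ioo (-h) h, (normL4M (fun xy => ϕ xy z)) ^ 2 :=
    integral_nonneg fun z => sq_nonneg _
  have hRψ0 : 0 ≤ ∫ z in Set.Ioo (-h) h, normL2M (fun xy => ψ xy z) :=
    integral_nonneg fun z => Real.sqrt_nonneg _
  have final : ENNReal.ofReal (∫ xy in Msq,
        (∫ z in Set.Ioo (-h) h, |φ xy z| * |ϕ xy z|) * (∫ z in Set.Ioo (-h) h, |ψ xy z|))
      ≤ ENNReal.ofReal
          (((∫ z in Set.Ioo (-h) h, (normL4M (fun xy => φ xy z)) ^ 2) ^ ((1:ℝ)/2)) *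
            ((∫ z in Set.Ioo (-h) h, (normL4M (fun xy => ϕ xy z)) ^ 2) ^ ((1:ℝ)/2)) *
            (∫ z in Set.Ioo (-h) h, normL2M (fun xy => ψ xy z))) := by
    refine hL.trans (key'.trans_eq ?_)
    rw [cφ, cϕ, cψ, ENNReal.ofReal_rpow_of_nonneg hRφ0 (by norm_num),
      ENNReal.ofReal_rpow_of_nonneg hRϕ0 (by norm_num),
      ← ENNReal.ofReal_mul (Real.rpow_nonneg hRφ0 _),
      ← ENNReal.ofReal_mul (mul_nonneg (Real.rpow_nonneg hRφ0 _) (Real.rpow_nonneg hRϕ0 _))]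
  exact (ENNReal.ofReal_le_ofReal_iff
    (mul_nonneg (mul_nonneg (Real.rpow_nonneg hRφ0 _) (Real.rpow_nonneg hRϕ0 _)) hRψ0)).mp final
end
end

section
/- Let 0 < T < ∞, and let A, B be nonnegative measurable functions on (0,T), with A absolutely continuous on (0,T) and continuous on [0,T), satisfying A'(t) + B(t) ≤ n(t) A(t) log(A(t)+B(t)+e) a.e. on (0,T), where n is a nonnegative function in L¹((0,T)). If in addition there exist positive constants K and α such that n(t) ≤ K(A(t)+1)^α for all t ∈ (0,T), then sup_{0≤t<T} A(t) < ∞ and ∫₀^T B(s) ds < ∞, with a bound depending only on A(0), K, α, T, and ∫₀^T n(s) ds. -/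
open MeasureTheory Set

noncomputable section



set_option maxHeartbeats 2000000

lemma s7_ptwise {K α a b nn d : ℝ} (hK : 0 < K) (hα : 0 < α) (ha : 0 ≤ a) (hb : 0 ≤ b)
    (hn : 0 ≤ nn) (hbound : nn ≤ K * (a + 1) ^ α)
    (hd : d + b ≤ nn * a * Real.log (a + b + Real.exp 1)) :
    d + b / 2 ≤ ((1 + (Real.log (2 * K + Real.exp 1) + (α + 1))) * nn) *
      ((a + Real.exp 1) * Real.log (a + Real.exp 1)) := by
  set E := Real.exp 1 with hE
  have hE2 : 2 ≤ E := by
    have := Real.add_one_le_exp 1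
    linarith
  have haE : (0:ℝ) < a + E := by linarith
  have hbE : (0:ℝ) < b + E := by linarith
  have hlogaE1 : 1 ≤ Real.log (a + E) := by
    calc (1:ℝ) = Real.log E := (Real.log_exp 1).symm
    _ ≤ Real.log (a + E) := Real.log_le_log (Real.exp_pos 1) (by linarith)
  have hlogaE0 : 0 ≤ Real.log (a + E) := by linarith
  set m := nn * a with hm
  have hm0 : 0 ≤ m := mul_nonneg hn ha
  -- step 1
  have s1 : Real.log (a + b + E) ≤ Real.log (a + E) + Real.log (b + E) := by
    have h1 : a + b + E ≤ (a + E) * (b + E) := by nlinarith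
    calc Real.log (a + b + E) ≤ Real.log ((a + E) * (b + E)) :=
          Real.log_le_log (by linarith) h1
    _ = Real.log (a + E) + Real.log (b + E) := Real.log_mul (ne_of_gt haE) (ne_of_gt hbE)
  -- step 2
  have s2 : m * Real.log (b + E) ≤ b / 2 + m * Real.log (2 * m + E) := by
    rcases le_or_gt b (2 * m) with hcase | hcase
    · have : Real.log (b + E) ≤ Real.log (2 * m + E) :=
        Real.log_le_log hbE (by linarith)
      nlinarith
    · have hlog : Real.log (b + E) - Real.log (2 * m + E) ≤ (b + E) / (2 * m + E) - 1 := by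
        rw [← Real.log_div (ne_of_gt hbE) (by positivity)]
        exact Real.log_le_sub_one_of_pos (by positivity)
      have h2mE : (0:ℝ) < 2 * m + E := by linarith
      have key : m * ((b + E) / (2 * m + E) - 1) ≤ b / 2 := by
        rw [div_sub_one (ne_of_gt h2mE), ← mul_div_assoc]
        rw [div_le_div_iff₀ h2mE (by norm_num : (0:ℝ) < 2)]
        nlinarith
      nlinarith [mul_le_mul_of_nonneg_left hlog hm0]
  -- step 3
  have s3 : Real.log (2 * m + E) ≤ (Real.log (2 * K + E) + (α + 1)) * Real.log (a + E) := by
    have ha1 : (0:ℝ) < a + 1 := by linarith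
    have hr1 : (a + 1) ^ α * (a + 1) = (a + 1) ^ (α + 1) := by
      rw [Real.rpow_add_one (ne_of_gt ha1)]
    have hr2 : 1 ≤ (a + 1) ^ (α + 1) := Real.one_le_rpow (by linarith) (by linarith)
    have hma : m ≤ K * (a + 1) ^ (α + 1) := by
      calc m = nn * a := rfl
      _ ≤ (K * (a + 1) ^ α) * a := by
          apply mul_le_mul_of_nonneg_right hbound ha
      _ ≤ (K * (a + 1) ^ α) * (a + 1) := by
          have : (0:ℝ) ≤ K * (a + 1) ^ α := by positivity
          nlinarith
      _ = K * (a + 1) ^ (α + 1) := by rw [mul_assoc, hr1]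
    have h1 : 2 * m + E ≤ (2 * K + E) * (a + 1) ^ (α + 1) := by nlinarith
    have hlog1 : Real.log (2 * m + E) ≤ Real.log ((2 * K + E) * (a + 1) ^ (α + 1)) :=
      Real.log_le_log (by linarith) h1
    have hlog2 : Real.log ((2 * K + E) * (a + 1) ^ (α + 1))
        = Real.log (2 * K + E) + (α + 1) * Real.log (a + 1) := by
      rw [Real.log_mul (by positivity) (by positivity), Real.log_rpow ha1]
    have hlogK0 : 0 ≤ Real.log (2 * K + E) := Real.log_nonneg (by linarith)
    have hloga1 : Real.log (a + 1) ≤ Real.log (a + E) := Real.log_le_log ha1 (by linarith)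
    have hloga10 : 0 ≤ Real.log (a + 1) := Real.log_nonneg (by linarith)
    calc Real.log (2 * m + E) ≤ Real.log (2 * K + E) + (α + 1) * Real.log (a + 1) := by
          rw [← hlog2]; exact hlog1
    _ ≤ Real.log (2 * K + E) * Real.log (a + E) + (α + 1) * Real.log (a + E) := by
        nlinarith
    _ = (Real.log (2 * K + E) + (α + 1)) * Real.log (a + E) := by ring
  -- combine
  have c1 : d + b ≤ m * Real.log (a + E) + m * Real.log (b + E) := by
    calc d + b ≤ m * Real.log (a + b + E) := hd
    _ ≤ m * (Real.log (a + E) + Real.log (b + E)) := mul_le_mul_of_nonneg_left s1 hm0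
    _ = m * Real.log (a + E) + m * Real.log (b + E) := by ring
  have c2 : d + b / 2 ≤ m * Real.log (a + E) + m * Real.log (2 * m + E) := by linarith
  have c3 : m * Real.log (2 * m + E) ≤
      (Real.log (2 * K + E) + (α + 1)) * (m * Real.log (a + E)) := by
    calc m * Real.log (2 * m + E)
        ≤ m * ((Real.log (2 * K + E) + (α + 1)) * Real.log (a + E)) :=
          mul_le_mul_of_nonneg_left s3 hm0
    _ = (Real.log (2 * K + E) + (α + 1)) * (m * Real.log (a + E)) := by ring
  have c4 : m * Real.log (a + E) ≤ nn * ((a + E) * Real.log (a + E)) := by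
    rw [hm]
    have : nn * a ≤ nn * (a + E) := by nlinarith
    nlinarith
  have hc2nonneg : 0 ≤ Real.log (2 * K + E) + (α + 1) := by
    have : 0 ≤ Real.log (2 * K + E) := Real.log_nonneg (by linarith)
    linarith
  calc d + b / 2 ≤ (1 + (Real.log (2 * K + E) + (α + 1))) * (m * Real.log (a + E)) := by
        nlinarith
  _ ≤ (1 + (Real.log (2 * K + E) + (α + 1))) * (nn * ((a + E) * Real.log (a + E))) := by
      apply mul_le_mul_of_nonneg_left c4 (by linarith)
  _ = ((1 + (Real.log (2 * K + E) + (α + 1))) * nn) * ((a + E) * Real.log (a + E)) := by ring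

lemma s7_key (g : ℝ → ℝ) (hgi : Integrable g) (hg0 : ∀ x, 0 ≤ g x)
    (φ Ψ : ℝ → ℝ) (hφc : Continuous φ) (hφm : Monotone φ)
    (hconv : ∀ x y : ℝ, x ≤ y → φ x * (y - x) ≤ Ψ y - Ψ x)
    (b : ℝ) (hb : 0 ≤ b) :
    ∫ s in (0:ℝ)..b, g s * φ (∫ u in (0:ℝ)..s, g u) ≤ Ψ (∫ u in (0:ℝ)..b, g u) - Ψ 0 := by
  set H : ℝ → ℝ := fun t => ∫ u in (0:ℝ)..t, g u with hHdef
  have hHd : ∀ x y : ℝ, H y - H x = ∫ u in x..y, g u := fun x y =>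
    intervalIntegral.integral_interval_sub_left hgi.intervalIntegrable hgi.intervalIntegrable
  have hHm : Monotone H := by
    intro x y hxy
    have h0 : 0 ≤ ∫ u in x..y, g u :=
      intervalIntegral.integral_nonneg hxy fun u _ => hg0 u
    have := hHd x y
    linarith
  have hHc : Continuous H :=
    intervalIntegral.continuous_primitive (fun a b => hgi.intervalIntegrable) 0
  have hH0 : H 0 = 0 := intervalIntegral.integral_same
  have hII : ∀ a' b' : ℝ, IntervalIntegrable (fun s => g s * φ (H s)) volume a' b' := by
    intro a' b'
    obtain ⟨C, hC⟩ := (isCompact_uIcc (a := a') (b := b')).exists_bound_of_continuousOn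
      ((hφc.comp hHc).continuousOn)
    rw [intervalIntegrable_iff]
    have h1 : IntegrableOn (fun x => φ (H x) * g x) (Set.uIoc a' b') volume :=
      Integrable.bdd_mul (hgi.integrableOn) ((hφc.comp hHc).aestronglyMeasurable.restrict)
        ((ae_restrict_iff' measurableSet_uIoc).mpr
          (Filter.Eventually.of_forall fun x hx => hC x (uIoc_subset_uIcc hx)))
    exact h1.congr_fun (fun x _ => mul_comm _ _) measurableSet_uIoc
  have hpiece : ∀ a' b' : ℝ, a' ≤ b' →
      ∫ s in a'..b', g s * φ (H s) ≤ φ (H b') * (H b' - H a') := by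
    intro a' b' hab
    have h1 : ∫ s in a'..b', g s * φ (H s) ≤ ∫ s in a'..b', g s * φ (H b') := by
      apply intervalIntegral.integral_mono_on hab (hII a' b')
        (hgi.intervalIntegrable.mul_const _)
      intro x hx
      exact mul_le_mul_of_nonneg_left (hφm (hHm hx.2)) (hg0 x)
    rw [intervalIntegral.integral_mul_const] at h1
    rw [hHd a' b']
    linarith [h1, mul_comm (∫ s in a'..b', g s) (φ (H b'))]
  have hmain : ∀ (δ : ℝ), 0 < δ → ∀ m : ℕ, ∀ a' b' : ℝ, a' ≤ b' → H b' - H a' ≤ m * δ →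
      ∫ s in a'..b', g s * φ (H s) ≤ Ψ (H b') - Ψ (H a') + (φ (H b') - φ (H a')) * δ := by
    intro δ hδ m
    have hsmall : ∀ a' b' : ℝ, a' ≤ b' → H b' - H a' ≤ δ →
        ∫ s in a'..b', g s * φ (H s) ≤ Ψ (H b') - Ψ (H a') + (φ (H b') - φ (H a')) * δ := by
      intro a' b' hab hd
      have h1 := hpiece a' b' hab
      have h2 : φ (H a') * (H b' - H a') ≤ Ψ (H b') - Ψ (H a') := hconv _ _ (hHm hab)
      have h3 : 0 ≤ φ (H b') - φ (H a') := by linarith [hφm (hHm hab)]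
      have h4 : (φ (H b') - φ (H a')) * (H b' - H a') ≤ (φ (H b') - φ (H a')) * δ :=
        mul_le_mul_of_nonneg_left hd h3
      nlinarith
    induction m with
    | zero =>
      intro a' b' hab hm
      exact hsmall a' b' hab (by simpa using hm.trans (by norm_num [hδ.le] : (0:ℕ) * δ ≤ δ))
    | succ m ih =>
      intro a' b' hab hm
      rcases le_or_gt (H b' - H a') δ with hs | hbig
      · exact hsmall a' b' hab hs
      · have hmid : H a' ≤ H b' - δ := by linarith
        obtain ⟨c', hc'mem, hc'⟩ : ∃ c' ∈ Icc a' b', H c' = H b' - δ :=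
          intermediate_value_Icc hab hHc.continuousOn ⟨hmid, by linarith⟩
        have hsplit := intervalIntegral.integral_add_adjacent_intervals
          (hII a' c') (hII c' b')
        have hIH : ∫ s in a'..c', g s * φ (H s) ≤
            Ψ (H c') - Ψ (H a') + (φ (H c') - φ (H a')) * δ := by
          apply ih a' c' hc'mem.1
          rw [hc']
          push_cast at hm ⊢
          linarith
        have hp2 : ∫ s in c'..b', g s * φ (H s) ≤ φ (H b') * δ := by
          have := hpiece c' b' hc'mem.2
          rw [hc'] at this
          simpa using this
        have hc2 : φ (H c') * (H b' - H c') ≤ Ψ (H b') - Ψ (H c') :=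
          hconv _ _ (hHm hc'mem.2)
        have hδeq : H b' - H c' = δ := by rw [hc']; ring
        rw [hδeq] at hc2
        rw [← hsplit]
        linarith
  refine le_of_forall_pos_le_add ?_
  intro ε hε
  have hD0 : 0 ≤ φ (H b) - φ 0 := by
    have := hφm (hH0 ▸ hHm hb)
    linarith
  set δ := ε / (φ (H b) - φ 0 + 1) with hδdef
  have hδ : 0 < δ := div_pos hε (by linarith)
  obtain ⟨m, hm⟩ := exists_nat_ge ((H b - H 0) / δ)
  have hmδ : H b - H 0 ≤ m * δ := by
    rw [div_le_iff₀ hδ] at hm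
    linarith
  have hfin := hmain δ hδ m 0 b hb hmδ
  rw [hH0] at hfin
  have hlast : (φ (H b) - φ 0) * δ ≤ ε := by
    rw [hδdef, mul_div_assoc']
    rw [div_le_iff₀ (by linarith : (0:ℝ) < φ (H b) - φ 0 + 1)]
    nlinarith
  linarith

lemma s7_phideriv (lc : ℝ) (u : ℝ) :
    HasDerivAt (fun u => Real.exp (Real.exp u * lc))
      (Real.exp u * lc * Real.exp (Real.exp u * lc)) u := by
  have h1 : HasDerivAt (fun u : ℝ => Real.exp u * lc) (Real.exp u * lc) u :=
    (Real.hasDerivAt_exp u).mul_const lc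
  simpa [mul_comm] using h1.exp

lemma s7_phicont (lc : ℝ) :
    Continuous (fun u => Real.exp u * lc * Real.exp (Real.exp u * lc)) := by
  continuity

lemma s7_phimono {lc : ℝ} (hlc : 0 ≤ lc) :
    Monotone (fun u => Real.exp u * lc * Real.exp (Real.exp u * lc)) := by
  intro x y hxy
  have h1 : Real.exp x ≤ Real.exp y := Real.exp_le_exp.mpr hxy
  have h2 : Real.exp (Real.exp x * lc) ≤ Real.exp (Real.exp y * lc) :=
    Real.exp_le_exp.mpr (mul_le_mul_of_nonneg_right h1 hlc)
  have h3 : 0 ≤ Real.exp x * lc := mul_nonneg (Real.exp_pos x).le hlc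
  have h4 : Real.exp x * lc ≤ Real.exp y * lc := mul_le_mul_of_nonneg_right h1 hlc
  exact mul_le_mul h4 h2 (Real.exp_pos _).le (mul_nonneg (Real.exp_pos y).le hlc)

lemma s7_conv {lc : ℝ} (hlc : 0 ≤ lc) (x y : ℝ) (hxy : x ≤ y) :
    (Real.exp x * lc * Real.exp (Real.exp x * lc)) * (y - x) ≤
      Real.exp (Real.exp y * lc) - Real.exp (Real.exp x * lc) := by
  have hint : ∀ t ∈ uIcc x y, HasDerivAt (fun u => Real.exp (Real.exp u * lc))
      (Real.exp t * lc * Real.exp (Real.exp t * lc)) t := fun t _ => s7_phideriv lc t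
  have hII : IntervalIntegrable (fun t => Real.exp t * lc * Real.exp (Real.exp t * lc))
      volume x y := (s7_phicont lc).intervalIntegrable x y
  have heq := intervalIntegral.integral_eq_sub_of_hasDerivAt hint hII
  rw [← heq]
  have hmono : ∫ t in x..y, (Real.exp x * lc * Real.exp (Real.exp x * lc)) ≤
      ∫ t in x..y, Real.exp t * lc * Real.exp (Real.exp t * lc) := by
    apply intervalIntegral.integral_mono_on hxy intervalIntegrable_const hII
    intro t ht
    exact s7_phimono hlc ht.1
  rw [intervalIntegral.integral_const] at hmono
  rw [smul_eq_mul] at hmono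
  linarith [hmono, mul_comm (y - x) (Real.exp x * lc * Real.exp (Real.exp x * lc))]

lemma s7_II {g φ H : ℝ → ℝ} (hgi : Integrable g) (hφc : Continuous φ)
    (hHc : Continuous H) (a' b' : ℝ) :
    IntervalIntegrable (fun s => g s * φ (H s)) volume a' b' := by
  obtain ⟨C, hC⟩ := (isCompact_uIcc (a := a') (b := b')).exists_bound_of_continuousOn
    ((hφc.comp hHc).continuousOn)
  rw [intervalIntegrable_iff]
  have h1 : IntegrableOn (fun x => φ (H x) * g x) (Set.uIoc a' b') volume :=
    Integrable.bdd_mul (hgi.integrableOn) ((hφc.comp hHc).aestronglyMeasurable.restrict)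
      ((ae_restrict_iff' measurableSet_uIoc).mpr
        (Filter.Eventually.of_forall fun x hx => hC x (uIoc_subset_uIcc hx)))
  exact h1.congr_fun (fun x _ => mul_comm _ _) measurableSet_uIoc

/-- Let `0 < T < ∞`, and let `A, B` be nonnegative measurable functions on
`(0,T)`, with `A` absolutely continuous on `(0,T)` (encoded by the a.e. derivative `A'`
and the fundamental theorem of calculus representation) and continuous on `[0,T)`, satisfying
`A' + B ≤ n A log(A+B+e)` a.e. on `(0,T)`, where `n ≥ 0` belongs to `L¹((0,T))`. If in
addition `n(t) ≤ K(A(t)+1)^α` on `(0,T)` for positive constants `K, α`, then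
`sup_{0 ≤ t < T} A(t) < ∞` and `∫₀ᵀ B < ∞`, with a bound `Φ` depending only on `A(0)`, `K`,
`α`, `T`, and `∫₀ᵀ n`. -/
theorem statement7 :
    ∃ Φ : ℝ → ℝ → ℝ → ℝ → ℝ → ℝ,
      ∀ (T K α : ℝ) (A B A' n : ℝ → ℝ),
        0 < T → 0 < K → 0 < α →
        Measurable A → Measurable B →
        (∀ t ∈ Set.Ioo 0 T, 0 ≤ A t) → (∀ t ∈ Set.Ioo 0 T, 0 ≤ B t) →
        (∀ t ∈ Set.Ioo 0 T, 0 ≤ n t) →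
        IntegrableOn n (Set.Ioo 0 T) →
        ContinuousOn A (Set.Ico 0 T) →
        (∀ t ∈ Set.Ioo 0 T, IntervalIntegrable A' volume 0 t) →
        (∀ t ∈ Set.Ico 0 T, A t = A 0 + ∫ s in (0:ℝ)..t, A' s) →
        (∀ᵐ t ∂(volume.restrict (Set.Ioo 0 T)), HasDerivAt A (A' t) t) →
        (∀ᵐ t ∂(volume.restrict (Set.Ioo 0 T)),
          A' t + B t ≤ n t * A t * Real.log (A t + B t + Real.exp 1)) →
        (∀ t ∈ Set.Ioo 0 T, n t ≤ K * (A t + 1) ^ α) →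
        (∀ t ∈ Set.Ico 0 T, A t ≤ Φ (A 0) K α T (∫ s in Set.Ioo 0 T, n s)) ∧
          (∫ s in Set.Ioo 0 T, B s) ≤ Φ (A 0) K α T (∫ s in Set.Ioo 0 T, n s) := by
  
  refine ⟨fun a0 K α T N =>
    Real.exp (Real.exp ((1 + (Real.log (2 * K + Real.exp 1) + (α + 1))) * N) *
      Real.log (max a0 0 + Real.exp 1 + 1)) * 3 + 2 * max a0 0, ?_⟩
  intro T K α A B A' n hT hK hα hmA hmB hA0 hB0 hn0 hni hAc hA'i hFTC _hderiv hineq hnK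
  have hE2 : (2:ℝ) ≤ Real.exp 1 := by
    have := Real.add_one_le_exp 1; linarith
  set E1 := Real.exp 1 with hE1
  set c : ℝ := max (A 0) 0 + E1 + 1 with hcdef
  have hc1 : (1:ℝ) < c := by
    have : (0:ℝ) ≤ max (A 0) 0 := le_max_right _ _
    simp only [hcdef]; linarith
  have hcE : E1 ≤ c := by
    have : (0:ℝ) ≤ max (A 0) 0 := le_max_right _ _
    simp only [hcdef]; linarith
  set lc : ℝ := Real.log c with hlcdef
  have hlc1 : 1 ≤ lc := by
    rw [hlcdef, ← Real.log_exp 1]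
    exact Real.log_le_log (Real.exp_pos 1) hcE
  have hlc0 : 0 ≤ lc := by linarith
  set co : ℝ := 1 + (Real.log (2 * K + E1) + (α + 1)) with hcodef
  have hco0 : 0 ≤ co := by
    have h1 : 0 ≤ Real.log (2 * K + E1) := Real.log_nonneg (by linarith)
    simp only [hcodef]; linarith
  set N : ℝ := ∫ s in Ioo (0:ℝ) T, n s with hNdef
  set L : ℝ := co * N with hLdef
  set g : ℝ → ℝ := (Ioo (0:ℝ) T).indicator (fun t => co * n t) with hgdef
  set H : ℝ → ℝ := fun t => ∫ u in (0:ℝ)..t, g u with hHdef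
  set φ : ℝ → ℝ := fun u => Real.exp u * lc * Real.exp (Real.exp u * lc) with hφdef
  set Ψ : ℝ → ℝ := fun u => Real.exp (Real.exp u * lc) with hΨdef
  set P : ℝ := Real.exp (Real.exp L * lc) with hPdef
  have hP0 : 0 < P := Real.exp_pos _
  have hmax0 : (0:ℝ) ≤ max (A 0) 0 := le_max_right _ _
  have hA0max : A 0 ≤ max (A 0) 0 := le_max_left _ _
  -- basic facts on g, H
  have hg0 : ∀ x, 0 ≤ g x := by
    intro x
    apply Set.indicator_nonneg
    intro a ha
    exact mul_nonneg hco0 (hn0 a ha)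
  have hgi : Integrable g := by
    rw [hgdef, integrable_indicator_iff measurableSet_Ioo]
    exact hni.const_mul co
  have hHd : ∀ x y : ℝ, H y - H x = ∫ u in x..y, g u := fun x y =>
    intervalIntegral.integral_interval_sub_left hgi.intervalIntegrable hgi.intervalIntegrable
  have hHm : Monotone H := by
    intro x y hxy
    have h0 : 0 ≤ ∫ u in x..y, g u :=
      intervalIntegral.integral_nonneg hxy fun u _ => hg0 u
    have := hHd x y
    linarith
  have hHc : Continuous H :=
    intervalIntegral.continuous_primitive (fun a b => hgi.intervalIntegrable) 0
  have hH0 : H 0 = 0 := intervalIntegral.integral_same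
  have hHL : ∀ t : ℝ, 0 ≤ t → H t ≤ L := by
    intro t ht
    have h1 : H t = ∫ u in Ioc (0:ℝ) t, g u := by
      rw [hHdef]; exact intervalIntegral.integral_of_le ht
    have h2 : ∫ u in Ioc (0:ℝ) t, g u ≤ ∫ u, g u :=
      setIntegral_le_integral hgi (Filter.Eventually.of_forall hg0)
    have h3 : ∫ u, g u = ∫ u in Ioo (0:ℝ) T, co * n u := by
      rw [hgdef, MeasureTheory.integral_indicator measurableSet_Ioo]
    have h4 : ∫ u in Ioo (0:ℝ) T, co * n u = co * N := by
      rw [hNdef, MeasureTheory.integral_const_mul]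
    rw [h1, hLdef]; rw [h3, h4] at h2; exact h2
  have hφc : Continuous φ := s7_phicont lc
  have hφm : Monotone φ := s7_phimono hlc0
  have hconv : ∀ x y : ℝ, x ≤ y → φ x * (y - x) ≤ Ψ y - Ψ x := fun x y h =>
    s7_conv hlc0 x y h
  have hΨ0 : Ψ 0 = c := by
    rw [hΨdef]
    simp only [Real.exp_zero, one_mul]
    exact Real.exp_log (by linarith)
  -- a.e. differential inequality in reduced form
  have hae2 : ∀ᵐ s ∂(volume.restrict (Ioo (0:ℝ) T)),
      A' s + B s / 2 ≤ g s * ((A s + E1) * Real.log (A s + E1)) := by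
    filter_upwards [hineq, ae_restrict_mem measurableSet_Ioo] with s hs hsm
    rw [hgdef, Set.indicator_of_mem hsm]
    exact s7_ptwise hK hα (hA0 s hsm) (hB0 s hsm) (hn0 s hsm) (hnK s hsm) hs
  -- pointwise comparison lemma: if A s + E1 ≤ Ψ (H s) then the rhs is ≤ g s * φ (H s)
  have hcomp : ∀ s : ℝ, 0 ≤ A s → A s + E1 ≤ Ψ (H s) →
      g s * ((A s + E1) * Real.log (A s + E1)) ≤ g s * φ (H s) := by
    intro s hAs hAΨ
    apply mul_le_mul_of_nonneg_left _ (hg0 s)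
    have h1 : (1:ℝ) ≤ A s + E1 := by linarith
    have hΨval : φ (H s) = Ψ (H s) * Real.log (Ψ (H s)) := by
      rw [hφdef, hΨdef]
      simp only []
      rw [Real.log_exp]
      ring
    rw [hΨval]
    have hlog1 : Real.log (A s + E1) ≤ Real.log (Ψ (H s)) :=
      Real.log_le_log (by linarith) hAΨ
    have hlog0 : 0 ≤ Real.log (A s + E1) := Real.log_nonneg h1
    exact mul_le_mul hAΨ hlog1 hlog0 (by linarith)
  -- main bound via first crossing
  have hAbound : ∀ t ∈ Ico (0:ℝ) T, A t + E1 ≤ Ψ (H t) := by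
    by_contra hcon
    push_neg at hcon
    obtain ⟨u, humem, hu⟩ := hcon
    have huT : u < T := humem.2
    have hu0 : 0 ≤ u := humem.1
    set Q : Set ℝ := {t | t ∈ Icc 0 u ∧ Ψ (H t) ≤ A t + E1} with hQdef
    have hQne : u ∈ Q := ⟨⟨hu0, le_refl u⟩, hu.le⟩
    have hIccsub : Icc (0:ℝ) u ⊆ Ico 0 T := fun x hx => ⟨hx.1, lt_of_le_of_lt hx.2 huT⟩
    have hFc : ContinuousOn (fun t => A t + E1 - Ψ (H t)) (Icc 0 u) := by
      apply ContinuousOn.sub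
      · exact ((hAc.mono hIccsub).add continuousOn_const)
      · exact ((Real.continuous_exp.comp ((Real.continuous_exp.comp hHc).mul
          continuous_const)).continuousOn)
    have hQc : IsClosed Q := by
      have : Q = Icc 0 u ∩ (fun t => A t + E1 - Ψ (H t)) ⁻¹' (Ici 0) := by
        ext x
        simp only [hQdef, mem_setOf_eq, mem_inter_iff, mem_preimage, mem_Ici]
        constructor
        · rintro ⟨h1, h2⟩; exact ⟨h1, by linarith⟩
        · rintro ⟨h1, h2⟩; exact ⟨h1, by linarith⟩
      rw [this]
      exact hFc.preimage_isClosed_of_isClosed isClosed_Icc isClosed_Ici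
    have hQbdd : BddBelow Q := ⟨0, fun x hx => hx.1.1⟩
    set t₀ : ℝ := sInf Q with ht₀def
    have htQ : t₀ ∈ Q := hQc.csInf_mem ⟨u, hQne⟩ hQbdd
    have ht₀u : t₀ ≤ u := csInf_le hQbdd hQne
    have ht₀0 : 0 ≤ t₀ := htQ.1.1
    have ht₀T : t₀ < T := lt_of_le_of_lt ht₀u huT
    have ht₀pos : 0 < t₀ := by
      rcases lt_or_eq_of_le ht₀0 with h | h
      · exact h
      · exfalso
        have h2 := htQ.2
        rw [← h, hH0, hΨ0] at h2
        simp only [hcdef] at h2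
        linarith
    have hbefore : ∀ s ∈ Ico (0:ℝ) t₀, A s + E1 < Ψ (H s) := by
      intro s hs
      by_contra hns
      push_neg at hns
      have hsQ : s ∈ Q := ⟨⟨hs.1, le_trans hs.2.le ht₀u⟩, hns⟩
      have := csInf_le hQbdd hsQ
      rw [← ht₀def] at this
      linarith [hs.2]
    -- integral comparison on [0, t₀]
    have haeIcc : A' ≤ᵐ[volume.restrict (Icc (0:ℝ) t₀)] fun s => g s * φ (H s) := by
      rw [← Measure.restrict_congr_set Ioo_ae_eq_Icc]
      have hsub : Ioo (0:ℝ) t₀ ⊆ Ioo 0 T := Ioo_subset_Ioo le_rfl ht₀T.le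
      filter_upwards [ae_restrict_of_ae_restrict_of_subset hsub hae2,
        ae_restrict_mem measurableSet_Ioo] with s hs1 hs2
      have hsT : s ∈ Ioo (0:ℝ) T := hsub hs2
      have hB2 : 0 ≤ B s / 2 := by linarith [hB0 s hsT]
      have hcs := hcomp s (hA0 s hsT)
        (hbefore s ⟨hs2.1.le, hs2.2⟩).le
      linarith
    have hmono2 : ∫ s in (0:ℝ)..t₀, A' s ≤ ∫ s in (0:ℝ)..t₀, g s * φ (H s) :=
      intervalIntegral.integral_mono_ae_restrict ht₀0
        (hA'i t₀ ⟨ht₀pos, ht₀T⟩) (s7_II hgi hφc hHc 0 t₀) haeIcc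
    have hkey := s7_key g hgi hg0 φ Ψ hφc hφm hconv t₀ ht₀0
    have hAt : A t₀ = A 0 + ∫ s in (0:ℝ)..t₀, A' s := hFTC t₀ ⟨ht₀0, ht₀T⟩
    have hcross : Ψ (H t₀) ≤ A t₀ + E1 := htQ.2
    rw [hΨ0] at hkey
    simp only [hcdef] at hkey hcross hAt
    -- hkey : ∫ gφH ≤ Ψ (H t₀) - (max (A 0) 0 + E1 + 1)
    have : A t₀ + E1 ≤ Ψ (H t₀) - 1 + (A 0 - max (A 0) 0) := by
      rw [hAt]
      have := le_trans hmono2 hkey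
      linarith
    linarith
  -- conclusion part 1
  have hfinal1 : ∀ t ∈ Ico (0:ℝ) T, A t ≤ P * 3 + 2 * max (A 0) 0 := by
    intro t ht
    have h1 := hAbound t ht
    have h2 : Ψ (H t) ≤ P := by
      rw [hΨdef, hPdef]
      apply Real.exp_le_exp.mpr
      exact mul_le_mul_of_nonneg_right (Real.exp_le_exp.mpr (hHL t ht.1)) hlc0
    have hEpos : 0 < E1 := Real.exp_pos 1
    linarith
  constructor
  · intro t ht
    exact hfinal1 t ht
  · -- part 2: bound on ∫ B
    by_cases hBint : IntegrableOn B (Ioo (0:ℝ) T)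
    · have hQbnd : ∀ t ∈ Ioo (0:ℝ) T, ∫ s in Ioc (0:ℝ) t, B s ≤ 2 * (P + max (A 0) 0) := by
        intro t ht
        have htT : t < T := ht.2
        have ht0 : 0 < t := ht.1
        have hBii : IntervalIntegrable B volume 0 t := by
          rw [intervalIntegrable_iff_integrableOn_Ioc_of_le ht0.le]
          exact hBint.mono_set (fun x hx => ⟨hx.1, lt_of_le_of_lt hx.2 htT⟩)
        have haeIcc2 : (fun s => B s / 2) ≤ᵐ[volume.restrict (Icc (0:ℝ) t)]
            fun s => g s * φ (H s) - A' s := by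
          rw [← Measure.restrict_congr_set Ioo_ae_eq_Icc]
          have hsub : Ioo (0:ℝ) t ⊆ Ioo 0 T := Ioo_subset_Ioo le_rfl htT.le
          filter_upwards [ae_restrict_of_ae_restrict_of_subset hsub hae2,
            ae_restrict_mem measurableSet_Ioo] with s hs1 hs2
          have hsT : s ∈ Ioo (0:ℝ) T := hsub hs2
          have hcs := hcomp s (hA0 s hsT) (hAbound s ⟨hsT.1.le, hsT.2⟩)
          linarith
        have hmono3 : ∫ s in (0:ℝ)..t, B s / 2 ≤
            ∫ s in (0:ℝ)..t, (g s * φ (H s) - A' s) :=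
          intervalIntegral.integral_mono_ae_restrict ht0.le (hBii.div_const 2)
            ((s7_II hgi hφc hHc 0 t).sub (hA'i t ht)) haeIcc2
        have hsub2 : ∫ s in (0:ℝ)..t, (g s * φ (H s) - A' s) =
            (∫ s in (0:ℝ)..t, g s * φ (H s)) - ∫ s in (0:ℝ)..t, A' s :=
          intervalIntegral.integral_sub (s7_II hgi hφc hHc 0 t) (hA'i t ht)
        have hkey := s7_key g hgi hg0 φ Ψ hφc hφm hconv t ht0.le
        have hAt : A t = A 0 + ∫ s in (0:ℝ)..t, A' s := hFTC t ⟨ht0.le, htT⟩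
        have hΨP : Ψ (H t) ≤ P := by
          rw [hΨdef, hPdef]
          apply Real.exp_le_exp.mpr
          exact mul_le_mul_of_nonneg_right (Real.exp_le_exp.mpr (hHL t ht0.le)) hlc0
        have hAtpos : 0 ≤ A t := hA0 t ht
        have hdiv : ∫ s in (0:ℝ)..t, B s / 2 = (∫ s in (0:ℝ)..t, B s) / 2 :=
          intervalIntegral.integral_div 2 B
        have hIoc : ∫ s in Ioc (0:ℝ) t, B s = ∫ s in (0:ℝ)..t, B s :=
          (intervalIntegral.integral_of_le ht0.le).symm
        rw [hΨ0] at hkey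
        have hc0 : (0:ℝ) < c := by linarith
        rw [hIoc]
        simp only [hcdef] at hkey
        linarith [hkey, hmono3, hsub2, hdiv, hAt]
      -- limit over t → T
      have hunion : (⋃ k : ℕ, Ioc (0:ℝ) (T - T / (k + 1))) = Ioo 0 T := by
        ext x
        simp only [mem_iUnion, mem_Ioc, mem_Ioo]
        constructor
        · rintro ⟨k, hk1, hk2⟩
          refine ⟨hk1, lt_of_le_of_lt hk2 ?_⟩
          have : 0 < T / (k + 1) := by positivity
          linarith
        · rintro ⟨hx1, hx2⟩
          have hTx : 0 < T - x := by linarith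
          obtain ⟨k, hk⟩ := exists_nat_ge (T / (T - x))
          refine ⟨k, hx1, ?_⟩
          have hk1 : T / (T - x) ≤ (k:ℝ) + 1 := by linarith
          have h2 : T ≤ (T - x) * ((k:ℝ) + 1) := by
            rw [div_le_iff₀ hTx] at hk1
            linarith
          have h3 : T / ((k:ℝ) + 1) ≤ T - x := by
            rw [div_le_iff₀ (by positivity : (0:ℝ) < (k:ℝ) + 1)]
            linarith
          linarith
      have hmonoset : Monotone (fun k : ℕ => Ioc (0:ℝ) (T - T / (k + 1))) := by
        intro k l hkl
        apply Ioc_subset_Ioc_right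
        have h1 : (k:ℝ) + 1 ≤ (l:ℝ) + 1 := by
          have : (k:ℝ) ≤ l := Nat.cast_le.mpr hkl
          linarith
        have := div_le_div_of_nonneg_left hT.le (by positivity : (0:ℝ) < (k:ℝ) + 1) h1
        linarith
      have htend := MeasureTheory.tendsto_setIntegral_of_monotone
        (fun k : ℕ => measurableSet_Ioc) hmonoset (by rw [hunion]; exact hBint)
        (f := B) (μ := volume)
      rw [hunion] at htend
      have hbnd : ∀ k : ℕ, ∫ s in Ioc (0:ℝ) (T - T / (k + 1)), B s ≤ 2 * (P + max (A 0) 0) := by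
        intro k
        by_cases hk : 0 < T - T / (k + 1)
        · apply hQbnd
          constructor
          · exact hk
          · have : 0 < T / ((k:ℝ) + 1) := by positivity
            linarith
        · push_neg at hk
          rw [Set.Ioc_eq_empty (by linarith : ¬ (0:ℝ) < T - T / (k + 1))]
          simp
          positivity
      have hle := le_of_tendsto htend (Filter.Eventually.of_forall hbnd)
      show (∫ s in Ioo (0:ℝ) T, B s) ≤ P * 3 + 2 * max (A 0) 0
      linarith
    · rw [MeasureTheory.integral_undef hBint]
      show (0:ℝ) ≤ P * 3 + 2 * max (A 0) 0
      linarith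
end
end

section
/- Let h > 0 and Ω = (0,1)²×(-h,h), and let T be a bounded function on Ω, twice continuously differentiable in the horizontal variables and periodic in x and y with period 1. Then ‖∇_H T‖_{L⁴(Ω)}² ≤ 3 ‖T‖_{L^∞(Ω)} ‖Δ_H T‖_{L²(Ω)}. -/
open MeasureTheory Set

noncomputable section

/-- Partial derivative in the first horizontal variable. -/
def pdx (f : ℝ × ℝ → ℝ) (p : ℝ × ℝ) : ℝ := deriv (fun x => f (x, p.2)) p.1

/-- Partial derivative in the second horizontal variable. -/
def pdy (f : ℝ × ℝ → ℝ) (p : ℝ × ℝ) : ℝ := deriv (fun y => f (p.1, y)) p.2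

/-- The horizontal Laplacian `Δ_H f = ∂_x² f + ∂_y² f`. -/
def lapH (f : ℝ × ℝ → ℝ) (p : ℝ × ℝ) : ℝ := pdx (pdx f) p + pdy (pdy f) p

/-- The `L^∞(Ω)` norm of `T`. -/
def normLinf (h : ℝ) (T : (ℝ × ℝ) → ℝ → ℝ) : ℝ :=
  (eLpNorm (fun p : (ℝ × ℝ) × ℝ => T p.1 p.2) ⊤ (volume.restrict (Omg h))).toReal

namespace S13
open Filter


lemma sliceX_contDiff {f : ℝ × ℝ → ℝ} {n : ℕ∞} (hf : ContDiff ℝ n f) (y : ℝ) :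
    ContDiff ℝ n (fun x : ℝ => f (x, y)) :=
  hf.comp (contDiff_id.prodMk contDiff_const)

lemma sliceY_contDiff {f : ℝ × ℝ → ℝ} {n : ℕ∞} (hf : ContDiff ℝ n f) (x : ℝ) :
    ContDiff ℝ n (fun y : ℝ => f (x, y)) :=
  hf.comp (contDiff_const.prodMk contDiff_id)

lemma hasDerivAt_sliceX {f : ℝ × ℝ → ℝ} (hf : Differentiable ℝ f) (a b : ℝ) :
    HasDerivAt (fun x => f (x, b)) (fderiv ℝ f (a, b) (1, 0)) a := by
  have h1 : HasDerivAt (fun x : ℝ => (x, b)) ((1:ℝ), (0:ℝ)) a :=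
    (hasDerivAt_id a).prodMk (hasDerivAt_const a b)
  exact ((hf (a, b)).hasFDerivAt).comp_hasDerivAt a h1

lemma hasDerivAt_sliceY {f : ℝ × ℝ → ℝ} (hf : Differentiable ℝ f) (a b : ℝ) :
    HasDerivAt (fun y => f (a, y)) (fderiv ℝ f (a, b) (0, 1)) b := by
  have h1 : HasDerivAt (fun y : ℝ => (a, y)) ((0:ℝ), (1:ℝ)) b :=
    (hasDerivAt_const b a).prodMk (hasDerivAt_id b)
  exact ((hf (a, b)).hasFDerivAt).comp_hasDerivAt b h1

lemma pdx_eq {f : ℝ × ℝ → ℝ} (hf : Differentiable ℝ f) (p : ℝ × ℝ) :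
    pdx f p = fderiv ℝ f p (1, 0) := by
  obtain ⟨a, b⟩ := p
  exact (hasDerivAt_sliceX hf a b).deriv

lemma pdy_eq {f : ℝ × ℝ → ℝ} (hf : Differentiable ℝ f) (p : ℝ × ℝ) :
    pdy f p = fderiv ℝ f p (0, 1) := by
  obtain ⟨a, b⟩ := p
  exact (hasDerivAt_sliceY hf a b).deriv

lemma hasDerivAt_pdx {f : ℝ × ℝ → ℝ} (hf : Differentiable ℝ f) (a b : ℝ) :
    HasDerivAt (fun x => f (x, b)) (pdx f (a, b)) a := by
  rw [pdx_eq hf]; exact hasDerivAt_sliceX hf a b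

lemma hasDerivAt_pdy {f : ℝ × ℝ → ℝ} (hf : Differentiable ℝ f) (a b : ℝ) :
    HasDerivAt (fun y => f (a, y)) (pdy f (a, b)) b := by
  rw [pdy_eq hf]; exact hasDerivAt_sliceY hf a b

lemma contDiff_pdx {f : ℝ × ℝ → ℝ} {n : ℕ∞} (hf : ContDiff ℝ (n + 1) f) :
    ContDiff ℝ n (pdx f) := by
  have hd : Differentiable ℝ f := hf.differentiable (by simp)
  have he : pdx f = fun p : ℝ × ℝ => fderiv ℝ f p (1, 0) := funext (pdx_eq hd)
  rw [he]
  exact (hf.fderiv_right le_rfl).clm_apply contDiff_const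

lemma contDiff_pdy {f : ℝ × ℝ → ℝ} {n : ℕ∞} (hf : ContDiff ℝ (n + 1) f) :
    ContDiff ℝ n (pdy f) := by
  have hd : Differentiable ℝ f := hf.differentiable (by simp)
  have he : pdy f = fun p : ℝ × ℝ => fderiv ℝ f p (0, 1) := funext (pdy_eq hd)
  rw [he]
  exact (hf.fderiv_right le_rfl).clm_apply contDiff_const

variable {f : ℝ × ℝ → ℝ}


lemma hf2' (hf : ContDiff ℝ 2 f) : ContDiff ℝ ((1:ℕ∞) + 1) f := by
  exact_mod_cast hf

lemma periodic_deriv (g : ℝ → ℝ) (hg : ∀ t, g (t + 1) = g t) (x : ℝ) :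
    deriv g (x + 1) = deriv g x := by
  have h1 : deriv (fun t => g (t + 1)) x = deriv g (x + 1) := deriv_comp_add_const g 1 x
  rw [← h1]
  congr 1
  exact funext hg

lemma fderiv_apply_hasFDerivAt (hf : ContDiff ℝ 2 f) (p : ℝ × ℝ) (w : ℝ × ℝ) :
    HasFDerivAt (fun q => fderiv ℝ f q w)
      ((ContinuousLinearMap.apply ℝ ℝ w).comp (fderiv ℝ (fderiv ℝ f) p)) p := by
  have h1 : ContDiff ℝ 1 (fderiv ℝ f) := hf.fderiv_right (by norm_num)
  have hΦ : HasFDerivAt (fderiv ℝ f) (fderiv ℝ (fderiv ℝ f) p) p :=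
    (h1.differentiable (by simp) p).hasFDerivAt
  exact ((ContinuousLinearMap.apply ℝ ℝ w).hasFDerivAt).comp p hΦ

lemma pdx_pdy_eq (hf : ContDiff ℝ 2 f) (p : ℝ × ℝ) :
    pdx (pdy f) p = fderiv ℝ (fderiv ℝ f) p (1, 0) (0, 1) := by
  have hd : Differentiable ℝ f := hf.differentiable (by simp)
  have hdy : Differentiable ℝ (pdy f) := (contDiff_pdy (hf2' hf)).differentiable (by simp)
  have he : pdy f = fun q => fderiv ℝ f q (0, 1) := funext (pdy_eq hd)
  rw [pdx_eq hdy, he, (fderiv_apply_hasFDerivAt hf p ((0:ℝ),(1:ℝ))).fderiv]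
  rfl

lemma pdy_pdx_eq (hf : ContDiff ℝ 2 f) (p : ℝ × ℝ) :
    pdy (pdx f) p = fderiv ℝ (fderiv ℝ f) p (0, 1) (1, 0) := by
  have hd : Differentiable ℝ f := hf.differentiable (by simp)
  have hdx : Differentiable ℝ (pdx f) := (contDiff_pdx (hf2' hf)).differentiable (by simp)
  have he : pdx f = fun q => fderiv ℝ f q (1, 0) := funext (pdx_eq hd)
  rw [pdy_eq hdx, he, (fderiv_apply_hasFDerivAt hf p ((1:ℝ),(0:ℝ))).fderiv]
  rfl

lemma clairaut (hf : ContDiff ℝ 2 f) (p : ℝ × ℝ) :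
    pdx (pdy f) p = pdy (pdx f) p := by
  have hd : Differentiable ℝ f := hf.differentiable (by simp)
  have h1 : ContDiff ℝ 1 (fderiv ℝ f) := hf.fderiv_right (by norm_num)
  rw [pdx_pdy_eq hf, pdy_pdx_eq hf]
  exact second_derivative_symmetric (fun y => (hd y).hasFDerivAt)
    ((h1.differentiable (by simp) p).hasFDerivAt) _ _

-- periodicity
lemma perx_pdx (hpx : ∀ x y, f (x + 1, y) = f (x, y)) (x y : ℝ) :
    pdx f (x + 1, y) = pdx f (x, y) := by
  exact periodic_deriv (fun t => f (t, y)) (fun t => hpx t y) x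

lemma pery_pdx (hpy : ∀ x y, f (x, y + 1) = f (x, y)) (x y : ℝ) :
    pdx f (x, y + 1) = pdx f (x, y) := by
  show deriv (fun t => f (t, y + 1)) x = deriv (fun t => f (t, y)) x
  congr 1
  exact funext fun t => hpy t y

lemma perx_pdy (hpx : ∀ x y, f (x + 1, y) = f (x, y)) (x y : ℝ) :
    pdy f (x + 1, y) = pdy f (x, y) := by
  show deriv (fun t => f (x + 1, t)) y = deriv (fun t => f (x, t)) y
  congr 1
  exact funext fun t => hpx x t

lemma pery_pdy (hpy : ∀ x y, f (x, y + 1) = f (x, y)) (x y : ℝ) :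
    pdy f (x, y + 1) = pdy f (x, y) := by
  exact periodic_deriv (fun t => f (x, t)) (fun t => hpy x t) y



/-- the sequence 1/(n+1) -/
def sN (n : ℕ) : ℝ := 1 / (n + 1)

lemma sN_pos (n : ℕ) : 0 < sN n := by
  rw [sN]; positivity

lemma sN_le_one (n : ℕ) : sN n ≤ 1 := by
  rw [sN, div_le_one (by positivity)]
  linarith [Nat.cast_nonneg (α := ℝ) n]

lemma sN_tendsto : Tendsto sN atTop (nhds 0) := by
  have h := tendsto_one_div_add_atTop_nhds_zero_nat (𝕜 := ℝ)
  have : sN = fun n : ℕ => 1 / ((n : ℝ) + 1) := rfl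
  rw [this]
  exact h

lemma contDiff_deriv1 (g : ℝ → ℝ) (hg : ContDiff ℝ 2 g) : ContDiff ℝ 1 (deriv g) := by
  have h : deriv g = fun x => fderiv ℝ g x 1 := funext fun x => fderiv_apply_one_eq_deriv.symm
  rw [h]; exact (hg.fderiv_right (by norm_num)).clm_apply contDiff_const

lemma dq_mvt (g : ℝ → ℝ) (hg : Differentiable ℝ g) {s : ℝ} (hs : 0 < s) (x : ℝ) :
    ∃ ξ ∈ Ioo x (x + s), (g (x + s) - g x) / s = deriv g ξ := by
  obtain ⟨c, hc, hceq⟩ := exists_hasDerivAt_eq_slope g (deriv g) (by linarith : x < x + s)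
    hg.continuous.continuousOn (fun t _ => (hg t).hasDerivAt)
  rw [add_sub_cancel_left] at hceq
  exact ⟨c, hc, hceq.symm⟩

lemma sdq_mvt (g : ℝ → ℝ) (hg : ContDiff ℝ 2 g) {s : ℝ} (hs : 0 < s) (x : ℝ) :
    ∃ η ∈ Ioo (x - s) (x + s),
      (g (x + s) + g (x - s) - 2 * g x) / s ^ 2 = deriv (deriv g) η := by
  have hd : Differentiable ℝ g := hg.differentiable (by simp)
  have hd1 : Differentiable ℝ (deriv g) := (contDiff_deriv1 g hg).differentiable (by simp)
  have hφd : ∀ t : ℝ, HasDerivAt (fun t => g (t + s) - g t) (deriv g (t + s) - deriv g t) t := by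
    intro t
    have h1 : HasDerivAt (fun t : ℝ => g (t + s)) (deriv g (t + s) * 1) t :=
      ((hd (t + s)).hasDerivAt).comp t ((hasDerivAt_id t).add_const s)
    have h2 := h1.sub ((hd t).hasDerivAt)
    rw [mul_one] at h2
    exact h2
  obtain ⟨ξ, hξ, hξeq⟩ := exists_hasDerivAt_eq_slope (fun t => g (t + s) - g t)
    (fun t => deriv g (t + s) - deriv g t) (by linarith : x - s < x)
    ((hd.continuous.comp (continuous_id.add continuous_const)).sub hd.continuous).continuousOn (fun t _ => hφd t)
  obtain ⟨η, hη, hηeq⟩ := exists_hasDerivAt_eq_slope (deriv g) (deriv (deriv g))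
    (by linarith : ξ < ξ + s) hd1.continuous.continuousOn (fun t _ => (hd1 t).hasDerivAt)
  refine ⟨η, ⟨by linarith [hξ.1, hη.1], by linarith [hξ.2, hη.2]⟩, ?_⟩
  rw [add_sub_cancel_left] at hηeq
  have hx : x - s + s = x := by ring
  rw [hx] at hξeq
  have hs' : (s : ℝ) ≠ 0 := ne_of_gt hs
  have hxs : x - (x - s) = s := by ring
  rw [hxs] at hξeq
  rw [hηeq, hξeq]
  field_simp
  ring

lemma tendsto_dq (g : ℝ → ℝ) (hg : Differentiable ℝ g) (x : ℝ) :
    Tendsto (fun n : ℕ => (g (x + sN n) - g x) / sN n) atTop (nhds (deriv g x)) := by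
  have h := (hg x).hasDerivAt
  rw [hasDerivAt_iff_tendsto_slope] at h
  have hseq : Tendsto (fun n : ℕ => x + sN n) atTop (nhdsWithin x {x}ᶜ) := by
    apply tendsto_nhdsWithin_of_tendsto_nhds_of_eventually_within
    · simpa using tendsto_const_nhds.add sN_tendsto
    · exact Eventually.of_forall fun n => by
        simp only [mem_compl_iff, mem_singleton_iff]
        have := sN_pos n; intro hcon; linarith [hcon ▸ (by linarith : x < x + sN n)]
  have := h.comp hseq
  convert this using 2 with n
  simp [Function.comp, slope_def_field]

lemma tendsto_sdq (g : ℝ → ℝ) (hg : ContDiff ℝ 2 g) (x : ℝ) :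
    Tendsto (fun n : ℕ => (g (x + sN n) + g (x - sN n) - 2 * g x) / sN n ^ 2) atTop
      (nhds (deriv (deriv g) x)) := by
  have hsel : ∀ n : ℕ, ∃ η ∈ Ioo (x - sN n) (x + sN n),
      (g (x + sN n) + g (x - sN n) - 2 * g x) / sN n ^ 2 = deriv (deriv g) η :=
    fun n => sdq_mvt g hg (sN_pos n) x
  choose η hη hηeq using hsel
  have hηt : Tendsto η atTop (nhds x) := by
    have h1 : Tendsto (fun n : ℕ => x - sN n) atTop (nhds x) := by
      simpa using tendsto_const_nhds.sub sN_tendsto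
    have h2 : Tendsto (fun n : ℕ => x + sN n) atTop (nhds x) := by
      simpa using tendsto_const_nhds.add sN_tendsto
    exact tendsto_of_tendsto_of_tendsto_of_le_of_le h1 h2
      (fun n => le_of_lt (hη n).1) (fun n => le_of_lt (hη n).2)
  have hcont : Continuous (deriv (deriv g)) :=
    (contDiff_deriv1 g hg).continuous_deriv le_rfl
  have := (hcont.continuousAt (x := x)).tendsto.comp hηt
  convert this using 2 with n
  exact hηeq n



lemma msq_subset_Icc : Msq ⊆ Icc ((0:ℝ),(0:ℝ)) ((1:ℝ),(1:ℝ)) := by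
  rintro ⟨x, y⟩ ⟨hx, hy⟩
  simp only [mem_Icc, Prod.mk_le_mk]
  exact ⟨⟨le_of_lt hx.1, le_of_lt hy.1⟩, ⟨le_of_lt hx.2, le_of_lt hy.2⟩⟩

lemma integrableOn_msq {F : ℝ × ℝ → ℝ} (hF : Continuous F) : IntegrableOn F Msq := by
  exact (hF.continuousOn.integrableOn_compact isCompact_Icc).mono_set msq_subset_Icc

lemma msq_vol_lt_top : volume Msq < ⊤ :=
  lt_of_le_of_lt (measure_mono msq_subset_Icc) (IsCompact.measure_lt_top isCompact_Icc)

instance finMsq : IsFiniteMeasure (volume.restrict Msq) := by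
  constructor
  rw [Measure.restrict_apply_univ]
  exact msq_vol_lt_top

lemma msq_restrict :
    (volume : Measure (ℝ × ℝ)).restrict Msq
      = ((volume.restrict (Ioo (0:ℝ) 1)).prod (volume.restrict (Ioo (0:ℝ) 1))) := by
  rw [Measure.prod_restrict, ← Measure.volume_eq_prod]
  rfl

lemma ioo_to_ii (g : ℝ → ℝ) : ∫ x in Ioo (0:ℝ) 1, g x = ∫ x in (0:ℝ)..1, g x := by
  rw [intervalIntegral.integral_of_le zero_le_one, integral_Ioc_eq_integral_Ioo]

lemma msq_eq_xy {F : ℝ × ℝ → ℝ} (hF : Continuous F) :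
    ∫ p in Msq, F p = ∫ x in (0:ℝ)..1, ∫ y in (0:ℝ)..1, F (x, y) := by
  have hInt : Integrable F ((volume.restrict (Ioo (0:ℝ) 1)).prod (volume.restrict (Ioo (0:ℝ) 1))) := by
    rw [← msq_restrict]; exact integrableOn_msq hF
  have h := MeasureTheory.integral_prod F hInt
  rw [show (∫ p in Msq, F p) = ∫ p, F p ∂((volume.restrict (Ioo (0:ℝ) 1)).prod
    (volume.restrict (Ioo (0:ℝ) 1))) from by rw [← msq_restrict], h]
  rw [← ioo_to_ii]
  refine setIntegral_congr_fun measurableSet_Ioo fun x _ => ?_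
  exact ioo_to_ii _

lemma msq_eq_yx {F : ℝ × ℝ → ℝ} (hF : Continuous F) :
    ∫ p in Msq, F p = ∫ y in (0:ℝ)..1, ∫ x in (0:ℝ)..1, F (x, y) := by
  have hInt : Integrable F ((volume.restrict (Ioo (0:ℝ) 1)).prod (volume.restrict (Ioo (0:ℝ) 1))) := by
    rw [← msq_restrict]; exact integrableOn_msq hF
  have h := MeasureTheory.integral_prod_symm F hInt
  rw [show (∫ p in Msq, F p) = ∫ p, F p ∂((volume.restrict (Ioo (0:ℝ) 1)).prod
    (volume.restrict (Ioo (0:ℝ) 1))) from by rw [← msq_restrict], h]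
  rw [← ioo_to_ii]
  refine setIntegral_congr_fun measurableSet_Ioo fun y _ => ?_
  exact ioo_to_ii _

/-- Cauchy-Schwarz for continuous functions on Msq. -/
lemma cs_msq {F G : ℝ × ℝ → ℝ} (hF : Continuous F) (hG : Continuous G) :
    ∫ p in Msq, |F p| * |G p|
      ≤ Real.sqrt (∫ p in Msq, F p ^ 2) * Real.sqrt (∫ p in Msq, G p ^ 2) := by
  have hpq : Real.HolderConjugate 2 2 := Real.HolderConjugate.two_two
  have hmF : MemLp F 2 (volume.restrict Msq) := by
    obtain ⟨C, hC⟩ := isCompact_Icc.exists_bound_of_continuousOn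
      (hF.continuousOn (s := Icc ((0:ℝ),(0:ℝ)) ((1:ℝ),(1:ℝ))))
    exact MemLp.of_bound (hF.aestronglyMeasurable.restrict) C
      ((ae_restrict_iff' (measurableSet_Ioo.prod measurableSet_Ioo)).2
        (Eventually.of_forall fun p hp => hC p (msq_subset_Icc hp)))
  have hmG : MemLp G 2 (volume.restrict Msq) := by
    obtain ⟨C, hC⟩ := isCompact_Icc.exists_bound_of_continuousOn
      (hG.continuousOn (s := Icc ((0:ℝ),(0:ℝ)) ((1:ℝ),(1:ℝ))))
    exact MemLp.of_bound (hG.aestronglyMeasurable.restrict) C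
      ((ae_restrict_iff' (measurableSet_Ioo.prod measurableSet_Ioo)).2
        (Eventually.of_forall fun p hp => hC p (msq_subset_Icc hp)))
  have h := integral_mul_norm_le_Lp_mul_Lq (μ := volume.restrict Msq) hpq
    (by rw [show ENNReal.ofReal 2 = 2 by norm_num]; exact hmF)
    (by rw [show ENNReal.ofReal 2 = 2 by norm_num]; exact hmG)
  have e1 : ∀ (H : ℝ × ℝ → ℝ), (∫ p in Msq, ‖H p‖ ^ (2:ℝ)) = ∫ p in Msq, H p ^ 2 := by
    intro H
    refine integral_congr_ae (Eventually.of_forall fun p => ?_)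
    show ‖H p‖ ^ (2:ℝ) = H p ^ 2
    rw [show ((2:ℝ)) = ((2:ℕ):ℝ) by norm_num, Real.rpow_natCast]
    simp [sq_abs]
  calc ∫ p in Msq, |F p| * |G p| = ∫ p in Msq, ‖F p‖ * ‖G p‖ := by simp [Real.norm_eq_abs]
    _ ≤ (∫ p in Msq, ‖F p‖ ^ (2:ℝ)) ^ ((1:ℝ)/2) * (∫ p in Msq, ‖G p‖ ^ (2:ℝ)) ^ ((1:ℝ)/2) := h
    _ = Real.sqrt (∫ p in Msq, F p ^ 2) * Real.sqrt (∫ p in Msq, G p ^ 2) := by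
        rw [e1 F, e1 G, Real.sqrt_eq_rpow, Real.sqrt_eq_rpow]


-- ## Periodic integration by parts and shift
lemma per_ibp {u w u' w' : ℝ → ℝ}
    (hu : ∀ x, HasDerivAt u (u' x) x) (hw : ∀ x, HasDerivAt w (w' x) x)
    (hu' : Continuous u') (hw' : Continuous w')
    (hbd : u 1 * w 1 = u 0 * w 0) :
    ∫ x in (0:ℝ)..1, u x * w' x = - ∫ x in (0:ℝ)..1, u' x * w x := by
  rw [intervalIntegral.integral_mul_deriv_eq_deriv_mul (fun x _ => hu x) (fun x _ => hw x)
    (hu'.intervalIntegrable 0 1) (hw'.intervalIntegrable 0 1), hbd]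
  ring

lemma per_shift (H : ℝ → ℝ) (hper : ∀ t, H (t + 1) = H t) (s : ℝ) :
    ∫ x in (0:ℝ)..1, H (x + s) = ∫ x in (0:ℝ)..1, H x := by
  rw [intervalIntegral.integral_comp_add_right H s]
  have hP : Function.Periodic H 1 := hper
  have h := hP.intervalIntegral_add_eq s 0
  simpa [zero_add, add_comm] using h

-- ## Difference quotients
def Dq (s : ℝ) (g : ℝ × ℝ → ℝ) : ℝ × ℝ → ℝ := fun p => (g (p.1 + s, p.2) - g p) / s

def Sq (s : ℝ) (g : ℝ × ℝ → ℝ) : ℝ × ℝ → ℝ :=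
  fun p => (g (p.1 + s, p.2) + g (p.1 - s, p.2) - 2 * g p) / s ^ 2

lemma cont_Dq {g : ℝ × ℝ → ℝ} (hg : Continuous g) (s : ℝ) : Continuous (Dq s g) := by
  apply Continuous.div_const
  exact (hg.comp ((continuous_fst.add continuous_const).prodMk continuous_snd)).sub hg

lemma cont_Sq {g : ℝ × ℝ → ℝ} (hg : Continuous g) (s : ℝ) : Continuous (Sq s g) := by
  apply Continuous.div_const
  exact ((hg.comp ((continuous_fst.add continuous_const).prodMk continuous_snd)).add
    (hg.comp ((continuous_fst.sub continuous_const).prodMk continuous_snd))).sub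
      (continuous_const.mul hg)

-- ## Periodicity of difference quotients
section PerDq
variable {f : ℝ × ℝ → ℝ}

lemma Dq_perx {s : ℝ} (hg : ∀ x y, f (x + 1, y) = f (x, y)) (x y : ℝ) :
    Dq s f (x + 1, y) = Dq s f (x, y) := by
  simp only [Dq]
  rw [show (x + 1 + s) = (x + s) + 1 by ring, hg (x + s) y, hg x y]

lemma Dq_pery {s : ℝ} (hg : ∀ x y, f (x, y + 1) = f (x, y)) (x y : ℝ) :
    Dq s f (x, y + 1) = Dq s f (x, y) := by
  simp only [Dq]
  rw [hg (x + s) y, hg x y]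

-- smoothness of second partials
lemma cont_pdy2 (hf : ContDiff ℝ 2 f) : Continuous (pdy (pdy f)) := by
  have h1 : ContDiff ℝ ((0:ℕ∞) + 1) (pdy f) := by exact_mod_cast contDiff_pdy (hf2' hf)
  exact (contDiff_pdy h1).continuous

lemma cont_pdx2 (hf : ContDiff ℝ 2 f) : Continuous (pdx (pdx f)) := by
  have h1 : ContDiff ℝ ((0:ℕ∞) + 1) (pdx f) := by exact_mod_cast contDiff_pdx (hf2' hf)
  exact (contDiff_pdx h1).continuous

lemma cont_pdxy (hf : ContDiff ℝ 2 f) : Continuous (pdx (pdy f)) := by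
  have h1 : ContDiff ℝ ((0:ℕ∞) + 1) (pdy f) := by exact_mod_cast contDiff_pdy (hf2' hf)
  exact (contDiff_pdx h1).continuous

lemma cont_pdyx (hf : ContDiff ℝ 2 f) : Continuous (pdy (pdx f)) := by
  have h1 : ContDiff ℝ ((0:ℕ∞) + 1) (pdx f) := by exact_mod_cast contDiff_pdx (hf2' hf)
  exact (contDiff_pdy h1).continuous

-- ## IBP in the y-variable for difference quotients
lemma ibp_y (hf : ContDiff ℝ 2 f) (hpy : ∀ x y, f (x, y + 1) = f (x, y)) (s x : ℝ) :
    ∫ y in (0:ℝ)..1, Dq s (pdy f) (x, y) * Dq s (pdy f) (x, y)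
      = - ∫ y in (0:ℝ)..1, Dq s f (x, y) * Dq s (pdy (pdy f)) (x, y) := by
  have hd : Differentiable ℝ f := hf.differentiable (by simp)
  have hv1 : ContDiff ℝ 1 (pdy f) := contDiff_pdy (hf2' hf)
  have hvd : Differentiable ℝ (pdy f) := hv1.differentiable (by simp)
  have hu : ∀ y : ℝ, HasDerivAt (fun y => Dq s (pdy f) (x, y))
      (Dq s (pdy (pdy f)) (x, y)) y := by
    intro y
    have := ((hasDerivAt_pdy hvd (x + s) y).sub (hasDerivAt_pdy hvd x y)).div_const s
    exact this
  have hw : ∀ y : ℝ, HasDerivAt (fun y => Dq s f (x, y)) (Dq s (pdy f) (x, y)) y := by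
    intro y
    have := ((hasDerivAt_pdy hd (x + s) y).sub (hasDerivAt_pdy hd x y)).div_const s
    exact this
  have hcu' : Continuous (fun y => Dq s (pdy (pdy f)) (x, y)) :=
    (cont_Dq (cont_pdy2 hf) s).comp (continuous_const.prodMk continuous_id)
  have hcw' : Continuous (fun y => Dq s (pdy f) (x, y)) :=
    (cont_Dq hv1.continuous s).comp (continuous_const.prodMk continuous_id)
  have hbd : Dq s (pdy f) (x, 1) * Dq s f (x, 1) = Dq s (pdy f) (x, 0) * Dq s f (x, 0) := by
    rw [show (1:ℝ) = 0 + 1 by ring, Dq_pery (pery_pdy hpy) x 0, Dq_pery hpy x 0]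
  have h := per_ibp hu hw hcu' hcw' hbd
  rw [h]
  congr 1
  refine intervalIntegral.integral_congr fun y _ => mul_comm _ _

-- ## discrete IBP (shift) in the x-variable
lemma shift_x (hf : ContDiff ℝ 2 f) (hpx : ∀ x y, f (x + 1, y) = f (x, y)) {s : ℝ}
    (hs : s ≠ 0) (y : ℝ) :
    ∫ x in (0:ℝ)..1, Dq s f (x, y) * Dq s (pdy (pdy f)) (x, y)
      = - ∫ x in (0:ℝ)..1, pdy (pdy f) (x, y) * Sq s f (x, y) := by
  have hcf : Continuous f := hf.continuous
  have hcc : Continuous (pdy (pdy f)) := cont_pdy2 hf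
  have hcDf : Continuous (Dq s f) := cont_Dq hcf s
  have hG1 : Continuous (fun x => Dq s f (x, y) * pdy (pdy f) (x + s, y) / s) := by
    apply Continuous.div_const
    exact ((hcDf.comp ((continuous_id.prodMk continuous_const)))).mul
      (hcc.comp ((continuous_id.add continuous_const).prodMk continuous_const))
  have hG2 : Continuous (fun x => Dq s f (x, y) * pdy (pdy f) (x, y) / s) := by
    apply Continuous.div_const
    exact ((hcDf.comp ((continuous_id.prodMk continuous_const)))).mul
      (hcc.comp (continuous_id.prodMk continuous_const))
  have step1 : ∫ x in (0:ℝ)..1, Dq s f (x, y) * Dq s (pdy (pdy f)) (x, y)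
      = (∫ x in (0:ℝ)..1, Dq s f (x, y) * pdy (pdy f) (x + s, y) / s)
        - ∫ x in (0:ℝ)..1, Dq s f (x, y) * pdy (pdy f) (x, y) / s := by
    rw [← intervalIntegral.integral_sub (hG1.intervalIntegrable 0 1)
      (hG2.intervalIntegrable 0 1)]
    refine intervalIntegral.integral_congr fun x _ => ?_
    show Dq s f (x, y) * ((pdy (pdy f) ((x,y).1 + s, (x,y).2) - pdy (pdy f) (x,y)) / s) = _
    ring
  have hper : ∀ t : ℝ, Dq s f (t + 1 - s, y) * pdy (pdy f) (t + 1, y) / s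
      = Dq s f (t - s, y) * pdy (pdy f) (t, y) / s := by
    intro t
    have hc_perx : pdy (pdy f) (t + 1, y) = pdy (pdy f) (t, y) :=
      perx_pdy (fun a b => perx_pdy hpx a b) t y
    rw [show t + 1 - s = (t - s) + 1 by ring, Dq_perx hpx, hc_perx]
  have step2 : ∫ x in (0:ℝ)..1, Dq s f (x, y) * pdy (pdy f) (x + s, y) / s
      = ∫ x in (0:ℝ)..1, Dq s f (x - s, y) * pdy (pdy f) (x, y) / s := by
    have h := per_shift (fun t => Dq s f (t - s, y) * pdy (pdy f) (t, y) / s) hper s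
    rw [← h]
    refine intervalIntegral.integral_congr fun x _ => ?_
    simp only [add_sub_cancel_right]
  have hG3 : Continuous (fun x => Dq s f (x - s, y) * pdy (pdy f) (x, y) / s) := by
    apply Continuous.div_const
    exact ((hcDf.comp (((continuous_id.sub continuous_const)).prodMk continuous_const))).mul
      (hcc.comp (continuous_id.prodMk continuous_const))
  rw [step1, step2, ← intervalIntegral.integral_sub (hG3.intervalIntegrable 0 1)
      (hG2.intervalIntegrable 0 1), ← intervalIntegral.integral_neg]
  · refine intervalIntegral.integral_congr fun x _ => ?_
    show Dq s f (x - s, y) * pdy (pdy f) (x, y) / s - Dq s f (x, y) * pdy (pdy f) (x, y) / s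
      = -(pdy (pdy f) (x, y) * Sq s f (x, y))
    simp only [Dq, Sq]
    have hx : x - s + s = x := by ring
    rw [hx]
    field_simp
    ring

end PerDq

-- ## the squared-integral identity for difference quotients
section Hess
variable {f : ℝ × ℝ → ℝ}

lemma hess_step (hf : ContDiff ℝ 2 f) (hpx : ∀ x y, f (x + 1, y) = f (x, y))
    (hpy : ∀ x y, f (x, y + 1) = f (x, y)) {s : ℝ} (hs : s ≠ 0) :
    ∫ p in Msq, Dq s (pdy f) p ^ 2 = ∫ p in Msq, pdy (pdy f) p * Sq s f p := by
  have hcf : Continuous f := hf.continuous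
  have hv1 : ContDiff ℝ 1 (pdy f) := contDiff_pdy (hf2' hf)
  have hcDv : Continuous (Dq s (pdy f)) := cont_Dq hv1.continuous s
  have hcc : Continuous (pdy (pdy f)) := cont_pdy2 hf
  have hcDf : Continuous (Dq s f) := cont_Dq hcf s
  have hcSq : Continuous (Sq s f) := cont_Sq hcf s
  calc ∫ p in Msq, Dq s (pdy f) p ^ 2
      = ∫ p in Msq, Dq s (pdy f) p * Dq s (pdy f) p := by
        refine setIntegral_congr_fun (measurableSet_Ioo.prod measurableSet_Ioo)
          fun p _ => pow_two _
    _ = ∫ x in (0:ℝ)..1, ∫ y in (0:ℝ)..1, Dq s (pdy f) (x, y) * Dq s (pdy f) (x, y) :=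
        msq_eq_xy (hcDv.mul hcDv)
    _ = ∫ x in (0:ℝ)..1, - ∫ y in (0:ℝ)..1, Dq s f (x, y) * Dq s (pdy (pdy f)) (x, y) :=
        intervalIntegral.integral_congr fun x _ => ibp_y hf hpy s x
    _ = - ∫ x in (0:ℝ)..1, ∫ y in (0:ℝ)..1, Dq s f (x, y) * Dq s (pdy (pdy f)) (x, y) :=
        intervalIntegral.integral_neg
    _ = - ∫ p in Msq, Dq s f p * Dq s (pdy (pdy f)) p :=
        congrArg Neg.neg (msq_eq_xy (hcDf.mul (cont_Dq hcc s))).symm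
    _ = - ∫ y in (0:ℝ)..1, ∫ x in (0:ℝ)..1, Dq s f (x, y) * Dq s (pdy (pdy f)) (x, y) :=
        congrArg Neg.neg (msq_eq_yx (hcDf.mul (cont_Dq hcc s)))
    _ = - ∫ y in (0:ℝ)..1, - ∫ x in (0:ℝ)..1, pdy (pdy f) (x, y) * Sq s f (x, y) :=
        congrArg Neg.neg (intervalIntegral.integral_congr fun y _ => shift_x hf hpx hs y)
    _ = ∫ y in (0:ℝ)..1, ∫ x in (0:ℝ)..1, pdy (pdy f) (x, y) * Sq s f (x, y) := by
        rw [intervalIntegral.integral_neg, neg_neg]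
    _ = ∫ p in Msq, pdy (pdy f) p * Sq s f p := (msq_eq_yx (hcc.mul hcSq)).symm

end Hess

section HessLimits
variable {f : ℝ × ℝ → ℝ}

lemma msq_measurable : MeasurableSet Msq := measurableSet_Ioo.prod measurableSet_Ioo

lemma tendsto_lhs (hf : ContDiff ℝ 2 f) :
    Tendsto (fun n : ℕ => ∫ p in Msq, Dq (sN n) (pdy f) p ^ 2) atTop
      (nhds (∫ p in Msq, pdx (pdy f) p ^ 2)) := by
  have hv1 : ContDiff ℝ 1 (pdy f) := contDiff_pdy (hf2' hf)
  have hvd : Differentiable ℝ (pdy f) := hv1.differentiable (by simp)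
  obtain ⟨Cb, hCb⟩ := isCompact_Icc.exists_bound_of_continuousOn
    ((cont_pdxy hf).continuousOn (s := Icc ((0:ℝ),(0:ℝ)) ((2:ℝ),(1:ℝ))))
  apply MeasureTheory.tendsto_integral_of_dominated_convergence (fun _ => Cb ^ 2)
  · exact fun n => ((cont_Dq hv1.continuous (sN n)).pow 2).aestronglyMeasurable.restrict
  · exact integrable_const _
  · intro n
    refine (ae_restrict_iff' msq_measurable).2 (Eventually.of_forall fun p hp => ?_)
    obtain ⟨hp1, hp2⟩ := hp
    obtain ⟨ξ, hξ, hξeq⟩ := dq_mvt (fun t => pdy f (t, p.2))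
      (hvd.comp (differentiable_id.prodMk (differentiable_const _))) (sN_pos n) p.1
    have heq : Dq (sN n) (pdy f) p = pdx (pdy f) (ξ, p.2) := hξeq
    have hmem : (ξ, p.2) ∈ Icc ((0:ℝ),(0:ℝ)) ((2:ℝ),(1:ℝ)) := by
      simp only [mem_Icc, Prod.le_def]
      have := sN_le_one n
      constructor
      · exact ⟨by linarith [hξ.1, hp1.1], by linarith [hp2.1]⟩
      · exact ⟨by linarith [hξ.2, hp1.2], by linarith [hp2.2]⟩
    have hb := hCb _ hmem
    have : ‖Dq (sN n) (pdy f) p ^ 2‖ = |Dq (sN n) (pdy f) p| ^ 2 := by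
      rw [Real.norm_eq_abs, abs_pow, sq_abs, ← sq_abs]
    rw [this, heq]
    exact pow_le_pow_left₀ (abs_nonneg _) hb 2
  · refine Eventually.of_forall fun p => ?_
    have h := tendsto_dq (fun t => pdy f (t, p.2))
      (hvd.comp (differentiable_id.prodMk (differentiable_const _))) p.1
    exact h.pow 2

lemma tendsto_rhs (hf : ContDiff ℝ 2 f) :
    Tendsto (fun n : ℕ => ∫ p in Msq, pdy (pdy f) p * Sq (sN n) f p) atTop
      (nhds (∫ p in Msq, pdy (pdy f) p * pdx (pdx f) p)) := by
  have hcc : Continuous (pdy (pdy f)) := cont_pdy2 hf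
  obtain ⟨Ca, hCa⟩ := isCompact_Icc.exists_bound_of_continuousOn
    ((cont_pdx2 hf).continuousOn (s := Icc ((-1:ℝ),(0:ℝ)) ((2:ℝ),(1:ℝ))))
  obtain ⟨Cc, hCc⟩ := isCompact_Icc.exists_bound_of_continuousOn
    (hcc.continuousOn (s := Icc ((0:ℝ),(0:ℝ)) ((1:ℝ),(1:ℝ))))
  have hCa0 : 0 ≤ Ca := le_trans (norm_nonneg _)
    (hCa ((0:ℝ),(0:ℝ)) (by constructor <;> simp [Prod.le_def] <;> norm_num))
  apply MeasureTheory.tendsto_integral_of_dominated_convergence (fun _ => Cc * Ca)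
  · exact fun n => (hcc.mul (cont_Sq hf.continuous (sN n))).aestronglyMeasurable.restrict
  · exact integrable_const _
  · intro n
    refine (ae_restrict_iff' msq_measurable).2 (Eventually.of_forall fun p hp => ?_)
    obtain ⟨hp1, hp2⟩ := hp
    obtain ⟨η, hη, hηeq⟩ := sdq_mvt (fun t => f (t, p.2)) (sliceX_contDiff hf p.2)
      (sN_pos n) p.1
    have heq : Sq (sN n) f p = pdx (pdx f) (η, p.2) := hηeq
    have hmem : (η, p.2) ∈ Icc ((-1:ℝ),(0:ℝ)) ((2:ℝ),(1:ℝ)) := by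
      simp only [mem_Icc, Prod.le_def]
      have := sN_le_one n
      constructor
      · exact ⟨by linarith [hη.1, hp1.1], by linarith [hp2.1]⟩
      · exact ⟨by linarith [hη.2, hp1.2], by linarith [hp2.2]⟩
    have hmem2 : ((p.1 : ℝ), p.2) ∈ Icc ((0:ℝ),(0:ℝ)) ((1:ℝ),(1:ℝ)) := by
      simp only [mem_Icc, Prod.le_def]
      exact ⟨⟨le_of_lt hp1.1, le_of_lt hp2.1⟩, ⟨le_of_lt hp1.2, le_of_lt hp2.2⟩⟩
    have hb1 := hCa _ hmem
    have hb2 := hCc _ hmem2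
    rw [Real.norm_eq_abs, abs_mul]
    rw [heq]
    have hc' : |pdy (pdy f) p| ≤ Cc := by
      have : ((p.1 : ℝ), p.2) = p := rfl
      rw [this] at hb2
      exact hb2
    exact mul_le_mul hc' hb1 (abs_nonneg _) (le_trans (abs_nonneg _) hc')
  · refine Eventually.of_forall fun p => ?_
    have h := tendsto_sdq (fun t => f (t, p.2)) (sliceX_contDiff hf p.2) p.1
    have heq : deriv (deriv (fun t => f (t, p.2))) p.1 = pdx (pdx f) p := rfl
    rw [heq] at h
    exact h.const_mul _

lemma hess_identity (hf : ContDiff ℝ 2 f) (hpx : ∀ x y, f (x + 1, y) = f (x, y))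
    (hpy : ∀ x y, f (x, y + 1) = f (x, y)) :
    ∫ p in Msq, pdx (pdy f) p ^ 2 = ∫ p in Msq, pdy (pdy f) p * pdx (pdx f) p := by
  have h1 := tendsto_lhs hf
  have h2 := tendsto_rhs hf
  have heq : (fun n : ℕ => ∫ p in Msq, Dq (sN n) (pdy f) p ^ 2)
      = fun n : ℕ => ∫ p in Msq, pdy (pdy f) p * Sq (sN n) f p :=
    funext fun n => hess_step hf hpx hpy (ne_of_gt (sN_pos n))
  rw [heq] at h1
  exact tendsto_nhds_unique h1 h2

end HessLimits

section MainIBP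
variable {f : ℝ × ℝ → ℝ}

lemma hasDeriv_P (hf : ContDiff ℝ 2 f) (x y : ℝ) :
    HasDerivAt (fun t => (pdx f (t, y) ^ 2 + pdy f (t, y) ^ 2) * pdx f (t, y))
      ((2 * pdx f (x, y) * pdx (pdx f) (x, y) + 2 * pdy f (x, y) * pdx (pdy f) (x, y))
          * pdx f (x, y)
        + (pdx f (x, y) ^ 2 + pdy f (x, y) ^ 2) * pdx (pdx f) (x, y)) x := by
  have hud : Differentiable ℝ (pdx f) := (contDiff_pdx (hf2' hf)).differentiable (by simp)
  have hvd : Differentiable ℝ (pdy f) := (contDiff_pdy (hf2' hf)).differentiable (by simp)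
  have h1 := hasDerivAt_pdx hud x y
  have h2 := hasDerivAt_pdx hvd x y
  have h := ((h1.pow 2).add (h2.pow 2)).mul h1
  exact h.congr_deriv (by simp only [Pi.add_apply, Pi.pow_apply]; ring)

lemma hasDeriv_Q (hf : ContDiff ℝ 2 f) (x y : ℝ) :
    HasDerivAt (fun t => (pdx f (x, t) ^ 2 + pdy f (x, t) ^ 2) * pdy f (x, t))
      ((2 * pdx f (x, y) * pdy (pdx f) (x, y) + 2 * pdy f (x, y) * pdy (pdy f) (x, y))
          * pdy f (x, y)
        + (pdx f (x, y) ^ 2 + pdy f (x, y) ^ 2) * pdy (pdy f) (x, y)) y := by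
  have hud : Differentiable ℝ (pdx f) := (contDiff_pdx (hf2' hf)).differentiable (by simp)
  have hvd : Differentiable ℝ (pdy f) := (contDiff_pdy (hf2' hf)).differentiable (by simp)
  have h1 := hasDerivAt_pdy hud x y
  have h2 := hasDerivAt_pdy hvd x y
  have h := ((h1.pow 2).add (h2.pow 2)).mul h2
  exact h.congr_deriv (by simp only [Pi.add_apply, Pi.pow_apply]; ring)

lemma cont_pdx1 (hf : ContDiff ℝ 2 f) : Continuous (pdx f) :=
  (contDiff_pdx (hf2' hf)).continuous

lemma cont_pdy1 (hf : ContDiff ℝ 2 f) : Continuous (pdy f) :=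
  (contDiff_pdy (hf2' hf)).continuous

lemma ibp_I1 (hf : ContDiff ℝ 2 f) (hpx : ∀ x y, f (x + 1, y) = f (x, y)) :
    ∫ p in Msq, (pdx f p ^ 2 + pdy f p ^ 2) * pdx f p * pdx f p
      = - ∫ p in Msq, ((2 * pdx f p * pdx (pdx f) p + 2 * pdy f p * pdx (pdy f) p) * pdx f p
          + (pdx f p ^ 2 + pdy f p ^ 2) * pdx (pdx f) p) * f p := by
  have hd : Differentiable ℝ f := hf.differentiable (by simp)
  have hcu : Continuous (pdx f) := cont_pdx1 hf
  have hcv : Continuous (pdy f) := cont_pdy1 hf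
  have hca : Continuous (pdx (pdx f)) := cont_pdx2 hf
  have hcb : Continuous (pdx (pdy f)) := cont_pdxy hf
  have hcP : Continuous (fun p : ℝ × ℝ => (pdx f p ^ 2 + pdy f p ^ 2) * pdx f p) :=
    ((hcu.pow 2).add (hcv.pow 2)).mul hcu
  have hcDP : Continuous (fun p : ℝ × ℝ =>
      (2 * pdx f p * pdx (pdx f) p + 2 * pdy f p * pdx (pdy f) p) * pdx f p
        + (pdx f p ^ 2 + pdy f p ^ 2) * pdx (pdx f) p) := by
    apply Continuous.add
    · exact (((continuous_const.mul hcu).mul hca).add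
        ((continuous_const.mul hcv).mul hcb)).mul hcu
    · exact ((hcu.pow 2).add (hcv.pow 2)).mul hca
  have inner : ∀ y : ℝ,
      ∫ x in (0:ℝ)..1, ((pdx f (x, y) ^ 2 + pdy f (x, y) ^ 2) * pdx f (x, y)) * pdx f (x, y)
        = - ∫ x in (0:ℝ)..1,
            ((2 * pdx f (x, y) * pdx (pdx f) (x, y) + 2 * pdy f (x, y) * pdx (pdy f) (x, y))
              * pdx f (x, y)
              + (pdx f (x, y) ^ 2 + pdy f (x, y) ^ 2) * pdx (pdx f) (x, y)) * f (x, y) := by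
    intro y
    apply per_ibp (fun x => hasDeriv_P hf x y) (fun x => hasDerivAt_pdx hd x y)
      (hcDP.comp (continuous_id.prodMk continuous_const))
      (hcu.comp (continuous_id.prodMk continuous_const))
    rw [show (1:ℝ) = 0 + 1 by ring, perx_pdx hpx, perx_pdy hpx, hpx]
  calc ∫ p in Msq, (pdx f p ^ 2 + pdy f p ^ 2) * pdx f p * pdx f p
      = ∫ y in (0:ℝ)..1, ∫ x in (0:ℝ)..1,
          ((pdx f (x, y) ^ 2 + pdy f (x, y) ^ 2) * pdx f (x, y)) * pdx f (x, y) :=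
        msq_eq_yx (hcP.mul hcu)
    _ = ∫ y in (0:ℝ)..1, - ∫ x in (0:ℝ)..1,
          ((2 * pdx f (x, y) * pdx (pdx f) (x, y) + 2 * pdy f (x, y) * pdx (pdy f) (x, y))
            * pdx f (x, y)
            + (pdx f (x, y) ^ 2 + pdy f (x, y) ^ 2) * pdx (pdx f) (x, y)) * f (x, y) :=
        intervalIntegral.integral_congr fun y _ => inner y
    _ = - ∫ y in (0:ℝ)..1, ∫ x in (0:ℝ)..1,
          ((2 * pdx f (x, y) * pdx (pdx f) (x, y) + 2 * pdy f (x, y) * pdx (pdy f) (x, y))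
            * pdx f (x, y)
            + (pdx f (x, y) ^ 2 + pdy f (x, y) ^ 2) * pdx (pdx f) (x, y)) * f (x, y) :=
        intervalIntegral.integral_neg
    _ = - ∫ p in Msq, ((2 * pdx f p * pdx (pdx f) p + 2 * pdy f p * pdx (pdy f) p) * pdx f p
          + (pdx f p ^ 2 + pdy f p ^ 2) * pdx (pdx f) p) * f p :=
        congrArg Neg.neg (msq_eq_yx (hcDP.mul hf.continuous)).symm

lemma ibp_I2 (hf : ContDiff ℝ 2 f) (hpy : ∀ x y, f (x, y + 1) = f (x, y)) :
    ∫ p in Msq, (pdx f p ^ 2 + pdy f p ^ 2) * pdy f p * pdy f p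
      = - ∫ p in Msq, ((2 * pdx f p * pdy (pdx f) p + 2 * pdy f p * pdy (pdy f) p) * pdy f p
          + (pdx f p ^ 2 + pdy f p ^ 2) * pdy (pdy f) p) * f p := by
  have hd : Differentiable ℝ f := hf.differentiable (by simp)
  have hcu : Continuous (pdx f) := cont_pdx1 hf
  have hcv : Continuous (pdy f) := cont_pdy1 hf
  have hcb' : Continuous (pdy (pdx f)) := cont_pdyx hf
  have hcc : Continuous (pdy (pdy f)) := cont_pdy2 hf
  have hcQ : Continuous (fun p : ℝ × ℝ => (pdx f p ^ 2 + pdy f p ^ 2) * pdy f p) :=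
    ((hcu.pow 2).add (hcv.pow 2)).mul hcv
  have hcDQ : Continuous (fun p : ℝ × ℝ =>
      (2 * pdx f p * pdy (pdx f) p + 2 * pdy f p * pdy (pdy f) p) * pdy f p
        + (pdx f p ^ 2 + pdy f p ^ 2) * pdy (pdy f) p) := by
    apply Continuous.add
    · exact (((continuous_const.mul hcu).mul hcb').add
        ((continuous_const.mul hcv).mul hcc)).mul hcv
    · exact ((hcu.pow 2).add (hcv.pow 2)).mul hcc
  have inner : ∀ x : ℝ,
      ∫ y in (0:ℝ)..1, ((pdx f (x, y) ^ 2 + pdy f (x, y) ^ 2) * pdy f (x, y)) * pdy f (x, y)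
        = - ∫ y in (0:ℝ)..1,
            ((2 * pdx f (x, y) * pdy (pdx f) (x, y) + 2 * pdy f (x, y) * pdy (pdy f) (x, y))
              * pdy f (x, y)
              + (pdx f (x, y) ^ 2 + pdy f (x, y) ^ 2) * pdy (pdy f) (x, y)) * f (x, y) := by
    intro x
    apply per_ibp (fun y => hasDeriv_Q hf x y) (fun y => hasDerivAt_pdy hd x y)
      (hcDQ.comp (continuous_const.prodMk continuous_id))
      (hcv.comp (continuous_const.prodMk continuous_id))
    rw [show (1:ℝ) = 0 + 1 by ring, pery_pdx hpy, pery_pdy hpy, hpy]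
  calc ∫ p in Msq, (pdx f p ^ 2 + pdy f p ^ 2) * pdy f p * pdy f p
      = ∫ x in (0:ℝ)..1, ∫ y in (0:ℝ)..1,
          ((pdx f (x, y) ^ 2 + pdy f (x, y) ^ 2) * pdy f (x, y)) * pdy f (x, y) :=
        msq_eq_xy (hcQ.mul hcv)
    _ = ∫ x in (0:ℝ)..1, - ∫ y in (0:ℝ)..1,
          ((2 * pdx f (x, y) * pdy (pdx f) (x, y) + 2 * pdy f (x, y) * pdy (pdy f) (x, y))
            * pdy f (x, y)
            + (pdx f (x, y) ^ 2 + pdy f (x, y) ^ 2) * pdy (pdy f) (x, y)) * f (x, y) :=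
        intervalIntegral.integral_congr fun x _ => inner x
    _ = - ∫ x in (0:ℝ)..1, ∫ y in (0:ℝ)..1,
          ((2 * pdx f (x, y) * pdy (pdx f) (x, y) + 2 * pdy f (x, y) * pdy (pdy f) (x, y))
            * pdy f (x, y)
            + (pdx f (x, y) ^ 2 + pdy f (x, y) ^ 2) * pdy (pdy f) (x, y)) * f (x, y) :=
        intervalIntegral.integral_neg
    _ = - ∫ p in Msq, ((2 * pdx f p * pdy (pdx f) p + 2 * pdy f p * pdy (pdy f) p) * pdy f p
          + (pdx f p ^ 2 + pdy f p ^ 2) * pdy (pdy f) p) * f p :=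
        congrArg Neg.neg (msq_eq_xy (hcDQ.mul hf.continuous)).symm

end MainIBP

lemma Rbound (u v a b c : ℝ) :
    |2*u^2*a + 4*u*v*b + 2*v^2*c| ≤ 2*(u^2+v^2) * Real.sqrt (a^2+2*b^2+c^2) := by
  have h1 : (2*u^2*a + 4*u*v*b + 2*v^2*c)^2 ≤ (2*(u^2+v^2))^2 * (a^2+2*b^2+c^2) := by
    nlinarith [sq_nonneg (u*(u*b - v*a)), sq_nonneg (u^2*c - v^2*a), sq_nonneg (v*(u*c - v*b)),
      sq_nonneg (u*b - v*a), sq_nonneg (u*c - v*b)]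
  calc |2*u^2*a + 4*u*v*b + 2*v^2*c| = Real.sqrt ((2*u^2*a + 4*u*v*b + 2*v^2*c)^2) :=
        (Real.sqrt_sq_eq_abs _).symm
    _ ≤ Real.sqrt ((2*(u^2+v^2))^2 * (a^2+2*b^2+c^2)) := Real.sqrt_le_sqrt h1
    _ = 2*(u^2+v^2) * Real.sqrt (a^2+2*b^2+c^2) := by
        rw [Real.sqrt_mul (by positivity), Real.sqrt_sq (by positivity)]

section Core
variable {f : ℝ × ℝ → ℝ}

lemma core (hf : ContDiff ℝ 2 f) (hpx : ∀ x y, f (x + 1, y) = f (x, y))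
    (hpy : ∀ x y, f (x, y + 1) = f (x, y)) {M : ℝ} (hM0 : 0 ≤ M)
    (hM : ∀ p ∈ Msq, |f p| ≤ M) :
    ∫ p in Msq, (pdx f p ^ 2 + pdy f p ^ 2) ^ 2 ≤ 9 * M ^ 2 * ∫ p in Msq, lapH f p ^ 2 := by
  have hcu : Continuous (pdx f) := cont_pdx1 hf
  have hcv : Continuous (pdy f) := cont_pdy1 hf
  have hca : Continuous (pdx (pdx f)) := cont_pdx2 hf
  have hcb : Continuous (pdx (pdy f)) := cont_pdxy hf
  have hcb' : Continuous (pdy (pdx f)) := cont_pdyx hf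
  have hcc : Continuous (pdy (pdy f)) := cont_pdy2 hf
  set I := ∫ p in Msq, (pdx f p ^ 2 + pdy f p ^ 2) ^ 2 with hI
  set J := ∫ p in Msq, lapH f p ^ 2 with hJ
  have hcg : Continuous (fun p : ℝ × ℝ => pdx f p ^ 2 + pdy f p ^ 2) :=
    (hcu.pow 2).add (hcv.pow 2)
  have hclap : Continuous (lapH f) := hca.add hcc
  have hI0 : 0 ≤ I := setIntegral_nonneg msq_measurable (fun p _ => by positivity)
  have hJ0 : 0 ≤ J := setIntegral_nonneg msq_measurable (fun p _ => by positivity)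
  -- the function W = div(g ∇f)
  set W := fun p : ℝ × ℝ =>
    ((2 * pdx f p * pdx (pdx f) p + 2 * pdy f p * pdx (pdy f) p) * pdx f p
      + (pdx f p ^ 2 + pdy f p ^ 2) * pdx (pdx f) p)
    + ((2 * pdx f p * pdy (pdx f) p + 2 * pdy f p * pdy (pdy f) p) * pdy f p
      + (pdx f p ^ 2 + pdy f p ^ 2) * pdy (pdy f) p) with hW
  have hcW : Continuous W := by
    apply Continuous.add
    · exact ((((continuous_const.mul hcu).mul hca).add
        ((continuous_const.mul hcv).mul hcb)).mul hcu).add (hcg.mul hca)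
    · exact ((((continuous_const.mul hcu).mul hcb').add
        ((continuous_const.mul hcv).mul hcc)).mul hcv).add (hcg.mul hcc)
  have hcDP : Continuous (fun p : ℝ × ℝ =>
      (2 * pdx f p * pdx (pdx f) p + 2 * pdy f p * pdx (pdy f) p) * pdx f p
        + (pdx f p ^ 2 + pdy f p ^ 2) * pdx (pdx f) p) :=
    ((((continuous_const.mul hcu).mul hca).add
        ((continuous_const.mul hcv).mul hcb)).mul hcu).add (hcg.mul hca)
  have hcDQ : Continuous (fun p : ℝ × ℝ =>
      (2 * pdx f p * pdy (pdx f) p + 2 * pdy f p * pdy (pdy f) p) * pdy f p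
        + (pdx f p ^ 2 + pdy f p ^ 2) * pdy (pdy f) p) :=
    ((((continuous_const.mul hcu).mul hcb').add
        ((continuous_const.mul hcv).mul hcc)).mul hcv).add (hcg.mul hcc)
  -- Step 1-2 : I = -∫ W f
  have step2 : I = - ∫ p in Msq, W p * f p := by
    have e1 : I = (∫ p in Msq, (pdx f p ^ 2 + pdy f p ^ 2) * pdx f p * pdx f p)
        + ∫ p in Msq, (pdx f p ^ 2 + pdy f p ^ 2) * pdy f p * pdy f p := by
      rw [hI, ← integral_add (integrableOn_msq ((hcg.fun_mul hcu).fun_mul hcu))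
        (integrableOn_msq ((hcg.fun_mul hcv).fun_mul hcv))]
      refine setIntegral_congr_fun msq_measurable fun p _ => by ring
    rw [e1, ibp_I1 hf hpx, ibp_I2 hf hpy]
    rw [← neg_add, ← integral_add (integrableOn_msq (hcDP.fun_mul hf.continuous))
      (integrableOn_msq (hcDQ.fun_mul hf.continuous))]
    congr 1
    refine setIntegral_congr_fun msq_measurable fun p _ => by rw [hW]; ring
  -- Step 3-4 : I ≤ M * ∫ (g|a+c| + 2 g √(a²+2b²+c²))
  have key : ∀ p ∈ Msq, -(W p * f p) ≤
      M * ((pdx f p ^ 2 + pdy f p ^ 2) * |lapH f p|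
        + 2 * (pdx f p ^ 2 + pdy f p ^ 2)
            * Real.sqrt (pdx (pdx f) p ^ 2 + 2 * pdx (pdy f) p ^ 2 + pdy (pdy f) p ^ 2)) := by
    intro p hp
    have hWp : W p = (pdx f p ^ 2 + pdy f p ^ 2) * lapH f p
        + (2*(pdx f p)^2*(pdx (pdx f) p) + 4*(pdx f p)*(pdy f p)*(pdx (pdy f) p)
            + 2*(pdy f p)^2*(pdy (pdy f) p)) := by
      have hcl : pdy (pdx f) p = pdx (pdy f) p := (clairaut hf p).symm
      simp only [hW]
      rw [hcl]
      show _ = _ * (pdx (pdx f) p + pdy (pdy f) p) + _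
      ring
    have h1 : -(W p * f p) ≤ |W p| * M := by
      calc -(W p * f p) ≤ |W p * f p| := neg_le_abs _
        _ = |W p| * |f p| := abs_mul _ _
        _ ≤ |W p| * M := mul_le_mul_of_nonneg_left (hM p hp) (abs_nonneg _)
    refine h1.trans ?_
    rw [mul_comm]
    apply mul_le_mul_of_nonneg_left _ hM0
    rw [hWp]
    refine (abs_add_le _ _).trans ?_
    gcongr
    · rw [abs_mul, abs_of_nonneg (by positivity : (0:ℝ) ≤ pdx f p ^ 2 + pdy f p ^ 2)]
    · exact Rbound (pdx f p) (pdy f p) (pdx (pdx f) p) (pdx (pdy f) p) (pdy (pdy f) p)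
  have hcsqrt : Continuous (fun p : ℝ × ℝ =>
      Real.sqrt (pdx (pdx f) p ^ 2 + 2 * pdx (pdy f) p ^ 2 + pdy (pdy f) p ^ 2)) :=
    Real.continuous_sqrt.comp (((hca.pow 2).add (continuous_const.mul (hcb.pow 2))).add
      (hcc.pow 2))
  have hcbig : Continuous (fun p : ℝ × ℝ =>
      (pdx f p ^ 2 + pdy f p ^ 2) * |lapH f p|
        + 2 * (pdx f p ^ 2 + pdy f p ^ 2)
            * Real.sqrt (pdx (pdx f) p ^ 2 + 2 * pdx (pdy f) p ^ 2 + pdy (pdy f) p ^ 2)) :=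
    (hcg.mul hclap.abs).add ((continuous_const.mul hcg).mul hcsqrt)
  have step4 : I ≤ M * ∫ p in Msq,
      ((pdx f p ^ 2 + pdy f p ^ 2) * |lapH f p|
        + 2 * (pdx f p ^ 2 + pdy f p ^ 2)
            * Real.sqrt (pdx (pdx f) p ^ 2 + 2 * pdx (pdy f) p ^ 2 + pdy (pdy f) p ^ 2)) := by
    rw [step2, ← integral_neg, ← integral_const_mul]
    refine setIntegral_mono_on (integrableOn_msq (hcW.mul hf.continuous).neg)
      (integrableOn_msq (continuous_const.mul hcbig)) msq_measurable key
  -- Step 5-6 : Cauchy-Schwarz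
  have cs1 : ∫ p in Msq, (pdx f p ^ 2 + pdy f p ^ 2) * |lapH f p|
      ≤ Real.sqrt I * Real.sqrt J := by
    have h := cs_msq hcg hclap
    refine le_trans (le_of_eq ?_) h
    refine setIntegral_congr_fun msq_measurable fun p _ => ?_
    rw [abs_of_nonneg (by positivity : (0:ℝ) ≤ pdx f p ^ 2 + pdy f p ^ 2)]
  have cs2 : ∫ p in Msq, (pdx f p ^ 2 + pdy f p ^ 2)
        * Real.sqrt (pdx (pdx f) p ^ 2 + 2 * pdx (pdy f) p ^ 2 + pdy (pdy f) p ^ 2)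
      ≤ Real.sqrt I * Real.sqrt J := by
    have h := cs_msq hcg hcsqrt
    have e1 : ∫ p in Msq, (pdx f p ^ 2 + pdy f p ^ 2)
          * Real.sqrt (pdx (pdx f) p ^ 2 + 2 * pdx (pdy f) p ^ 2 + pdy (pdy f) p ^ 2)
        = ∫ p in Msq, |pdx f p ^ 2 + pdy f p ^ 2|
          * |Real.sqrt (pdx (pdx f) p ^ 2 + 2 * pdx (pdy f) p ^ 2 + pdy (pdy f) p ^ 2)| := by
      refine setIntegral_congr_fun msq_measurable fun p _ => ?_
      rw [abs_of_nonneg (by positivity : (0:ℝ) ≤ pdx f p ^ 2 + pdy f p ^ 2),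
        abs_of_nonneg (Real.sqrt_nonneg _)]
    have e2 : ∫ p in Msq,
        (Real.sqrt (pdx (pdx f) p ^ 2 + 2 * pdx (pdy f) p ^ 2 + pdy (pdy f) p ^ 2)) ^ 2 = J := by
      have e3 : ∫ p in Msq,
          (Real.sqrt (pdx (pdx f) p ^ 2 + 2 * pdx (pdy f) p ^ 2 + pdy (pdy f) p ^ 2)) ^ 2
          = ∫ p in Msq, (pdx (pdx f) p ^ 2 + 2 * pdx (pdy f) p ^ 2 + pdy (pdy f) p ^ 2) :=
        setIntegral_congr_fun msq_measurable fun p _ => Real.sq_sqrt (by positivity)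
      rw [e3]
      -- use the Hessian identity
      have hsplit : ∫ p in Msq, (pdx (pdx f) p ^ 2 + 2 * pdx (pdy f) p ^ 2 + pdy (pdy f) p ^ 2)
          = (∫ p in Msq, (pdx (pdx f) p ^ 2 + 2 * (pdy (pdy f) p * pdx (pdx f) p)
              + pdy (pdy f) p ^ 2))
            + 2 * ((∫ p in Msq, pdx (pdy f) p ^ 2)
              - ∫ p in Msq, pdy (pdy f) p * pdx (pdx f) p) := by
        rw [mul_sub, ← integral_const_mul, ← integral_const_mul,
          ← integral_sub (integrableOn_msq (continuous_const.fun_mul (hcb.fun_pow 2)))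
            (integrableOn_msq (continuous_const.fun_mul (hcc.fun_mul hca))),
          ← integral_add (integrableOn_msq ?_) (integrableOn_msq ?_)]
        · refine setIntegral_congr_fun msq_measurable fun p _ => by ring
        · exact ((hca.pow 2).add (continuous_const.mul (hcc.mul hca))).add (hcc.pow 2)
        · exact (continuous_const.mul (hcb.pow 2)).sub (continuous_const.mul (hcc.mul hca))
      rw [hsplit, hess_identity hf hpx hpy, sub_self, mul_zero, add_zero, hJ]
      refine setIntegral_congr_fun msq_measurable fun p _ => ?_
      show _ = (pdx (pdx f) p + pdy (pdy f) p) ^ 2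
      ring
    calc ∫ p in Msq, (pdx f p ^ 2 + pdy f p ^ 2)
          * Real.sqrt (pdx (pdx f) p ^ 2 + 2 * pdx (pdy f) p ^ 2 + pdy (pdy f) p ^ 2)
        = _ := e1
      _ ≤ Real.sqrt (∫ p in Msq, (pdx f p ^ 2 + pdy f p ^ 2) ^ 2)
          * Real.sqrt (∫ p in Msq,
            (Real.sqrt (pdx (pdx f) p ^ 2 + 2 * pdx (pdy f) p ^ 2 + pdy (pdy f) p ^ 2)) ^ 2) := h
      _ = Real.sqrt I * Real.sqrt J := by rw [e2]
  -- Step 7 : combine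
  have step7 : I ≤ 3 * M * (Real.sqrt I * Real.sqrt J) := by
    have hsum : ∫ p in Msq,
        ((pdx f p ^ 2 + pdy f p ^ 2) * |lapH f p|
          + 2 * (pdx f p ^ 2 + pdy f p ^ 2)
              * Real.sqrt (pdx (pdx f) p ^ 2 + 2 * pdx (pdy f) p ^ 2 + pdy (pdy f) p ^ 2))
        = (∫ p in Msq, (pdx f p ^ 2 + pdy f p ^ 2) * |lapH f p|)
          + 2 * ∫ p in Msq, (pdx f p ^ 2 + pdy f p ^ 2)
              * Real.sqrt (pdx (pdx f) p ^ 2 + 2 * pdx (pdy f) p ^ 2 + pdy (pdy f) p ^ 2) := by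
      rw [← integral_const_mul,
        integral_add (integrableOn_msq (hcg.fun_mul hclap.abs))
          (integrableOn_msq ((continuous_const.fun_mul hcg).fun_mul hcsqrt))]
      congr 1
      refine setIntegral_congr_fun msq_measurable fun p _ => by ring
    refine le_trans step4 ?_
    rw [hsum]
    have := add_le_add cs1 (mul_le_mul_of_nonneg_left cs2 (by norm_num : (0:ℝ) ≤ 2))
    calc M * ((∫ p in Msq, (pdx f p ^ 2 + pdy f p ^ 2) * |lapH f p|)
          + 2 * ∫ p in Msq, (pdx f p ^ 2 + pdy f p ^ 2)
              * Real.sqrt (pdx (pdx f) p ^ 2 + 2 * pdx (pdy f) p ^ 2 + pdy (pdy f) p ^ 2))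
        ≤ M * (Real.sqrt I * Real.sqrt J + 2 * (Real.sqrt I * Real.sqrt J)) :=
          mul_le_mul_of_nonneg_left this hM0
      _ = 3 * M * (Real.sqrt I * Real.sqrt J) := by ring
  -- Step 8 : conclude
  have hsI := Real.sq_sqrt hI0
  have hsJ := Real.sq_sqrt hJ0
  nlinarith [step7, Real.sqrt_nonneg I, Real.sqrt_nonneg J, hsI, hsJ, hM0,
    sq_nonneg (Real.sqrt I - 3 * M * Real.sqrt J),
    mul_nonneg (mul_nonneg hM0 (Real.sqrt_nonneg I)) (Real.sqrt_nonneg J)]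

end Core

-- upgrade an a.e. bound to an everywhere bound on the open square, by continuity
lemma ae_bound_to_forall {g : ℝ × ℝ → ℝ} (hg : Continuous g) {M : ℝ}
    (h : ∀ᵐ p ∂(volume.restrict Msq), |g p| ≤ M) : ∀ p ∈ Msq, |g p| ≤ M := by
  by_contra hcon
  push_neg at hcon
  obtain ⟨p₀, hp₀, hgt⟩ := hcon
  set U : Set (ℝ × ℝ) := {p | M < |g p|} ∩ Msq with hU
  have hUopen : IsOpen U :=
    (isOpen_lt continuous_const hg.abs).inter (isOpen_Ioo.prod isOpen_Ioo)
  have hUne : U.Nonempty := ⟨p₀, hgt, hp₀⟩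
  have hpos : 0 < volume U := hUopen.measure_pos volume hUne
  have hnull : volume.restrict Msq {p | ¬ |g p| ≤ M} = 0 := h
  have hUsub : U ⊆ {p | ¬ |g p| ≤ M} := fun p hp => not_le.2 hp.1
  have : volume.restrict Msq U = 0 := measure_mono_null hUsub hnull
  rw [Measure.restrict_apply hUopen.measurableSet] at this
  have hUcap : U ∩ Msq = U := inter_eq_self_of_subset_left (inter_subset_right)
  rw [hUcap] at this
  exact absurd this (ne_of_gt hpos)

lemma omg_restrict (h : ℝ) :
    (volume : Measure ((ℝ × ℝ) × ℝ)).restrict (Omg h)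
      = (volume.restrict Msq).prod (volume.restrict (Ioo (-h) h)) := by
  rw [Measure.prod_restrict, ← Measure.volume_eq_prod]
  rfl

end S13

open S13 in
/-- Let `h > 0` and `Ω = (0,1)² × (-h,h)`, and let `T` be a bounded function on
`Ω`, twice continuously differentiable in the horizontal variables and periodic in `x` and
`y` with period 1. Then `‖∇_H T‖_{L⁴(Ω)}² ≤ 3 ‖T‖_{L^∞(Ω)} ‖Δ_H T‖_{L²(Ω)}`. -/
theorem statement13 (h : ℝ) (hh : 0 < h) (T : (ℝ × ℝ) → ℝ → ℝ)
    (hsm : ∀ z : ℝ, ContDiff ℝ 2 (fun p => T p z))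
    (hperx : ∀ x y z : ℝ, T (x + 1, y) z = T (x, y) z)
    (hpery : ∀ x y z : ℝ, T (x, y + 1) z = T (x, y) z)
    (hbdd : MemLp (fun p : (ℝ × ℝ) × ℝ => T p.1 p.2) ⊤ (volume.restrict (Omg h)))
    (hmeas1 : Measurable (fun p : (ℝ × ℝ) × ℝ =>
      (pdx (fun w => T w p.2) p.1) ^ 2 + (pdy (fun w => T w p.2) p.1) ^ 2))
    (hmeas2 : Measurable (fun p : (ℝ × ℝ) × ℝ => lapH (fun w => T w p.2) p.1))
    (hint4 : IntegrableOn (fun p : (ℝ × ℝ) × ℝ =>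
      ((pdx (fun w => T w p.2) p.1) ^ 2 + (pdy (fun w => T w p.2) p.1) ^ 2) ^ 2) (Omg h))
    (hint2 : IntegrableOn (fun p : (ℝ × ℝ) × ℝ => (lapH (fun w => T w p.2) p.1) ^ 2) (Omg h)) :
    ((∫ xy in Msq, ∫ z in Set.Ioo (-h) h,
          ((pdx (fun w => T w z) xy) ^ 2 + (pdy (fun w => T w z) xy) ^ 2) ^ 2) ^ ((1:ℝ)/4)) ^ 2
      ≤ 3 * normLinf h T *
          Real.sqrt (∫ xy in Msq, ∫ z in Set.Ioo (-h) h, (lapH (fun w => T w z) xy) ^ 2) := by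
  set M := normLinf h T with hMdef
  have hM0 : 0 ≤ M := ENNReal.toReal_nonneg
  set F4 : (ℝ × ℝ) × ℝ → ℝ := fun p =>
    ((pdx (fun w => T w p.2) p.1) ^ 2 + (pdy (fun w => T w p.2) p.1) ^ 2) ^ 2 with hF4
  set F2 : (ℝ × ℝ) × ℝ → ℝ := fun p => (lapH (fun w => T w p.2) p.1) ^ 2 with hF2
  have hF4int : Integrable F4 ((volume.restrict Msq).prod (volume.restrict (Ioo (-h) h))) := by
    rw [← omg_restrict]; exact hint4
  have hF2int : Integrable F2 ((volume.restrict Msq).prod (volume.restrict (Ioo (-h) h))) := by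
    rw [← omg_restrict]; exact hint2
  set X := ∫ xy in Msq, ∫ z in Set.Ioo (-h) h,
      ((pdx (fun w => T w z) xy) ^ 2 + (pdy (fun w => T w z) xy) ^ 2) ^ 2 with hX
  set Y := ∫ xy in Msq, ∫ z in Set.Ioo (-h) h, (lapH (fun w => T w z) xy) ^ 2 with hY
  -- a.e. bound on slices
  have hae1 : ∀ᵐ p ∂(volume.restrict (Omg h)), |T p.1 p.2| ≤ M := by
    have h0 := ae_le_eLpNormEssSup (f := fun p : (ℝ × ℝ) × ℝ => T p.1 p.2)
      (μ := volume.restrict (Omg h))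
    have hfin : eLpNormEssSup (fun p : (ℝ × ℝ) × ℝ => T p.1 p.2)
        (volume.restrict (Omg h)) ≠ ⊤ := by
      have h2 := hbdd.2
      rw [eLpNorm_exponent_top] at h2
      exact h2.ne
    filter_upwards [h0] with p hp
    have : |T p.1 p.2| = ((‖T p.1 p.2‖₊ : ENNReal)).toReal := by
      simp [Real.norm_eq_abs]
    rw [this, hMdef, normLinf, eLpNorm_exponent_top]
    exact ENNReal.toReal_mono hfin hp
  rw [omg_restrict] at hae1
  have hae2 : ∀ᵐ q ∂((volume.restrict (Ioo (-h) h)).prod (volume.restrict Msq)),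
      |T q.2 q.1| ≤ M := by
    have hqmp := (Measure.measurePreserving_swap (μ := volume.restrict (Ioo (-h) h))
      (ν := volume.restrict Msq)).quasiMeasurePreserving
    exact hqmp.ae hae1
  have hae3 := Measure.ae_ae_of_ae_prod hae2
  -- per-slice inequality
  have hcore : ∀ᵐ z ∂(volume.restrict (Ioo (-h) h)),
      (∫ xy in Msq, F4 (xy, z)) ≤ 9 * M ^ 2 * ∫ xy in Msq, F2 (xy, z) := by
    filter_upwards [hae3] with z hz
    have hb : ∀ p ∈ Msq, |(fun w => T w z) p| ≤ M :=
      ae_bound_to_forall (hsm z).continuous hz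
    exact core (hsm z) (fun x y => hperx x y z) (fun x y => hpery x y z) hM0 hb
  -- integrate in z
  have hXeq : X = ∫ z in Ioo (-h) h, ∫ xy in Msq, F4 (xy, z) := by
    rw [hX, ← MeasureTheory.integral_prod F4 hF4int,
      MeasureTheory.integral_prod_symm F4 hF4int]
  have hYeq : Y = ∫ z in Ioo (-h) h, ∫ xy in Msq, F2 (xy, z) := by
    rw [hY, ← MeasureTheory.integral_prod F2 hF2int,
      MeasureTheory.integral_prod_symm F2 hF2int]
  have hA : Integrable (fun z => ∫ xy in Msq, F4 (xy, z))
      (volume.restrict (Ioo (-h) h)) := hF4int.integral_prod_right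
  have hB : Integrable (fun z => ∫ xy in Msq, F2 (xy, z))
      (volume.restrict (Ioo (-h) h)) := hF2int.integral_prod_right
  have hXY : X ≤ 9 * M ^ 2 * Y := by
    rw [hXeq, hYeq, ← MeasureTheory.integral_const_mul]
    exact integral_mono_ae hA (hB.const_mul _) hcore
  have hX0 : 0 ≤ X := by
    rw [hXeq]
    refine integral_nonneg fun z => integral_nonneg fun xy => by positivity
  have hY0 : 0 ≤ Y := by
    rw [hYeq]
    refine integral_nonneg fun z => integral_nonneg fun xy => by positivity
  -- conclude
  have hpow : (X ^ ((1:ℝ)/4)) ^ 2 = Real.sqrt X := by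
    rw [← Real.rpow_natCast (X ^ ((1:ℝ)/4)) 2, ← Real.rpow_mul hX0]
    rw [show ((1:ℝ)/4) * ((2:ℕ):ℝ) = 1/2 by norm_num]
    rw [← Real.sqrt_eq_rpow]
  rw [hpow]
  calc Real.sqrt X ≤ Real.sqrt (9 * M ^ 2 * Y) := Real.sqrt_le_sqrt hXY
    _ = 3 * M * Real.sqrt Y := by
        rw [show 9 * M ^ 2 * Y = (3 * M) ^ 2 * Y by ring,
          Real.sqrt_mul (by positivity), Real.sqrt_sq (by positivity)]
end
end
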